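/- arXiv:1902.05860 — 9 statements merged into one kernel-verified Lean document; each statement's English description precedes it below -/
import Mathlib

section
/- Let G be a connected simple graph on a finite vertex set V with |V| = n, let dist denote graph distance, and let c ∈ V be a vertex with eccentricity at most r (that is, dist(c, v) ≤ r for every v ∈ V). Let p be a probability distribution on V and let (X_t)_{t≥0} be i.i.d. V-valued random variables each with law p. Define the capture time T = min{ t ≥ 1 : t ≥ dist(c, X_0) and X_t = X_0 } (with T = ∞ if no such t exists). Then E[T] ≤ n + r. -/
open MeasureTheory ProbabilityTheory
open scoped ENNReal
open scoped NNReal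

private lemma wmw_le_tsum_lt (x : ℝ≥0∞) :
    x ≤ ∑' k : ℕ, (if (k : ℝ≥0∞) < x then (1:ℝ≥0∞) else 0) := by
  rcases eq_or_ne x ⊤ with rfl | hx
  · have : ∀ k : ℕ, (if (k : ℝ≥0∞) < ⊤ then (1:ℝ≥0∞) else 0) = 1 := by
      intro k; rw [if_pos (ENNReal.natCast_lt_top k)]
    simp only [this]
    rw [ENNReal.tsum_const_eq_top_of_ne_zero one_ne_zero]
  · set y := x.toNNReal with hy
    have hxy : x = (y : ℝ≥0∞) := (ENNReal.coe_toNNReal hx).symm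
    set m := ⌈y⌉₊ with hm
    calc x = (y : ℝ≥0∞) := hxy
      _ ≤ (m : ℝ≥0∞) := by exact_mod_cast ENNReal.coe_le_coe.mpr (Nat.le_ceil y)
      _ = ∑ k ∈ Finset.range m, (1:ℝ≥0∞) := by simp
      _ ≤ ∑ k ∈ Finset.range m, (if (k : ℝ≥0∞) < x then (1:ℝ≥0∞) else 0) := by
          apply Finset.sum_le_sum
          intro k hk
          rw [if_pos]
          have : (k : ℝ≥0) < y := Nat.lt_ceil.mp (Finset.mem_range.mp hk)
          rw [hxy]; exact_mod_cast this
      _ ≤ _ := ENNReal.sum_le_tsum _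

/-- Watch-Move-Wait against the 1-observed gambler on a connected
`n`-vertex graph whose start vertex `c` has eccentricity at most `r`:
the expected capture time is at most `n + r`. -/
theorem wmw1_expected_capture_time_le
    {V : Type*} [Fintype V] [DecidableEq V]
    [MeasurableSpace V] [MeasurableSingletonClass V]
    (G : SimpleGraph V) (hG : G.Connected)
    (n : ℕ) (hn : Fintype.card V = n)
    (c : V) (r : ℕ) (hr : ∀ v : V, G.dist c v ≤ r)
    (p : PMF V)
    {Ω : Type*} [MeasurableSpace Ω] (μ : Measure Ω) [IsProbabilityMeasure μ]
    (X : ℕ → Ω → V)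
    (hmeas : ∀ t, Measurable (X t))
    (hindep : iIndepFun X μ)
    (hlaw : ∀ t, μ.map (X t) = p.toMeasure)
    (T : Ω → ℝ≥0∞)
    (hT : ∀ ω, T ω = sInf {τ : ℝ≥0∞ | ∃ t : ℕ, τ = t ∧ 1 ≤ t ∧
      G.dist c (X 0 ω) ≤ t ∧ X t ω = X 0 ω}) :
    ∫⁻ ω, T ω ∂μ ≤ (n : ℝ≥0∞) + r := by
  classical
  set m : V → ℕ := fun v => max 1 (G.dist c v) with hm
  set E : ℕ → Set Ω :=
    fun k => {ω | ∀ t, 1 ≤ t → t ≤ k → G.dist c (X 0 ω) ≤ t → X t ω ≠ X 0 ω} with hE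
  have hpreM : ∀ (i : ℕ) (B : Set V), MeasurableSet (X i ⁻¹' B) :=
    fun i B => (hmeas i) (B.toFinite.measurableSet)
  have hpre : ∀ (i : ℕ) (B : Set V), μ (X i ⁻¹' B) = p.toMeasure B := by
    intro i B
    rw [← hlaw i, Measure.map_apply (hmeas i) (B.toFinite.measurableSet)]
  have hEmeas : ∀ k, MeasurableSet (E k) := by
    intro k
    have : E k = ⋂ t ∈ Finset.Icc 1 k,
        (fun ω => (X 0 ω, X t ω)) ⁻¹'
          {q : V × V | G.dist c q.1 ≤ t → q.2 ≠ q.1} := by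
      ext ω
      simp only [hE, Set.mem_setOf_eq, Set.mem_iInter, Set.mem_preimage, Finset.mem_Icc]
      constructor
      · rintro h t ⟨h1, h2⟩ hd
        exact h t h1 h2 hd
      · intro h t h1 h2 hd
        exact h t ⟨h1, h2⟩ hd
    rw [this]
    exact Finset.measurableSet_biInter _ fun t _ =>
      (((hmeas 0).prodMk (hmeas t)) (Set.toFinite _).measurableSet)
  -- the capture time exceeds `k` iff `ω ∈ E k`
  have hlt : ∀ (k : ℕ) (ω : Ω), (k : ℝ≥0∞) < T ω ↔ ω ∈ E k := by
    intro k ω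
    rw [hT ω]
    constructor
    · intro h t h1 h2 hd heq
      have ht : (t : ℝ≥0∞) ∈ {τ : ℝ≥0∞ | ∃ t : ℕ, τ = t ∧ 1 ≤ t ∧
          G.dist c (X 0 ω) ≤ t ∧ X t ω = X 0 ω} := ⟨t, rfl, h1, hd, heq⟩
      have := lt_of_lt_of_le h (sInf_le ht)
      exact absurd h2 (not_le.mpr (by exact_mod_cast this))
    · intro hω
      have hle : ((k + 1 : ℕ) : ℝ≥0∞) ≤ sInf {τ : ℝ≥0∞ | ∃ t : ℕ, τ = t ∧ 1 ≤ t ∧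
          G.dist c (X 0 ω) ≤ t ∧ X t ω = X 0 ω} := by
        apply le_sInf
        rintro τ ⟨t, rfl, h1, hd, heq⟩
        have : k + 1 ≤ t := by
          by_contra hc
          exact hω t h1 (by omega) hd heq
        exact_mod_cast this
      calc (k : ℝ≥0∞) < ((k + 1 : ℕ) : ℝ≥0∞) := by exact_mod_cast Nat.lt_succ_self k
        _ ≤ _ := hle
  -- Step 1 : the integral is at most the sum of the measures of the `E k`
  have step1 : ∫⁻ ω, T ω ∂μ ≤ ∑' k : ℕ, μ (E k) := by
    have hb : ∀ ω, T ω ≤ ∑' k : ℕ, (E k).indicator (fun _ => (1:ℝ≥0∞)) ω := by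
      intro ω
      refine le_trans (wmw_le_tsum_lt (T ω)) (le_of_eq (tsum_congr fun k => ?_))
      rw [Set.indicator_apply]
      by_cases h : ω ∈ E k
      · rw [if_pos ((hlt k ω).mpr h), if_pos h]
      · rw [if_neg (fun hc => h ((hlt k ω).mp hc)), if_neg h]
    calc ∫⁻ ω, T ω ∂μ ≤ ∫⁻ ω, ∑' k : ℕ, (E k).indicator (fun _ => (1:ℝ≥0∞)) ω ∂μ :=
          lintegral_mono hb
      _ = ∑' k : ℕ, ∫⁻ ω, (E k).indicator (fun _ => (1:ℝ≥0∞)) ω ∂μ :=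
          lintegral_tsum fun k =>
            ((measurable_const.indicator (hEmeas k))).aemeasurable
      _ = ∑' k : ℕ, μ (E k) := by
          refine tsum_congr fun k => ?_
          rw [lintegral_indicator (hEmeas k)]
          simp
  -- Step 2 : the measure of `E k`
  have hsingle : ∀ v : V, p.toMeasure {v} = p v :=
    fun v => p.toMeasure_apply_singleton v (measurableSet_singleton v)
  have hcompl : ∀ v : V, p.toMeasure {v}ᶜ = 1 - p v := by
    intro v
    rw [measure_compl (measurableSet_singleton v) (measure_ne_top _ _), measure_univ, hsingle]
  have hm1 : ∀ v, 1 ≤ m v := fun v => le_max_left _ _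
  have step2 : ∀ k, μ (E k) =
      ∑ v : V, p v * (1 - p v) ^ (Finset.Icc (m v) k).card := by
    intro k
    have hpart : E k = ⋃ v ∈ (Finset.univ : Finset V), (E k ∩ X 0 ⁻¹' {v}) := by
      ext ω
      simp only [Finset.mem_univ, Set.iUnion_true, Set.mem_iUnion, Set.mem_inter_iff,
        Set.mem_preimage, Set.mem_singleton_iff]
      exact ⟨fun h => ⟨X 0 ω, h, rfl⟩, fun ⟨v, h, _⟩ => h⟩
    rw [hpart, measure_biUnion_finset]
    · refine Finset.sum_congr rfl fun v _ => ?_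
      have h0F : (0 : ℕ) ∉ Finset.Icc (m v) k := by
        simp only [Finset.mem_Icc, not_and]
        intro h; have := hm1 v; omega
      have hkey : E k ∩ X 0 ⁻¹' {v} =
          ⋂ i ∈ insert 0 (Finset.Icc (m v) k),
            X i ⁻¹' (if i = 0 then {v} else ({v}ᶜ : Set V)) := by
        ext ω
        simp only [Set.mem_inter_iff, Set.mem_preimage, Set.mem_singleton_iff,
          Set.mem_iInter, Finset.mem_insert, Finset.mem_Icc, hE, Set.mem_setOf_eq]
        constructor
        · rintro ⟨hEω, h0⟩ i hi
          rcases hi with rfl | ⟨hmi, hik⟩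
          · simpa using h0
          · have hi0 : i ≠ 0 := by have := hm1 v; omega
            rw [if_neg hi0]
            have h1i : 1 ≤ i := le_trans (hm1 v) hmi
            have hdi : G.dist c (X 0 ω) ≤ i := by
              rw [h0]
              exact le_trans (le_trans (le_max_right _ _) hmi) le_rfl
            simpa [h0] using hEω i h1i hik hdi
        · intro h
          have h0 : X 0 ω = v := by simpa using h 0 (Or.inl rfl)
          refine ⟨fun t h1 h2 hd heq => ?_, h0⟩
          have hmt : m v ≤ t := by
            rw [h0] at hd
            simp only [hm, max_le_iff]
            exact ⟨h1, hd⟩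
          have ht0 : t ≠ 0 := by omega
          have := h t (Or.inr ⟨hmt, h2⟩)
          rw [if_neg ht0] at this
          rw [heq, h0] at this
          simp at this
      rw [hkey,
        hindep.measure_inter_preimage_eq_mul (insert 0 (Finset.Icc (m v) k))
          (sets := fun i => if i = 0 then {v} else ({v}ᶜ : Set V))
          (fun i _ => (Set.toFinite _).measurableSet),
        Finset.prod_insert h0F]
      congr 1
      · rw [if_pos rfl, hpre, hsingle]
      · rw [Finset.prod_congr rfl (fun i hi => ?_), Finset.prod_const]
        have hi0 : i ≠ 0 := fun h => h0F (h ▸ hi)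
        rw [if_neg hi0, hpre, hcompl]
    · intro a _ b _ hab
      simp only [Function.onFun]
      refine Set.disjoint_left.mpr fun ω ⟨_, ha⟩ ⟨_, hb⟩ => hab ?_
      simp only [Set.mem_preimage, Set.mem_singleton_iff] at ha hb
      rw [← ha, ← hb]
    · exact fun v _ => (hEmeas k).inter (hpreM 0 {v})
  -- Step 3 : sum over `k` and bound
  have hmr : ∀ v, m v ≤ r + 1 := by
    intro v
    simp only [hm, max_le_iff]
    exact ⟨by omega, le_trans (hr v) (by omega)⟩
  have step3 : ∑' k : ℕ, ∑ v : V, p v * (1 - p v) ^ (Finset.Icc (m v) k).card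
      ≤ (n : ℝ≥0∞) + r := by
    rw [Summable.tsum_finsetSum (fun v _ => ENNReal.summable)]
    have hgeom : ∀ v : V,
        ∑' k : ℕ, (1 - p v) ^ (Finset.Icc (m v) k).card
          = (m v : ℝ≥0∞) + (1 - p v) * (p v)⁻¹ := by
      intro v
      have hcard : ∀ k : ℕ, (Finset.Icc (m v) k).card = k + 1 - m v :=
        fun k => Nat.card_Icc _ _
      simp only [hcard]
      rw [← Summable.sum_add_tsum_nat_add' (f := fun k => (1 - p v) ^ (k + 1 - m v)) (k := m v)
        ENNReal.summable]
      congr 1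
      · have hz : ∀ i ∈ Finset.range (m v), (1 - p v) ^ (i + 1 - m v) = (1:ℝ≥0∞) := by
          intro i hi
          have hlt : i < m v := Finset.mem_range.mp hi
          have hO : i + 1 - m v = 0 := by omega
          rw [hO, pow_zero]
        rw [Finset.sum_congr rfl hz, Finset.sum_const]
        simp
      · have hsh : ∀ i : ℕ, i + m v + 1 - m v = i + 1 := by intro i; omega
        simp only [hsh]
        rw [ENNReal.tsum_geometric_add_one,
          ENNReal.sub_sub_cancel ENNReal.one_ne_top (p.coe_le_one v)]
    calc ∑ v : V, ∑' k : ℕ, p v * (1 - p v) ^ (Finset.Icc (m v) k).card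
        = ∑ v : V, p v * ((m v : ℝ≥0∞) + (1 - p v) * (p v)⁻¹) := by
          refine Finset.sum_congr rfl fun v _ => ?_
          rw [ENNReal.tsum_mul_left, hgeom v]
      _ ≤ ∑ v : V, (p v * r + (if p v = 0 then 0 else 1)) := by
          refine Finset.sum_le_sum fun v _ => ?_
          by_cases hv : p v = 0
          · simp [hv]
          · rw [if_neg hv]
            have hpt : p v ≠ ⊤ := ne_top_of_le_ne_top ENNReal.one_ne_top (p.coe_le_one v)
            have h2 : p v * ((1 - p v) * (p v)⁻¹) = 1 - p v := by
              rw [mul_comm (1 - p v) (p v)⁻¹, ← mul_assoc, ENNReal.mul_inv_cancel hv hpt,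
                one_mul]
            rw [mul_add, h2]
            have hmv : (m v : ℝ≥0∞) ≤ (r : ℝ≥0∞) + 1 := by
              exact_mod_cast hmr v
            calc p v * (m v : ℝ≥0∞) + (1 - p v)
                ≤ p v * ((r : ℝ≥0∞) + 1) + (1 - p v) := by
                  gcongr
              _ = p v * r + (p v + (1 - p v)) := by ring_nf
              _ = p v * r + 1 := by rw [add_tsub_cancel_of_le (p.coe_le_one v)]
      _ = (∑ v : V, p v) * r + ∑ v : V, (if p v = 0 then 0 else 1) := by
          rw [Finset.sum_add_distrib, Finset.sum_mul]
      _ ≤ 1 * r + ∑ v : V, (1 : ℝ≥0∞) := by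
          gcongr with v
          · have := p.tsum_coe
            rw [tsum_fintype] at this
            exact this.le
          · split <;> simp
      _ = (r : ℝ≥0∞) + n := by
          rw [one_mul, Finset.sum_const, Finset.card_univ, hn]
          simp [mul_comm]
      _ = (n : ℝ≥0∞) + r := add_comm _ _
  calc ∫⁻ ω, T ω ∂μ ≤ ∑' k : ℕ, μ (E k) := step1
    _ = ∑' k : ℕ, ∑ v : V, p v * (1 - p v) ^ (Finset.Icc (m v) k).card :=
        tsum_congr step2
    _ ≤ (n : ℝ≥0∞) + r := step3
end

section
/- Let G be a connected simple graph on a finite vertex set V with |V| = n and graph distance dist. There exists a vertex c ∈ V such that for every probability distribution p on V and every i.i.d. sequence (X_t)_{t≥0} with law p, the capture time T = min{ t ≥ 1 : t ≥ dist(c, X_0) and X_t = X_0 } satisfies E[T] ≤ 3n/2. -/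
open MeasureTheory ProbabilityTheory
open scoped ENNReal


private lemma walk_dist_start_le {V : Type*} {G : SimpleGraph V} (hG : G.Connected) :
    ∀ {u v : V} (p : G.Walk u v) (i : ℕ), G.dist u (p.getVert i) ≤ i := by
  intro u v p
  induction p with
  | nil =>
    intro i
    rw [SimpleGraph.Walk.getVert_of_length_le _ (by simp)]
    exact le_trans (le_of_eq SimpleGraph.dist_self) (Nat.zero_le i)
  | @cons a b c h q ih =>
    intro i
    cases i with
    | zero => simp
    | succ i =>
      rw [SimpleGraph.Walk.getVert_cons_succ]
      calc G.dist a (q.getVert i) ≤ G.dist a b + G.dist b (q.getVert i) := hG.dist_triangle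
        _ ≤ 1 + i := by
            have h1 : G.dist a b ≤ 1 := by
              simpa using G.dist_le (SimpleGraph.Walk.cons h SimpleGraph.Walk.nil)
            exact Nat.add_le_add h1 (ih i)
        _ = i + 1 := Nat.add_comm 1 i

private lemma walk_dist_end_le {V : Type*} {G : SimpleGraph V} :
    ∀ {u v : V} (p : G.Walk u v) (i : ℕ), G.dist (p.getVert i) v ≤ p.length - i := by
  intro u v p
  induction p with
  | nil =>
    intro i
    rw [SimpleGraph.Walk.getVert_of_length_le _ (by simp)]
    simp
  | @cons a b c h q ih =>
    intro i
    cases i with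
    | zero =>
      simp only [SimpleGraph.Walk.getVert_zero]
      exact le_trans (G.dist_le (SimpleGraph.Walk.cons h q)) (by omega)
    | succ i =>
      rw [SimpleGraph.Walk.getVert_cons_succ]
      simpa using ih i

private lemma exists_graph_center {V : Type*} [Fintype V] [DecidableEq V]
    (G : SimpleGraph V) (hG : G.Connected) :
    ∃ c : V, ∀ v : V, 2 * G.dist c v ≤ Fintype.card V := by
  haveI : Nonempty V := hG.nonempty
  obtain ⟨c, -, hc⟩ := Finset.exists_min_image Finset.univ
    (fun c => ∑ w, G.dist c w) ⟨Classical.arbitrary V, Finset.mem_univ _⟩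
  refine ⟨c, fun v => ?_⟩
  rcases Nat.eq_zero_or_pos (G.dist c v) with h0 | hpos
  · simp [h0]
  obtain ⟨p, hp⟩ := hG.exists_walk_length_eq_dist c v
  cases p with
  | nil => simp at hp; simp [SimpleGraph.dist_self]
  | @cons _ z _ hadj q =>
    have hql : q.length = G.dist c v - 1 := by
      simp only [SimpleGraph.Walk.length_cons] at hp; omega
    have hdzc : G.dist z c ≤ 1 := by
      simpa using G.dist_le (SimpleGraph.Walk.cons hadj.symm SimpleGraph.Walk.nil)
    have hdcz : G.dist c z ≤ 1 := by
      simpa using G.dist_le (SimpleGraph.Walk.cons hadj SimpleGraph.Walk.nil)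
    have hdzv : G.dist z v = G.dist c v - 1 := by
      have h1 : G.dist z v ≤ G.dist c v - 1 := hql ▸ G.dist_le q
      have h2 : G.dist c v ≤ G.dist c z + G.dist z v := hG.dist_triangle
      omega
    obtain ⟨Q, hQ⟩ := hG.exists_walk_length_eq_dist z v
    rw [hdzv] at hQ
    have hmem : ∀ j, j < G.dist c v →
        G.dist z (Q.getVert j) < G.dist c (Q.getVert j) ∧ G.dist z (Q.getVert j) = j := by
      intro j hj
      have h1 : G.dist z (Q.getVert j) ≤ j := walk_dist_start_le hG Q j
      have h2 : G.dist (Q.getVert j) v ≤ G.dist c v - 1 - j := by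
        have := walk_dist_end_le Q j; omega
      have h3 : G.dist c v ≤ G.dist c (Q.getVert j) + G.dist (Q.getVert j) v :=
        hG.dist_triangle
      have h5 : G.dist c (Q.getVert j) ≤ G.dist c z + G.dist z (Q.getVert j) :=
        hG.dist_triangle
      omega
    have hDcard : G.dist c v ≤ (Finset.univ.filter
        (fun w => G.dist z w < G.dist c w)).card := by
      calc G.dist c v = (Finset.range (G.dist c v)).card := (Finset.card_range _).symm
        _ ≤ _ := by
            apply Finset.card_le_card_of_injOn (fun j => Q.getVert j)
            · intro j hj
              rw [Finset.mem_coe, Finset.mem_range] at hj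
              rw [Finset.mem_coe, Finset.mem_filter]
              exact ⟨Finset.mem_univ _, (hmem j hj).1⟩
            · intro i hi j hj hij
              simp only [Finset.mem_coe, Finset.mem_range] at hi hj
              have h1 := (hmem i hi).2
              have h2 := (hmem j hj).2
              simp only at hij
              rw [hij] at h1
              omega
    have key : (∑ w, G.dist z w) + (Finset.univ.filter
          (fun w => G.dist z w < G.dist c w)).card ≤ (∑ w, G.dist c w) +
        (Finset.univ.filter (fun w => ¬ G.dist z w < G.dist c w)).card := by
      rw [Finset.card_filter, Finset.card_filter, ← Finset.sum_add_distrib,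
        ← Finset.sum_add_distrib]
      apply Finset.sum_le_sum
      intro w _
      by_cases hw : G.dist z w < G.dist c w
      · rw [if_pos hw, if_neg (not_not_intro hw)]
        omega
      · have htri : G.dist z w ≤ G.dist z c + G.dist c w := hG.dist_triangle
        rw [if_neg hw, if_pos hw]
        omega
    have hmin : (∑ w, G.dist c w) ≤ ∑ w, G.dist z w := hc z (Finset.mem_univ _)
    have hcards : (Finset.univ.filter (fun w => G.dist z w < G.dist c w)).card +
        (Finset.univ.filter (fun w => ¬ G.dist z w < G.dist c w)).card = Fintype.card V := by
      rw [Finset.card_filter_add_card_filter_not]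
      exact Finset.card_univ
    omega


open MeasureTheory ProbabilityTheory
open scoped ENNReal

private lemma ennreal_le_tsum_ite (a : ℝ≥0∞) :
    a ≤ ∑' k : ℕ, if (k : ℝ≥0∞) < a then 1 else 0 := by
  rcases eq_or_ne a ⊤ with rfl | ha
  · have h : ∀ k : ℕ, (if (k : ℝ≥0∞) < ⊤ then (1:ℝ≥0∞) else 0) = 1 := fun k =>
      if_pos (ENNReal.natCast_lt_top k)
    rw [tsum_congr h, ENNReal.tsum_const_eq_top_of_ne_zero one_ne_zero]
  · have hex : ∃ N : ℕ, a ≤ N := by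
      obtain ⟨N, hN⟩ := ENNReal.exists_nat_gt ha
      exact ⟨N, hN.le⟩
    classical
    have hNa : a ≤ (Nat.find hex : ℝ≥0∞) := Nat.find_spec hex
    calc a ≤ (Nat.find hex : ℝ≥0∞) := hNa
      _ = ∑ k ∈ Finset.range (Nat.find hex), (if (k : ℝ≥0∞) < a then 1 else 0) := by
          rw [Finset.sum_congr rfl (fun k hk => if_pos (not_le.mp
            (Nat.find_min hex (Finset.mem_range.mp hk))))]
          simp
      _ ≤ _ := ENNReal.sum_le_tsum _


/-- On any connected `n`-vertex graph there is a start vertex `c`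
(a center) such that Watch-Move-Wait against the 1-observed gambler has expected
capture time at most `3n/2`. -/
theorem wmw1_expected_capture_time_le_three_halves
    {V : Type*} [Fintype V] [DecidableEq V]
    [MeasurableSpace V] [MeasurableSingletonClass V]
    (G : SimpleGraph V) (hG : G.Connected)
    (n : ℕ) (hn : Fintype.card V = n) :
    ∃ c : V,
      ∀ (p : PMF V) (Ω : Type) (_ : MeasurableSpace Ω) (μ : Measure Ω)
        (_ : IsProbabilityMeasure μ) (X : ℕ → Ω → V),
        (∀ t, Measurable (X t)) →
        iIndepFun X μ →
        (∀ t, μ.map (X t) = p.toMeasure) →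
        ∀ T : Ω → ℝ≥0∞,
        (∀ ω, T ω = sInf {τ : ℝ≥0∞ | ∃ t : ℕ, τ = t ∧ 1 ≤ t ∧
          G.dist c (X 0 ω) ≤ t ∧ X t ω = X 0 ω}) →
        ∫⁻ ω, T ω ∂μ ≤ 3 * (n : ℝ≥0∞) / 2 := by
  obtain ⟨c, hc⟩ := exists_graph_center G hG
  refine ⟨c, ?_⟩
  intro p Ω mΩ μ hμ X hX hind hmap T hT
  classical
  have hq1 : ∀ v : V, p v ≤ 1 := fun v => p.coe_le_one v
  have hqX : ∀ (t : ℕ) (v : V), μ (X t ⁻¹' {v}) = p v := by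
    intro t v
    rw [← Measure.map_apply (hX t) (measurableSet_singleton v), hmap t,
      PMF.toMeasure_apply_singleton _ _ (measurableSet_singleton v)]
  have hqXc : ∀ (t : ℕ) (v : V), μ (X t ⁻¹' ({v}ᶜ)) = 1 - p v := by
    intro t v
    rw [Set.preimage_compl, prob_compl_eq_one_sub ((hX t) (measurableSet_singleton v)),
      hqX t v]
  set m : V → ℕ := fun v => max 1 (G.dist c v) with hm
  set A : ℕ → Set Ω := fun k => {ω | ∀ t, 1 ≤ t → t ≤ k →
    G.dist c (X 0 ω) ≤ t → X t ω ≠ X 0 ω} with hA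
  -- T exceeds k exactly on A k
  have hTk : ∀ (k : ℕ) (ω : Ω), ((k : ℝ≥0∞) < T ω ↔ ω ∈ A k) := by
    intro k ω
    rw [hT ω]
    constructor
    · intro h t h1 h2 hdist heq
      have hmem : ((t : ℕ) : ℝ≥0∞) ∈ {τ : ℝ≥0∞ | ∃ t : ℕ, τ = t ∧ 1 ≤ t ∧
          G.dist c (X 0 ω) ≤ t ∧ X t ω = X 0 ω} := ⟨t, rfl, h1, hdist, heq⟩
      have hlt := lt_of_lt_of_le h (sInf_le hmem)
      rw [Nat.cast_lt] at hlt
      omega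
    · intro h
      have hk1 : ((k : ℝ≥0∞)) < ((k+1 : ℕ) : ℝ≥0∞) := by
        exact_mod_cast Nat.lt_succ_self k
      refine lt_of_lt_of_le hk1 (le_sInf ?_)
      rintro τ ⟨t, rfl, h1, hdist, heq⟩
      have htk : k < t := by
        by_contra hle
        exact h t h1 (by omega) hdist heq
      exact_mod_cast htk
  have hAmeas : ∀ k, MeasurableSet (A k) := by
    intro k
    have hrepr : A k = ⋂ t ∈ Finset.Icc 1 k,
        ((X 0 ⁻¹' {v : V | G.dist c v ≤ t}) ∩ {ω | X t ω = X 0 ω})ᶜ := by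
      ext ω
      simp only [hA, Set.mem_setOf_eq, Set.mem_iInter, Finset.mem_Icc, Set.mem_compl_iff,
        Set.mem_inter_iff, Set.mem_preimage, not_and]
      constructor
      · rintro h t ⟨h1, h2⟩ hd
        exact h t h1 h2 hd
      · intro h t h1 h2 hd
        exact h t ⟨h1, h2⟩ hd
    rw [hrepr]
    apply Finset.measurableSet_biInter
    intro t _
    apply MeasurableSet.compl
    apply MeasurableSet.inter
    · exact hX 0 (Set.Finite.measurableSet (Set.toFinite _))
    · have heq : {ω | X t ω = X 0 ω} = ⋃ v : V, (X t ⁻¹' {v} ∩ X 0 ⁻¹' {v}) := by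
        ext ω
        simp only [Set.mem_setOf_eq, Set.mem_iUnion, Set.mem_inter_iff, Set.mem_preimage,
          Set.mem_singleton_iff]
        exact ⟨fun h => ⟨X 0 ω, h, rfl⟩, fun ⟨v, h1, h2⟩ => h1.trans h2.symm⟩
      rw [heq]
      exact MeasurableSet.iUnion fun v =>
        ((hX t (measurableSet_singleton v)).inter (hX 0 (measurableSet_singleton v)))
  -- per-vertex bound
  have hbound : ∀ (k : ℕ) (v : V),
      μ (A k ∩ X 0 ⁻¹' {v}) ≤ p v * (1 - p v) ^ (k + 1 - m v) := by
    intro k v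
    have hm1 : 1 ≤ m v := le_max_left 1 _
    have hmd : G.dist c v ≤ m v := le_max_right 1 _
    set F : ℕ → Set Ω := fun t => X t ⁻¹' (if t = 0 then {v} else {v}ᶜ) with hF
    have hsub : A k ∩ X 0 ⁻¹' {v} ⊆ ⋂ t ∈ insert 0 (Finset.Icc (m v) k), F t := by
      rintro ω ⟨hωA, hω0⟩
      rw [Set.mem_preimage, Set.mem_singleton_iff] at hω0
      simp only [Set.mem_iInter]
      intro t ht
      rw [Finset.mem_insert, Finset.mem_Icc] at ht
      rcases ht with rfl | ⟨hmt, htk⟩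
      · simp only [hF, if_pos rfl, Set.mem_preimage, Set.mem_singleton_iff]
        exact hω0
      · have ht0 : t ≠ 0 := by omega
        simp only [hF, if_neg ht0, Set.mem_preimage, Set.mem_compl_iff,
          Set.mem_singleton_iff]
        intro heq
        exact hωA t (by omega) htk (by rw [hω0]; omega) (heq.trans hω0.symm)
    have h0S : (0 : ℕ) ∉ Finset.Icc (m v) k := by
      rw [Finset.mem_Icc]; omega
    have hprod : μ (⋂ t ∈ insert 0 (Finset.Icc (m v) k), F t)
        = ∏ t ∈ insert 0 (Finset.Icc (m v) k), μ (F t) := by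
      apply hind.meas_biInter
      intro t _
      exact ⟨(if t = 0 then {v} else {v}ᶜ), (Set.toFinite _).measurableSet, rfl⟩
    have hFt : ∀ t ∈ Finset.Icc (m v) k, μ (F t) = 1 - p v := by
      intro t ht
      rw [Finset.mem_Icc] at ht
      have ht0 : t ≠ 0 := by omega
      simp only [hF, if_neg ht0]
      exact hqXc t v
    calc μ (A k ∩ X 0 ⁻¹' {v}) ≤ μ (⋂ t ∈ insert 0 (Finset.Icc (m v) k), F t) :=
          measure_mono hsub
      _ = ∏ t ∈ insert 0 (Finset.Icc (m v) k), μ (F t) := hprod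
      _ = μ (F 0) * ∏ t ∈ Finset.Icc (m v) k, μ (F t) := Finset.prod_insert h0S
      _ = p v * (1 - p v) ^ (k + 1 - m v) := by
          rw [Finset.prod_congr rfl hFt, Finset.prod_const, Nat.card_Icc]
          congr 1
          simp only [hF, if_pos rfl]
          exact hqX 0 v
  -- integral bounded by tail sums
  have hstep : ∫⁻ ω, T ω ∂μ ≤ ∑' k : ℕ, μ (A k) := by
    calc ∫⁻ ω, T ω ∂μ
        ≤ ∫⁻ ω, ∑' k : ℕ, (A k).indicator (fun _ => (1:ℝ≥0∞)) ω ∂μ := by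
          apply lintegral_mono
          intro ω
          refine le_trans (ennreal_le_tsum_ite (T ω)) (le_of_eq (tsum_congr fun k => ?_))
          by_cases h : (k:ℝ≥0∞) < T ω
          · rw [if_pos h, Set.indicator_of_mem ((hTk k ω).mp h)]
          · rw [if_neg h, Set.indicator_of_notMem (fun hmem => h ((hTk k ω).mpr hmem))]
      _ = ∑' k : ℕ, ∫⁻ ω, (A k).indicator (fun _ => (1:ℝ≥0∞)) ω ∂μ :=
          lintegral_tsum fun k => (measurable_const.indicator (hAmeas k)).aemeasurable
      _ = ∑' k : ℕ, μ (A k) := by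
          refine tsum_congr fun k => ?_
          rw [lintegral_indicator (hAmeas k), setLIntegral_one]
  have hAle : ∀ k, μ (A k) ≤ ∑ v : V, p v * (1 - p v) ^ (k + 1 - m v) := by
    intro k
    have hcover : A k ⊆ ⋃ v : V, (A k ∩ X 0 ⁻¹' {v}) := fun ω hω =>
      Set.mem_iUnion.mpr ⟨X 0 ω, hω, rfl⟩
    calc μ (A k) ≤ ∑' v : V, μ (A k ∩ X 0 ⁻¹' {v}) :=
          le_trans (measure_mono hcover) (measure_iUnion_le _)
      _ = ∑ v : V, μ (A k ∩ X 0 ⁻¹' {v}) := tsum_fintype _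
      _ ≤ ∑ v : V, p v * (1 - p v) ^ (k + 1 - m v) :=
          Finset.sum_le_sum fun v _ => hbound k v
  have hswap : (∑' k : ℕ, ∑ v : V, p v * (1 - p v) ^ (k + 1 - m v))
      = ∑ v : V, ∑' k : ℕ, p v * (1 - p v) ^ (k + 1 - m v) :=
    Summable.tsum_finsetSum fun v _ => ENNReal.summable
  -- per-vertex series
  have hvsum : ∀ v : V, (∑' k : ℕ, p v * (1 - p v) ^ (k + 1 - m v))
      ≤ p v * (m v : ℝ≥0∞) + (1 - p v) := by
    intro v
    have hm1 : 1 ≤ m v := le_max_left 1 _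
    rw [ENNReal.tsum_mul_left]
    have hsplit : (∑' k : ℕ, (1 - p v) ^ (k + 1 - m v)) =
        (∑ i ∈ Finset.range (m v), (1 - p v) ^ (i + 1 - m v)) +
        ∑' j : ℕ, (1 - p v) ^ (j + m v + 1 - m v) :=
      (Summable.sum_add_tsum_nat_add' ENNReal.summable).symm
    have hone : ∀ i ∈ Finset.range (m v), (1 - p v) ^ (i + 1 - m v) = (1:ℝ≥0∞) := by
      intro i hi
      rw [Finset.mem_range] at hi
      rw [show i + 1 - m v = 0 by omega, pow_zero]
    have hrange : (∑ i ∈ Finset.range (m v), (1 - p v) ^ (i + 1 - m v))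
        = (m v : ℝ≥0∞) := by
      rw [Finset.sum_congr rfl hone, Finset.sum_const, Finset.card_range]
      simp
    have htail : (∑' j : ℕ, (1 - p v) ^ (j + m v + 1 - m v))
        = (p v)⁻¹ * (1 - p v) := by
      have hexp : ∀ j : ℕ, j + m v + 1 - m v = j + 1 := by omega
      calc (∑' j : ℕ, (1 - p v) ^ (j + m v + 1 - m v))
          = ∑' j : ℕ, (1 - p v) ^ j * (1 - p v) := by
            refine tsum_congr fun j => ?_
            rw [hexp j, pow_succ]
        _ = (∑' j : ℕ, (1 - p v) ^ j) * (1 - p v) := ENNReal.tsum_mul_right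
        _ = (1 - (1 - p v))⁻¹ * (1 - p v) := by rw [ENNReal.tsum_geometric]
        _ = (p v)⁻¹ * (1 - p v) := by rw [ENNReal.sub_sub_cancel ENNReal.one_ne_top (hq1 v)]
    rw [hsplit, hrange, htail, mul_add]
    refine add_le_add_right ?_ _
    calc p v * ((p v)⁻¹ * (1 - p v)) = (p v * (p v)⁻¹) * (1 - p v) := by ring
      _ ≤ 1 * (1 - p v) := mul_le_mul_left (ENNReal.mul_inv_le_one _) _
      _ = 1 - p v := one_mul _
  -- final arithmetic
  have hpsum : (∑ v : V, (p v : ℝ≥0∞)) = 1 := by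
    have h := p.tsum_coe
    rwa [tsum_fintype] at h
  set x : ℝ≥0∞ := ∑ v : V, (1 - p v) with hx
  have hxn : x + 1 = (n : ℝ≥0∞) := by
    have hsum : x + ∑ v : V, p v = ∑ v : V, ((1 - p v) + p v) :=
      (Finset.sum_add_distrib).symm
    rw [hpsum] at hsum
    rw [hsum, Finset.sum_congr rfl (fun v _ => tsub_add_cancel_of_le (hq1 v)),
      Finset.sum_const, Finset.card_univ, hn]
    simp
  have hmv : ∀ v : V, (m v : ℝ≥0∞) ≤ ((n : ℝ≥0∞) + 2) / 2 := by
    intro v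
    rw [ENNReal.le_div_iff_mul_le (Or.inl two_ne_zero) (Or.inl ENNReal.ofNat_ne_top)]
    have h2m : (m v) * 2 ≤ n + 2 := by
      have hcv := hc v
      rw [hn] at hcv
      simp only [hm]
      omega
    exact_mod_cast h2m
  calc ∫⁻ ω, T ω ∂μ ≤ ∑' k : ℕ, μ (A k) := hstep
    _ ≤ ∑' k : ℕ, ∑ v : V, p v * (1 - p v) ^ (k + 1 - m v) := ENNReal.tsum_le_tsum hAle
    _ = ∑ v : V, ∑' k : ℕ, p v * (1 - p v) ^ (k + 1 - m v) := hswap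
    _ ≤ ∑ v : V, (p v * (m v : ℝ≥0∞) + (1 - p v)) :=
        Finset.sum_le_sum fun v _ => hvsum v
    _ = (∑ v : V, p v * (m v : ℝ≥0∞)) + x := Finset.sum_add_distrib
    _ ≤ ((n : ℝ≥0∞) + 2) / 2 + x := by
        have hsum : (∑ v : V, p v * (m v : ℝ≥0∞))
            ≤ ∑ v : V, p v * (((n : ℝ≥0∞) + 2) / 2) :=
          Finset.sum_le_sum fun v _ => mul_le_mul_right (hmv v) _
        rw [← Finset.sum_mul, hpsum, one_mul] at hsum
        exact add_le_add_left hsum x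
    _ ≤ 3 * (n : ℝ≥0∞) / 2 := by
        have hx2 : x = x * 2 / 2 := by
          rw [mul_div_assoc, ENNReal.div_self two_ne_zero ENNReal.ofNat_ne_top, mul_one]
        rw [hx2, ENNReal.div_add_div_same]
        apply ENNReal.div_le_div_right
        rw [← hxn]
        exact le_of_eq (by ring)
end

section
/- Let n ≥ 2 and let G be the star on n vertices: a simple graph on vertex set V with a center u adjacent to each of the other n − 1 vertices and no other edges; let dist denote graph distance. For every probability distribution p on V and every i.i.d. sequence (X_t)_{t≥0} with law p, the capture time T = min{ t ≥ 1 : t ≥ dist(u, X_0) and X_t = X_0 } satisfies E[T] ≤ n + 1. -/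
open MeasureTheory ProbabilityTheory
open scoped ENNReal

/-- Watch-Move-Wait against the 1-observed gambler on the
`n`-vertex star (center `u`) has expected capture time at most `n + 1`. -/
theorem wmw1_star_expected_capture_time_le
    {V : Type*} [Fintype V] [DecidableEq V]
    [MeasurableSpace V] [MeasurableSingletonClass V]
    (n : ℕ) (hn2 : 2 ≤ n)
    (G : SimpleGraph V) (hn : Fintype.card V = n)
    (u : V) (hstar : ∀ a b : V, G.Adj a b ↔ ((a = u ∧ b ≠ u) ∨ (b = u ∧ a ≠ u)))
    (p : PMF V)
    {Ω : Type*} [MeasurableSpace Ω] (μ : Measure Ω) [IsProbabilityMeasure μ]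
    (X : ℕ → Ω → V)
    (hmeas : ∀ t, Measurable (X t))
    (hindep : iIndepFun X μ)
    (hlaw : ∀ t, μ.map (X t) = p.toMeasure)
    (T : Ω → ℝ≥0∞)
    (hT : ∀ ω, T ω = sInf {τ : ℝ≥0∞ | ∃ t : ℕ, τ = t ∧ 1 ≤ t ∧
      G.dist u (X 0 ω) ≤ t ∧ X t ω = X 0 ω}) :
    ∫⁻ ω, T ω ∂μ ≤ (n : ℝ≥0∞) + 1 := by
  classical
  -- the star has radius 1
  have hdist : ∀ v : V, G.dist u v ≤ 1 := by
    intro v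
    by_cases hv : v = u
    · subst hv; simp [SimpleGraph.dist_self]
    · have hadj : G.Adj u v := (hstar u v).2 (Or.inl ⟨rfl, hv⟩)
      have := SimpleGraph.dist_le (SimpleGraph.Walk.cons hadj SimpleGraph.Walk.nil)
      simpa using this
  -- the "no capture up to time k" events
  set A : ℕ → Set Ω := fun k => ⋂ t ∈ Finset.Icc 1 k, {ω | X t ω ≠ X 0 ω} with hA
  have hmeasEq : ∀ t : ℕ, MeasurableSet {ω | X t ω ≠ X 0 ω} := by
    intro t
    have : {ω | X t ω ≠ X 0 ω} = (⋃ v : V, X t ⁻¹' {v} ∩ X 0 ⁻¹' {v})ᶜ := by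
      ext ω; simp [eq_comm]
    rw [this]
    exact (MeasurableSet.iUnion fun v =>
      ((hmeas t (measurableSet_singleton v)).inter
        (hmeas 0 (measurableSet_singleton v)))).compl
  have hAmeas : ∀ k, MeasurableSet (A k) := fun k =>
    Finset.measurableSet_biInter _ fun t _ => hmeasEq t
  -- pointwise bound on T by a sum of indicators
  have hTle : ∀ ω, T ω ≤ ∑' k : ℕ, (A k).indicator (1 : Ω → ℝ≥0∞) ω := by
    intro ω
    by_cases hex : ∃ k, ω ∉ A k
    · set m := Nat.find hex with hm
      have hmem : ω ∉ A m := Nat.find_spec hex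
      have hlt : ∀ k < m, ω ∈ A k := by
        intro k hk
        by_contra h
        exact absurd (Nat.find_le h) (not_le.2 hk)
      -- from ω ∉ A m, get t ∈ [1, m] with X t ω = X 0 ω
      have : ∃ t, 1 ≤ t ∧ t ≤ m ∧ X t ω = X 0 ω := by
        by_contra h
        push_neg at h
        exact hmem (by
          simp only [hA, Set.mem_iInter, Finset.mem_Icc]
          rintro t ⟨ht1, htm⟩
          exact h t ht1 htm)
      obtain ⟨t, ht1, htm, heq⟩ := this
      have hTt : T ω ≤ (t : ℝ≥0∞) := by
        rw [hT ω]
        exact sInf_le ⟨t, rfl, ht1, le_trans (hdist _) ht1, heq⟩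
      have hsum : (m : ℝ≥0∞) ≤ ∑' k : ℕ, (A k).indicator (1 : Ω → ℝ≥0∞) ω := by
        calc (m : ℝ≥0∞) = ∑ k ∈ Finset.range m, (A k).indicator (1 : Ω → ℝ≥0∞) ω := by
              rw [Finset.sum_congr rfl fun k hk =>
                Set.indicator_of_mem (hlt k (Finset.mem_range.1 hk)) 1]
              simp
          _ ≤ _ := ENNReal.sum_le_tsum _
      exact le_trans hTt (le_trans (Nat.cast_le.2 htm) hsum)
    · push_neg at hex
      have : ∀ N : ℕ, (N : ℝ≥0∞) ≤ ∑' k : ℕ, (A k).indicator (1 : Ω → ℝ≥0∞) ω := by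
        intro N
        calc (N : ℝ≥0∞) = ∑ k ∈ Finset.range N, (A k).indicator (1 : Ω → ℝ≥0∞) ω := by
              rw [Finset.sum_congr rfl fun k _ => Set.indicator_of_mem (hex k) 1]
              simp
          _ ≤ _ := ENNReal.sum_le_tsum _
      have htop : (∑' k : ℕ, (A k).indicator (1 : Ω → ℝ≥0∞) ω) = ⊤ := by
        by_contra h
        obtain ⟨N, hN⟩ := ENNReal.exists_nat_gt h
        exact absurd (this N) (not_le.2 hN)
      rw [htop]; exact le_top
  -- integral bound
  have hint : ∫⁻ ω, T ω ∂μ ≤ ∑' k : ℕ, μ (A k) := by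
    calc ∫⁻ ω, T ω ∂μ ≤ ∫⁻ ω, ∑' k : ℕ, (A k).indicator (1 : Ω → ℝ≥0∞) ω ∂μ := lintegral_mono hTle
      _ = ∑' k : ℕ, ∫⁻ ω, (A k).indicator (1 : Ω → ℝ≥0∞) ω ∂μ :=
          lintegral_tsum fun k => ((measurable_one.indicator (hAmeas k)).aemeasurable)
      _ = ∑' k : ℕ, μ (A k) := by
          refine tsum_congr fun k => ?_
          rw [lintegral_indicator_one (hAmeas k)]
  -- compute μ (A k)
  have hXlaw : ∀ i (S : Set V), MeasurableSet S → μ (X i ⁻¹' S) = p.toMeasure S := by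
    intro i S hS
    rw [← hlaw i, Measure.map_apply (hmeas i) hS]
  have hAk : ∀ k, μ (A k) = ∑ v : V, p v * (1 - p v) ^ k := by
    intro k
    -- decompose according to the value of X 0
    have hdecomp : A k = ⋃ v : V, (X 0 ⁻¹' {v} ∩ A k) := by
      ext ω; simp
    have hdisj : Pairwise (Function.onFun Disjoint fun v : V => X 0 ⁻¹' {v} ∩ A k) := by
      intro a b hab
      refine Set.disjoint_left.2 fun ω ⟨ha, _⟩ ⟨hb, _⟩ => hab ?_
      simp only [Set.mem_preimage, Set.mem_singleton_iff] at ha hb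
      rw [← ha, ← hb]
    have hpiece : ∀ v : V, μ (X 0 ⁻¹' {v} ∩ A k) = p v * (1 - p v) ^ k := by
      intro v
      set S : ℕ → Set V := fun i => if i = 0 then {v} else {v}ᶜ with hS
      have hSmeas : ∀ i, MeasurableSet (S i) := by
        intro i
        by_cases hi : i = 0 <;> simp [hS, hi, (measurableSet_singleton v).compl]
      have hEq : X 0 ⁻¹' {v} ∩ A k = ⋂ i ∈ Finset.range (k + 1), X i ⁻¹' (S i) := by
        ext ω
        simp only [hA, hS, Set.mem_inter_iff, Set.mem_preimage, Set.mem_singleton_iff,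
          Set.mem_iInter, Finset.mem_Icc, Finset.mem_range, Set.mem_setOf_eq]
        constructor
        · rintro ⟨h0, h1⟩ i hi
          by_cases hi0 : i = 0
          · simp [hi0, h0]
          · rw [if_neg hi0]
            intro hXi
            rw [Set.mem_singleton_iff] at hXi
            exact h1 i ⟨Nat.one_le_iff_ne_zero.2 hi0, by omega⟩ (by rw [hXi, h0])
        · intro h
          have h0 : X 0 ω = v := by simpa using h 0 (by omega)
          refine ⟨h0, fun t ⟨ht1, htk⟩ hXt => ?_⟩
          have := h t (by omega)
          have ht0 : t ≠ 0 := by omega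
          rw [if_neg ht0] at this
          exact this (by rw [Set.mem_singleton_iff, hXt, h0])
      rw [hEq, hindep.meas_biInter (fun i _ => ⟨S i, hSmeas i, rfl⟩)]
      have hfac : ∀ i, μ (X i ⁻¹' S i) = if i = 0 then p v else 1 - p v := by
        intro i
        by_cases hi : i = 0
        · have hSi : S i = {v} := by simp [hS, hi]
          rw [if_pos hi, hSi, hXlaw i _ (measurableSet_singleton v),
            p.toMeasure_apply_singleton v (measurableSet_singleton v)]
        · have hSi : S i = {v}ᶜ := by simp [hS, hi]
          rw [if_neg hi, hSi, hXlaw i _ (measurableSet_singleton v).compl,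
            measure_compl (measurableSet_singleton v) (measure_ne_top _ _),
            measure_univ, p.toMeasure_apply_singleton v (measurableSet_singleton v)]
      rw [Finset.prod_congr rfl fun i _ => hfac i]
      rw [Finset.prod_range_succ']
      simp [Finset.prod_const, mul_comm]
    calc μ (A k) = μ (⋃ v : V, (X 0 ⁻¹' {v} ∩ A k)) := by rw [← hdecomp]
      _ = ∑' v : V, μ (X 0 ⁻¹' {v} ∩ A k) :=
          measure_iUnion hdisj fun v => (hmeas 0 (measurableSet_singleton v)).inter (hAmeas k)
      _ = ∑ v : V, μ (X 0 ⁻¹' {v} ∩ A k) := tsum_fintype _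
      _ = ∑ v : V, p v * (1 - p v) ^ k := Finset.sum_congr rfl fun v _ => hpiece v
  -- sum the geometric series
  have hfinal : (∑' k : ℕ, μ (A k)) ≤ (n : ℝ≥0∞) := by
    calc (∑' k : ℕ, μ (A k)) = ∑' k : ℕ, ∑ v : V, p v * (1 - p v) ^ k := by
          exact tsum_congr fun k => hAk k
      _ = ∑ v : V, ∑' k : ℕ, p v * (1 - p v) ^ k :=
          Summable.tsum_finsetSum fun v _ => ENNReal.summable
      _ ≤ ∑ v : V, 1 := by
          refine Finset.sum_le_sum fun v _ => ?_
          rw [ENNReal.tsum_mul_left, ENNReal.tsum_geometric,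
            ENNReal.sub_sub_cancel ENNReal.one_ne_top (p.coe_le_one v)]
          by_cases hv : p v = 0
          · simp [hv]
          · rw [ENNReal.mul_inv_cancel hv (p.apply_ne_top v)]
      _ = (n : ℝ≥0∞) := by simp [hn]
  calc ∫⁻ ω, T ω ∂μ ≤ ∑' k : ℕ, μ (A k) := hint
    _ ≤ (n : ℝ≥0∞) := hfinal
    _ ≤ (n : ℝ≥0∞) + 1 := le_self_add
end

section
/- Let T be a tree (a connected acyclic simple graph) on a finite vertex set V with |V| = n, and let x be an integer with 2 ≤ x < n. Then there exist a subset S ⊆ V and a vertex v ∈ S such that x < |S| ≤ 2x − 1, the subgraph of T induced on S is connected, and the subgraph of T induced on (V ∖ S) ∪ {v} is connected. -/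
open SimpleGraph Walk

section aux
variable {V : Type*} {T : SimpleGraph V} [DecidableEq V]
variable (P : ∀ u v : V, T.Walk u v)
variable (hP : ∀ u v, (P u v).IsPath)
variable (hU : ∀ u v (q : T.Walk u v), q.IsPath → q = P u v)

include hP hU in
lemma path_split {u v w : V} (h : w ∈ (P u v).support) :
    P u v = (P u w).append (P w v) := by
  have hs := (P u v).take_spec h
  have h1 : ((P u v).takeUntil w h) = P u w := hU _ _ _ ((hP u v).takeUntil h)
  have h2 : ((P u v).dropUntil w h) = P w v := hU _ _ _ ((hP u v).dropUntil h)
  rw [h1, h2] at hs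
  exact hs.symm

include hP hU in
lemma path_trans {r u w z : V} (hw : w ∈ (P u r).support) (hz : z ∈ (P w r).support) :
    z ∈ (P u r).support := by
  rw [path_split P hP hU hw]
  exact Walk.subset_support_append_right _ _ hz

include hP hU in
lemma path_take {r u v w : V} (hv : v ∈ (P u r).support) (hw : w ∈ (P u v).support) :
    v ∈ (P w r).support := by
  have h1 : P u r = (P u v).append (P v r) := path_split P hP hU hv
  have h2 : P u v = (P u w).append (P w v) := path_split P hP hU hw
  have h3 : P u r = (P u w).append ((P w v).append (P v r)) := by
    rw [h1, h2, Walk.append_assoc]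
  have hpath : ((P w v).append (P v r)).IsPath := by
    have := hP u r
    rw [h3] at this
    exact this.of_append_right
  have h4 : (P w v).append (P v r) = P w r := hU _ _ _ hpath
  rw [← h4]
  exact Walk.subset_support_append_left _ _ (Walk.end_mem_support _)

end aux

lemma greedy_select {α : Type*} [DecidableEq α] (x : ℕ) (hx : 2 ≤ x) (f : α → ℕ) :
    ∀ (s : Finset α), (∀ a ∈ s, f a ≤ x) → x ≤ ∑ a ∈ s, f a →
    ∃ t ⊆ s, x ≤ ∑ a ∈ t, f a ∧ ∑ a ∈ t, f a ≤ 2 * x - 2 := by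
  intro s
  induction s using Finset.induction_on with
  | empty => intro _ h; simp at h; omega
  | insert a s' ha ih =>
    intro hle hsum
    by_cases hs' : x ≤ ∑ b ∈ s', f b
    · obtain ⟨t, hts, h1, h2⟩ := ih (fun b hb => hle b (Finset.mem_insert_of_mem hb)) hs'
      exact ⟨t, hts.trans (Finset.subset_insert _ _), h1, h2⟩
    · by_cases hfa : f a = x
      · refine ⟨{a}, ?_, ?_, ?_⟩
        · simp [Finset.singleton_subset_iff]
        · simp [hfa]
        · simp [hfa]; omega
      · have hfa' : f a ≤ x := hle a (Finset.mem_insert_self _ _)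
        refine ⟨insert a s', le_refl _, hsum, ?_⟩
        rw [Finset.sum_insert ha] at hsum ⊢
        omega

lemma reach_of_walk {V : Type*} {T : SimpleGraph V} (A : Set V) {a b : V}
    (p : T.Walk a b) (hsup : ∀ w ∈ p.support, w ∈ A) (ha : a ∈ A) (hb : b ∈ A) :
    (T.induce A).Reachable ⟨a, ha⟩ ⟨b, hb⟩ := by
  induction p with
  | nil => rfl
  | @cons u w c hadj q ih =>
    have hw : w ∈ A := hsup w (by simp)
    have h1 : (T.induce A).Adj ⟨u, ha⟩ ⟨w, hw⟩ := hadj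
    exact (h1.reachable).trans (ih (fun z hz => hsup z (by simp [hz])) hw hb)

open scoped ENNReal

/-- In any tree on `n` vertices, for `2 ≤ x < n` there is a connected
induced subtree `S` with `x < |S| ≤ 2x − 1` and a vertex `v ∈ S` such that the
subgraph induced on `(V ∖ S) ∪ {v}` is also connected. -/
theorem tree_limb_splitting
    {V : Type*} [Fintype V] [DecidableEq V]
    (T : SimpleGraph V) (hT : T.IsTree)
    (n : ℕ) (hn : Fintype.card V = n)
    (x : ℕ) (hx2 : 2 ≤ x) (hxn : x < n) :
    ∃ (S : Finset V) (v : V), v ∈ S ∧ x < S.card ∧ S.card ≤ 2 * x - 1 ∧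
      (T.induce (S : Set V)).Connected ∧
      (T.induce ((↑S : Set V)ᶜ ∪ {v})).Connected := by
  classical
  have hVne : Nonempty V := by
    rw [← Fintype.card_pos_iff]; omega
  obtain ⟨r⟩ := hVne
  -- the unique path function
  have hEU := hT.existsUnique_path
  set P : ∀ u v : V, T.Walk u v := fun u v => (hEU u v).choose with hPdef
  have hP : ∀ u v, (P u v).IsPath := fun u v => (hEU u v).choose_spec.1
  have hU : ∀ u v (q : T.Walk u v), q.IsPath → q = P u v :=
    fun u v q hq => (hEU u v).choose_spec.2 q hq
  -- descendants
  set D : V → Finset V := fun v => Finset.univ.filter (fun u => v ∈ (P u r).support)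
    with hDdef
  have memD : ∀ u v : V, u ∈ D v ↔ v ∈ (P u r).support := by
    intro u v; simp [hDdef]
  have self_memD : ∀ v, v ∈ D v := by
    intro v; rw [memD]; exact Walk.start_mem_support _
  have D_r : D r = Finset.univ := by
    ext u; simp [hDdef, Walk.end_mem_support]
  -- children
  set ch : V → Finset V := fun v => Finset.univ.filter
    (fun c => c ≠ v ∧ T.Adj c v ∧ c ∈ D v) with hchdef
  have mem_ch : ∀ c v : V, c ∈ ch v ↔ c ≠ v ∧ T.Adj c v ∧ c ∈ D v := by
    intro c v; simp [hchdef]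
  -- structure of path from a child
  have child_cons : ∀ v c : V, c ∈ ch v →
      v ∈ (P c r).support ∧ c ∉ (P v r).support := by
    intro v c hc
    rw [mem_ch] at hc
    obtain ⟨hne, hadj, hcD⟩ := hc
    have hv : v ∈ (P c r).support := (memD c v).1 hcD
    refine ⟨hv, ?_⟩
    have hsplit : P c r = (P c v).append (P v r) := path_split P hP hU hv
    have hcv : Walk.cons hadj Walk.nil = P c v := by
      apply hU
      rw [Walk.cons_isPath_iff]
      exact ⟨Walk.IsPath.nil, by simp [hne]⟩
    have h2 : P c r = Walk.cons hadj (P v r) := by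
      rw [hsplit, ← hcv]; rfl
    have := hP c r
    rw [h2, Walk.cons_isPath_iff] at this
    exact this.2
  -- v is not a descendant of any of its children
  have v_not_D : ∀ v c : V, c ∈ ch v → v ∉ D c := by
    intro v c hc hvD
    exact (child_cons v c hc).2 ((memD v c).1 hvD)
  -- descendants of children are contained in descendants
  have D_sub : ∀ v c : V, c ∈ ch v → D c ⊆ D v := by
    intro v c hc u hu
    rw [memD] at hu ⊢
    exact path_trans P hP hU hu (child_cons v c hc).1
  -- disjointness
  have D_disj : ∀ v : V, ∀ c ∈ ch v, ∀ c' ∈ ch v, c ≠ c' →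
      Disjoint (D c) (D c') := by
    intro v c hc c' hc' hne
    rw [Finset.disjoint_left]
    intro u huc huc'
    rw [memD] at huc huc'
    have hsplit : P u r = (P u c).append (P c r) := path_split P hP hU huc
    have hmem : c' ∈ ((P u c).append (P c r)).support := by rw [← hsplit]; exact huc'
    rw [Walk.mem_support_append_iff] at hmem
    have hcsupp : (P c r) = Walk.cons ((mem_ch c v).1 hc).2.1 (P v r) := by
      have hv := (child_cons v c hc).1
      have hsplit2 : P c r = (P c v).append (P v r) := path_split P hP hU hv
      have hcv : Walk.cons ((mem_ch c v).1 hc).2.1 Walk.nil = P c v := by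
        apply hU
        rw [Walk.cons_isPath_iff]
        exact ⟨Walk.IsPath.nil, by simp [((mem_ch c v).1 hc).1]⟩
      rw [hsplit2, ← hcv]; rfl
    rcases hmem with hmem | hmem
    · -- c' on path u → c : then c ∈ support (P c' r) = c' :: support (P v r)
      have h3 : c ∈ (P c' r).support := path_take P hP hU huc hmem
      have hc'supp : (P c' r) = Walk.cons ((mem_ch c' v).1 hc').2.1 (P v r) := by
        have hv := (child_cons v c' hc').1
        have hsplit2 : P c' r = (P c' v).append (P v r) := path_split P hP hU hv
        have hcv : Walk.cons ((mem_ch c' v).1 hc').2.1 Walk.nil = P c' v := by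
          apply hU
          rw [Walk.cons_isPath_iff]
          exact ⟨Walk.IsPath.nil, by simp [((mem_ch c' v).1 hc').1]⟩
        rw [hsplit2, ← hcv]; rfl
      rw [hc'supp, Walk.support_cons] at h3
      rcases List.mem_cons.1 h3 with h | h
      · exact hne h
      · exact (child_cons v c hc).2 h
    · rw [hcsupp, Walk.support_cons] at hmem
      rcases List.mem_cons.1 hmem with h | h
      · exact hne h.symm
      · exact (child_cons v c' hc').2 h
  -- cover: every strict descendant is in some child's descendant set
  have cover : ∀ v : V, ∀ m : ℕ, ∀ u : V, (P u v).length = m → u ∈ D v → u ≠ v →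
      ∃ c ∈ ch v, u ∈ D c := by
    intro v m
    induction m using Nat.strong_induction_on with
    | _ m ih =>
      intro u hlen huD hne
      obtain ⟨w, hadj, q, hq⟩ := Walk.exists_eq_cons_of_ne hne (P u v)
      have hqpath : q.IsPath := by
        have := hP u v
        rw [hq, Walk.cons_isPath_iff] at this
        exact this.1
      have hqP : q = P w v := hU _ _ _ hqpath
      have hw_supp : w ∈ (P u v).support := by
        rw [hq, Walk.support_cons]
        exact List.mem_cons_of_mem _ (Walk.start_mem_support _)
      have hwD : w ∈ D v := by
        rw [memD]
        exact path_take P hP hU ((memD u v).1 huD) hw_supp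
      have hu_supp : u ∈ (P u r).support := Walk.start_mem_support _
      by_cases hwv : w = v
      · -- u is itself a child of v
        subst hwv
        refine ⟨u, ?_, self_memD u⟩
        rw [mem_ch]
        exact ⟨hne, hadj, huD⟩
      · have hlt : (P w v).length < m := by
          rw [← hqP, ← hlen, hq, Walk.length_cons]
          omega
        obtain ⟨c, hc, hwc⟩ := ih _ hlt w rfl hwD hwv
        refine ⟨c, hc, ?_⟩
        rw [memD]
        have hwu : w ∈ (P u r).support := by
          have hsplit : P u r = (P u v).append (P v r) :=
            path_split P hP hU ((memD u v).1 huD)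
          rw [hsplit]
          exact Walk.subset_support_append_left _ _ hw_supp
        exact path_trans P hP hU hwu ((memD w c).1 hwc)
  -- decomposition of D v
  have D_eq : ∀ v : V, D v = insert v ((ch v).biUnion D) := by
    intro v
    ext u
    simp only [Finset.mem_insert, Finset.mem_biUnion]
    constructor
    · intro hu
      by_cases huv : u = v
      · exact Or.inl huv
      · exact Or.inr (cover v (P u v).length u rfl hu huv)
    · rintro (rfl | ⟨c, hc, huc⟩)
      · exact self_memD u
      · exact D_sub v c hc huc
  have v_not_biUnion : ∀ (v : V) (C : Finset V), C ⊆ ch v → v ∉ C.biUnion D := by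
    intro v C hC hv
    obtain ⟨c, hc, hvc⟩ := Finset.mem_biUnion.1 hv
    exact v_not_D v c (hC hc) hvc
  have card_biUnion : ∀ (v : V) (C : Finset V), C ⊆ ch v →
      (C.biUnion D).card = ∑ c ∈ C, (D c).card := by
    intro v C hC
    apply Finset.card_biUnion
    intro c hc c' hc' hne
    exact D_disj v c (hC hc) c' (hC hc') hne
  have cardD : ∀ v : V, (D v).card = 1 + ∑ c ∈ ch v, (D c).card := by
    intro v
    rw [D_eq v, Finset.card_insert_of_notMem (v_not_biUnion v (ch v) (le_refl _)),
      card_biUnion v (ch v) (le_refl _)]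
    omega
  -- choose minimal v with |D v| > x
  have hrbad : r ∈ Finset.univ.filter (fun v => x < (D v).card) := by
    simp [D_r, Finset.card_univ, hn, hxn]
  obtain ⟨v, hv, hmin⟩ := Finset.exists_min_image _ (fun v => (D v).card)
    ⟨r, hrbad⟩
  have hvx : x < (D v).card := (Finset.mem_filter.1 hv).2
  -- each child subtree has size ≤ x
  have child_le : ∀ c ∈ ch v, (D c).card ≤ x := by
    intro c hc
    by_contra hgt
    push_neg at hgt
    have hcbad : c ∈ Finset.univ.filter (fun v => x < (D v).card) := by
      simp [hgt]
    have := hmin c hcbad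
    have hss : D c ⊂ D v :=
      ⟨D_sub v c hc, fun hsub => v_not_D v c hc (hsub (self_memD v))⟩
    have := Finset.card_lt_card hss
    omega
  have hsum : x ≤ ∑ c ∈ ch v, (D c).card := by
    have := cardD v
    omega
  obtain ⟨C, hCsub, hCs1, hCs2⟩ := greedy_select x hx2 (fun c => (D c).card)
    (ch v) child_le hsum
  -- the set S
  have hcard : (insert v (C.biUnion D)).card = 1 + ∑ c ∈ C, (D c).card := by
    rw [Finset.card_insert_of_notMem (v_not_biUnion v C hCsub),
      card_biUnion v C hCsub]
    omega
  refine ⟨insert v (C.biUnion D), v, Finset.mem_insert_self _ _, ?_, ?_, ?_, ?_⟩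
  · omega
  · omega
  · -- connectivity of S
    set A : Set V := ↑(insert v (C.biUnion D)) with hAdef
    have hvA : v ∈ A := by simp [hAdef]
    have reachv : ∀ u, ∀ hu : u ∈ A, (T.induce A).Reachable ⟨u, hu⟩ ⟨v, hvA⟩ := by
      intro u hu
      have hu' : u ∈ insert v (C.biUnion D) := by simpa [hAdef] using hu
      rcases Finset.mem_insert.1 hu' with rfl | hub
      · rfl
      · obtain ⟨c, hcC, hucD⟩ := Finset.mem_biUnion.1 hub
        have hcA : c ∈ A := by
          simp only [hAdef, Finset.coe_insert, Set.mem_insert_iff, Finset.mem_coe]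
          exact Or.inr (Finset.mem_biUnion.2 ⟨c, hcC, self_memD c⟩)
        have hsupp : ∀ w ∈ (P u c).support, w ∈ A := by
          intro w hw
          have hwD : w ∈ D c := (memD w c).2 (path_take P hP hU ((memD u c).1 hucD) hw)
          simp only [hAdef, Finset.coe_insert, Set.mem_insert_iff, Finset.mem_coe]
          exact Or.inr (Finset.mem_biUnion.2 ⟨c, hcC, hwD⟩)
        have h1 := reach_of_walk A (P u c) hsupp hu hcA
        have hadj : T.Adj c v := ((mem_ch c v).1 (hCsub hcC)).2.1
        have h2 : (T.induce A).Adj ⟨c, hcA⟩ ⟨v, hvA⟩ := hadj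
        exact h1.trans h2.reachable
    have hpre : (T.induce A).Preconnected := by
      rintro ⟨a, haA⟩ ⟨b, hbA⟩
      exact (reachv a haA).trans (reachv b hbA).symm
    haveI : Nonempty ↑A := ⟨⟨v, hvA⟩⟩
    exact ⟨hpre⟩
  · -- connectivity of complement ∪ {v}
    set S := insert v (C.biUnion D) with hSdef
    set B : Set V := (↑S : Set V)ᶜ ∪ {v} with hBdef
    have hvB : v ∈ B := Or.inr rfl
    have hPrr : (P r r).support = [r] := by
      have hnil : (Walk.nil : T.Walk r r) = P r r := hU r r Walk.nil Walk.IsPath.nil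
      rw [← hnil, Walk.support_nil]
    have hr_not : r ∉ C.biUnion D := by
      intro hr
      obtain ⟨c, hcC, hrD⟩ := Finset.mem_biUnion.1 hr
      have hc : c ∈ (P r r).support := (memD r c).1 hrD
      have hc' : c = r := by rwa [hPrr, List.mem_singleton] at hc
      have hvc : v ∈ (P c r).support := (memD c v).1 ((mem_ch c v).1 (hCsub hcC)).2.2
      rw [hc', hPrr, List.mem_singleton] at hvc
      exact ((mem_ch c v).1 (hCsub hcC)).1 (hc'.trans hvc.symm)
    have hrB : r ∈ B := by
      by_cases hrS : r ∈ S
      · rcases Finset.mem_insert.1 hrS with rfl | h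
        · exact Or.inr rfl
        · exact absurd h hr_not
      · exact Or.inl (by simpa using hrS)
    have uB_not : ∀ u, u ∈ B → u ∉ C.biUnion D := by
      intro u hu hub
      rcases hu with hu | hu
      · exact hu (Finset.mem_coe.2 (Finset.mem_insert_of_mem hub))
      · simp only [Set.mem_singleton_iff] at hu
        subst hu
        exact v_not_biUnion u C hCsub hub
    have supp_claim : ∀ u, u ∉ C.biUnion D → ∀ w ∈ (P u r).support, w ∈ B := by
      intro u hu w hw
      by_cases hwb : w ∈ C.biUnion D
      · obtain ⟨c, hcC, hwD⟩ := Finset.mem_biUnion.1 hwb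
        have hc : c ∈ (P w r).support := (memD w c).1 hwD
        have hcu : c ∈ (P u r).support := path_trans P hP hU hw hc
        exact absurd (Finset.mem_biUnion.2 ⟨c, hcC, (memD u c).2 hcu⟩) hu
      · by_cases hwv : w = v
        · exact Or.inr hwv
        · refine Or.inl ?_
          simp only [Set.mem_compl_iff, Finset.mem_coe, hSdef, Finset.mem_insert]
          push_neg
          exact ⟨hwv, hwb⟩
    have reachr : ∀ u, ∀ hu : u ∈ B, (T.induce B).Reachable ⟨u, hu⟩ ⟨r, hrB⟩ := by
      intro u hu
      exact reach_of_walk B (P u r) (supp_claim u (uB_not u hu)) hu hrB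
    have hpre : (T.induce B).Preconnected := by
      rintro ⟨a, haB⟩ ⟨b, hbB⟩
      exact (reachr a haB).trans (reachr b hbB).symm
    haveI : Nonempty ↑B := ⟨⟨v, hvB⟩⟩
    exact ⟨hpre⟩
end

section
/- Let G be a connected simple graph on a finite vertex set V with |V| = n, and let k be a positive integer. Then there exists a family S_1, …, S_j of at most k subsets of V (j ≤ k) such that S_1 ∪ ⋯ ∪ S_j = V, the subgraph of G induced on each S_i is connected, and |S_i| ≤ 2·⌊n/(k+1)⌋ + 1 for every i. -/
open Finset

namespace CoverAux

set_option linter.unusedSectionVars false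
set_option linter.unusedVariables false

variable {V : Type*} [Fintype V] [DecidableEq V] (G : SimpleGraph V)

/-- Reachability within a finite vertex set `A`. -/
def Rel (A : Finset V) (x y : V) : Prop :=
  Relation.ReflTransGen (fun a b => a ∈ A ∧ b ∈ A ∧ G.Adj a b) x y

/-- `A` is nonempty and the subgraph induced on `A` is connected. -/
def Conn (A : Finset V) : Prop :=
  A.Nonempty ∧ ∀ ⦃x⦄, x ∈ A → ∀ ⦃y⦄, y ∈ A → Rel G A x y

variable {G}

lemma Rel.mono {A B : Finset V} (h : A ⊆ B) {x y : V} (hxy : Rel G A x y) : Rel G B x y :=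
  Relation.ReflTransGen.mono (p := fun a b => a ∈ B ∧ b ∈ B ∧ G.Adj a b)
    (fun a b hab => ⟨h hab.1, h hab.2.1, hab.2.2⟩) x y hxy

lemma Rel.symm {A : Finset V} {x y : V} (hxy : Rel G A x y) : Rel G A y x := by
  have hs : Symmetric (fun a b => a ∈ A ∧ b ∈ A ∧ G.Adj a b) := by
    intro a b hab; exact ⟨hab.2.1, hab.1, hab.2.2.symm⟩
  exact (@Std.Symm.symm _ _ (@Relation.ReflTransGen.stdSymm _ _ ⟨hs⟩) _ _ hxy)

lemma conn_singleton (v : V) : Conn G {v} := by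
  refine ⟨⟨v, mem_singleton_self v⟩, ?_⟩
  intro x hx y hy
  rw [mem_singleton] at hx hy
  subst hx; subst hy
  exact Relation.ReflTransGen.refl

lemma conn_union {A B : Finset V} {a b : V} (hA : Conn G A) (hB : Conn G B)
    (ha : a ∈ A) (hb : b ∈ B) (hab : a = b ∨ G.Adj a b) : Conn G (A ∪ B) := by
  have hkey : Rel G (A ∪ B) a b := by
    rcases hab with rfl | hadj
    · exact Relation.ReflTransGen.refl
    · exact Relation.ReflTransGen.single ⟨mem_union_left _ ha, mem_union_right _ hb, hadj⟩
  have hto : ∀ ⦃x⦄, x ∈ A ∪ B → Rel G (A ∪ B) x b := by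
    intro x hx
    rcases mem_union.1 hx with hxA | hxB
    · exact ((hA.2 hxA ha).mono subset_union_left).trans hkey
    · exact (hB.2 hxB hb).mono subset_union_right
  refine ⟨⟨a, mem_union_left _ ha⟩, ?_⟩
  intro x hx y hy
  exact (hto hx).trans (hto hy).symm

variable (G) in
/-- The connected component of `b` inside `B`. -/
noncomputable def comp (B : Finset V) (b : V) : Finset V :=
  @Finset.filter _ (fun x => Rel G B b x) (Classical.decPred _) B

variable (G) in
lemma mem_comp {B : Finset V} {b x : V} : x ∈ comp G B b ↔ x ∈ B ∧ Rel G B b x := by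
  simp [comp]

lemma comp_subset {B : Finset V} {b : V} : comp G B b ⊆ B := fun x hx => ((mem_comp G).1 hx).1

lemma self_mem_comp {B : Finset V} {b : V} (hb : b ∈ B) : b ∈ comp G B b :=
  (mem_comp G).2 ⟨hb, Relation.ReflTransGen.refl⟩

lemma comp_closed {B : Finset V} {b x y : V} (hx : x ∈ comp G B b) (hy : y ∈ B)
    (hadj : G.Adj x y) : y ∈ comp G B b := by
  rw [mem_comp] at hx ⊢
  exact ⟨hy, hx.2.tail ⟨hx.1, hy, hadj⟩⟩

lemma rel_comp_of {B : Finset V} {b : V} (hb : b ∈ B) :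
    ∀ {y : V}, Rel G B b y → Rel G (comp G B b) b y := by
  intro y h
  induction h with
  | refl => exact Relation.ReflTransGen.refl
  | @tail c d h1 h2 ih =>
    exact ih.tail ⟨(mem_comp G).2 ⟨h2.1, h1⟩, (mem_comp G).2 ⟨h2.2.1, h1.tail h2⟩, h2.2.2⟩

lemma conn_comp {B : Finset V} {b : V} (hb : b ∈ B) : Conn G (comp G B b) := by
  refine ⟨⟨b, self_mem_comp hb⟩, ?_⟩
  intro x hx y hy
  rw [mem_comp] at hx hy
  exact (rel_comp_of hb hx.2).symm.trans (rel_comp_of hb hy.2)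

lemma comp_eq {B : Finset V} {b x : V} (hx : x ∈ comp G B b) : comp G B x = comp G B b := by
  rw [mem_comp] at hx
  ext y
  rw [mem_comp, mem_comp]
  exact ⟨fun hy => ⟨hy.1, hx.2.trans hy.2⟩, fun hy => ⟨hy.1, hx.2.symm.trans hy.2⟩⟩


lemma exists_adj_comp {A : Finset V} {r : V} (hA : Conn G A) (hr : r ∈ A) :
    ∀ {x : V}, Rel G A x r → x ∈ A.erase r → ∃ c ∈ comp G (A.erase r) x, G.Adj c r := by
  intro x h
  induction h using Relation.ReflTransGen.head_induction_on with
  | refl => intro hx; exact absurd rfl (mem_erase.1 hx).1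
  | @head a y step rel ih =>
    intro ha
    by_cases hy : y = r
    · subst hy
      exact ⟨a, self_mem_comp ha, step.2.2⟩
    · have hy' : y ∈ A.erase r := mem_erase.2 ⟨hy, step.2.1⟩
      obtain ⟨c, hc, hcr⟩ := ih hy'
      have hya : y ∈ comp G (A.erase r) a :=
        comp_closed (self_mem_comp ha) hy' step.2.2
      rw [← comp_eq hya]
      exact ⟨c, hc, hcr⟩

lemma exists_adj_comp' {A : Finset V} {r b : V} (hA : Conn G A) (hr : r ∈ A)
    (hb : b ∈ A.erase r) : ∃ c ∈ comp G (A.erase r) b, G.Adj c r :=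
  exists_adj_comp hA hr (hA.2 (mem_of_mem_erase hb) hr) hb

lemma conn_sdiff {A D : Finset V} {r : V} (hA : Conn G A) (hr : r ∈ A) (hD : D ⊆ A.erase r)
    (hcl : ∀ x ∈ D, ∀ y ∈ A.erase r, G.Adj x y → y ∈ D) : Conn G (A \ D) := by
  have hrD : r ∈ A \ D := by
    refine mem_sdiff.2 ⟨hr, fun hrd => ?_⟩
    exact absurd rfl (mem_erase.1 (hD hrd)).1
  have key : ∀ {x : V}, Rel G A x r → x ∈ A \ D → Rel G (A \ D) x r := by
    intro x h
    induction h using Relation.ReflTransGen.head_induction_on with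
    | refl => intro _; exact Relation.ReflTransGen.refl
    | @head a y step rel ih =>
      intro ha
      by_cases har : a = r
      · subst har; exact Relation.ReflTransGen.refl
      · have ha' : a ∈ A.erase r := mem_erase.2 ⟨har, step.1⟩
        by_cases hy : y = r
        · subst hy
          exact Relation.ReflTransGen.single ⟨ha, hrD, step.2.2⟩
        · have hy' : y ∈ A.erase r := mem_erase.2 ⟨hy, step.2.1⟩
          have hyD : y ∉ D := by
            intro hyD
            exact (mem_sdiff.1 ha).2 (hcl y hyD a ha' step.2.2.symm)
          have hymem : y ∈ A \ D := mem_sdiff.2 ⟨step.2.1, hyD⟩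
          exact Relation.ReflTransGen.head ⟨ha, hymem, step.2.2⟩ (ih hymem)
  refine ⟨⟨r, hrD⟩, ?_⟩
  intro x hx y hy
  exact (key (hA.2 (mem_sdiff.1 hx).1 hr) hx).trans (key (hA.2 (mem_sdiff.1 hy).1 hr) hy).symm

lemma greedy {ι : Type*} [DecidableEq ι] (f : ι → ℕ) (t : ℕ) :
    ∀ s : Finset ι, (∀ i ∈ s, f i ≤ t) → t + 1 ≤ ∑ i ∈ s, f i →
    ∃ I ⊆ s, t + 1 ≤ ∑ i ∈ I, f i ∧ ∑ i ∈ I, f i ≤ 2 * t := by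
  intro s
  induction s using Finset.strongInduction with
  | _ s ih =>
    intro hle hsum
    by_cases hbig : ∑ i ∈ s, f i ≤ 2 * t
    · exact ⟨s, Finset.Subset.refl s, hsum, hbig⟩
    · push_neg at hbig
      have hne : s.Nonempty := by
        rcases s.eq_empty_or_nonempty with rfl | h
        · rw [Finset.sum_empty] at hsum; omega
        · exact h
      obtain ⟨i, hi⟩ := hne
      have hsub : s.erase i ⊂ s := Finset.erase_ssubset hi
      have hsum' : ∑ j ∈ s.erase i, f j + f i = ∑ j ∈ s, f j :=
        Finset.sum_erase_add s f hi
      have hrec : t + 1 ≤ ∑ j ∈ s.erase i, f j := by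
        have := hle i hi; omega
      obtain ⟨I, hIsub, h1, h2⟩ := ih (s.erase i) hsub
        (fun j hj => hle j (mem_of_mem_erase hj)) hrec
      exact ⟨I, hIsub.trans (erase_subset i s), h1, h2⟩

lemma conn_insert_biUnion {A : Finset V} {r : V} (hA : Conn G A) (hr : r ∈ A)
    (I : Finset (Finset V))
    (hI : ∀ C ∈ I, ∃ b ∈ A.erase r, C = comp G (A.erase r) b) :
    Conn G (insert r (I.biUnion id)) := by
  induction I using Finset.induction_on with
  | empty => simpa using conn_singleton r
  | @insert C I hCI ih =>
    have hC : ∃ b ∈ A.erase r, C = comp G (A.erase r) b := hI C (mem_insert_self C I)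
    obtain ⟨b, hb, rfl⟩ := hC
    have hrest := ih (fun C' hC' => hI C' (mem_insert_of_mem hC'))
    obtain ⟨c, hc, hcr⟩ := exists_adj_comp' hA hr hb
    have hU : insert r ((insert (comp G (A.erase r) b) I).biUnion id)
        = comp G (A.erase r) b ∪ insert r (I.biUnion id) := by
      ext x
      simp [Finset.mem_biUnion, or_comm, or_left_comm, or_assoc]
    rw [hU]
    exact conn_union (conn_comp hb) hrest hc
      (mem_insert_self r _) (Or.inr hcr)


lemma limb (t : ℕ) (ht : 1 ≤ t) :
    ∀ A : Finset V, Conn G A → ∀ r ∈ A, t + 2 ≤ A.card →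
    ∃ S A' : Finset V, S ∪ A' = A ∧ Conn G S ∧ Conn G A' ∧ r ∈ A' ∧
      S.card ≤ 2 * t + 1 ∧ A'.card + (t + 1) ≤ A.card := by
  intro A
  induction A using Finset.strongInduction with
  | _ A ih =>
    intro hA r hr hcard
    by_cases hsmall : A.card ≤ 2 * t + 1
    · refine ⟨A, {r}, ?_, hA, conn_singleton r, mem_singleton_self r, hsmall, ?_⟩
      · exact Finset.union_eq_left.2 (singleton_subset_iff.2 hr)
      · rw [card_singleton]; omega
    · push_neg at hsmall
      by_cases hbig : ∃ b ∈ A.erase r, t + 2 ≤ (comp G (A.erase r) b).card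
      · -- Case 1: some component is big, recurse into it
        obtain ⟨b, hb, hCcard⟩ := hbig
        set C := comp G (A.erase r) b with hCdef
        have hCB : C ⊆ A.erase r := comp_subset
        have hCA : C ⊆ A := hCB.trans (erase_subset r A)
        have hrC : r ∉ C := fun h => absurd rfl (mem_erase.1 (hCB h)).1
        have hCss : C ⊂ A := (Finset.ssubset_iff_of_subset hCA).2 ⟨r, hr, hrC⟩
        obtain ⟨c, hc, hcr⟩ := exists_adj_comp' hA hr hb
        obtain ⟨S, C', hunion, hS, hC', hcC', hScard, hC'card⟩ :=
          ih C hCss (conn_comp hb) c hc hCcard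
        have connAc : Conn G (A \ C) :=
          conn_sdiff hA hr hCB (fun x hx y hy hadj => comp_closed hx hy hadj)
        have hrAc : r ∈ A \ C := mem_sdiff.2 ⟨hr, hrC⟩
        have connA' : Conn G ((A \ C) ∪ C') :=
          conn_union connAc hC' hrAc hcC' (Or.inr hcr.symm)
        have hkey : ∀ x, (x ∈ S ∨ x ∈ C') ↔ x ∈ C := by
          intro x; rw [← mem_union, hunion]
        refine ⟨S, (A \ C) ∪ C', ?_, hS, connA', mem_union_left _ hrAc, hScard, ?_⟩
        · ext x
          have h1 := hkey x
          have h2 : x ∈ C → x ∈ A := @hCA x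
          simp only [mem_union, mem_sdiff] at *
          tauto
        · have h3 : (A \ C).card + C.card = A.card :=
            Finset.card_sdiff_add_card_eq_card hCA
          have h4 : ((A \ C) ∪ C').card ≤ (A \ C).card + C'.card := card_union_le _ _
          omega
      · push_neg at hbig
        by_cases hex : ∃ b ∈ A.erase r, (comp G (A.erase r) b).card = t + 1
        · -- Case 2: a component of size exactly t+1; remove it whole
          obtain ⟨b, hb, hC⟩ := hex
          set C := comp G (A.erase r) b with hCdef
          have hCB : C ⊆ A.erase r := comp_subset
          have hCA : C ⊆ A := hCB.trans (erase_subset r A)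
          have hrC : r ∉ C := fun h => absurd rfl (mem_erase.1 (hCB h)).1
          refine ⟨C, A \ C, Finset.union_sdiff_of_subset hCA, conn_comp hb,
            conn_sdiff hA hr hCB (fun x hx y hy hadj => comp_closed hx hy hadj),
            mem_sdiff.2 ⟨hr, hrC⟩, by omega, ?_⟩
          have h3 : (A \ C).card + C.card = A.card :=
            Finset.card_sdiff_add_card_eq_card hCA
          omega
        · -- Case 3: all components have size ≤ t; take a greedy bunch plus r
          push_neg at hex
          have hsizes : ∀ b ∈ A.erase r, (comp G (A.erase r) b).card ≤ t := by
            intro b hb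
            have h1 := hbig b hb
            have h2 := hex b hb
            omega
          set comps := (A.erase r).image (fun b => comp G (A.erase r) b) with hcompsdef
          have hdisj : ∀ C₁ ∈ comps, ∀ C₂ ∈ comps, C₁ ≠ C₂ → Disjoint C₁ C₂ := by
            intro C₁ h1 C₂ h2 hne
            obtain ⟨b₁, hb₁, rfl⟩ := mem_image.1 h1
            obtain ⟨b₂, hb₂, rfl⟩ := mem_image.1 h2
            rw [Finset.disjoint_left]
            intro x hx1 hx2
            exact hne ((comp_eq hx1).symm.trans (comp_eq hx2))
          have hBun : A.erase r = comps.biUnion id := by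
            ext x
            constructor
            · intro hx
              exact mem_biUnion.2 ⟨comp G (A.erase r) x, mem_image_of_mem _ hx,
                self_mem_comp hx⟩
            · intro hx
              obtain ⟨C, hC, hxC⟩ := mem_biUnion.1 hx
              obtain ⟨b, hb, rfl⟩ := mem_image.1 hC
              exact comp_subset hxC
          have hsum : ∑ C ∈ comps, C.card = (A.erase r).card := by
            rw [hBun]; exact (Finset.card_biUnion hdisj).symm
          have hBcard : (A.erase r).card + 1 = A.card := by
            rw [card_erase_of_mem hr]; omega
          have hsumge : t + 1 ≤ ∑ C ∈ comps, C.card := by omega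
          have hbound : ∀ C ∈ comps, C.card ≤ t := by
            intro C hC
            obtain ⟨b, hb, rfl⟩ := mem_image.1 hC
            exact hsizes b hb
          obtain ⟨I, hIsub, hge, hle2⟩ := greedy (fun C : Finset V => C.card) t comps
            hbound hsumge
          set D := I.biUnion id with hDdef
          have hDB : D ⊆ A.erase r := by
            intro x hx
            obtain ⟨C, hC, hxC⟩ := mem_biUnion.1 hx
            obtain ⟨b, hb, rfl⟩ := mem_image.1 (hIsub hC)
            exact comp_subset hxC
          have hDA : D ⊆ A := hDB.trans (erase_subset r A)
          have hrD : r ∉ D := fun h => absurd rfl (mem_erase.1 (hDB h)).1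
          have hDcard : D.card = ∑ C ∈ I, C.card :=
            Finset.card_biUnion (fun C₁ h1 C₂ h2 hne => hdisj C₁ (hIsub h1) C₂ (hIsub h2) hne)
          have hDcl : ∀ x ∈ D, ∀ y ∈ A.erase r, G.Adj x y → y ∈ D := by
            intro x hx y hy hadj
            obtain ⟨C, hC, hxC⟩ := mem_biUnion.1 hx
            obtain ⟨b, hb, hCb⟩ := mem_image.1 (hIsub hC)
            subst hCb
            exact mem_biUnion.2 ⟨_, hC, comp_closed hxC hy hadj⟩
          have hSconn : Conn G (insert r D) := by
            apply conn_insert_biUnion hA hr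
            intro C hC
            obtain ⟨b, hb, hCb⟩ := mem_image.1 (hIsub hC)
            exact ⟨b, hb, hCb.symm⟩
          have hScard : (insert r D).card = D.card + 1 := card_insert_of_notMem hrD
          refine ⟨insert r D, A \ D, ?_, hSconn,
            conn_sdiff hA hr hDB hDcl, mem_sdiff.2 ⟨hr, hrD⟩, by omega, ?_⟩
          · ext x
            have h2 : x ∈ D → x ∈ A := @hDA x
            simp only [mem_union, mem_insert, mem_sdiff]
            constructor
            · rintro ((rfl | h) | h)
              · exact hr
              · exact h2 h
              · exact h.1
            · intro hx
              by_cases hxD : x ∈ D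
              · exact Or.inl (Or.inr hxD)
              · exact Or.inr ⟨hx, hxD⟩
          · have h3 : (A \ D).card + D.card = A.card :=
              Finset.card_sdiff_add_card_eq_card hDA
            omega


lemma cover (t : ℕ) (ht : 1 ≤ t) :
    ∀ j : ℕ, 1 ≤ j → ∀ A : Finset V, Conn G A → A.card ≤ j * (t + 1) + t →
    ∃ F : Fin j → Finset V, (∀ i, Conn G (F i)) ∧ (∀ i, (F i).card ≤ 2 * t + 1) ∧
      ∀ x ∈ A, ∃ i, x ∈ F i := by
  intro j
  induction j with
  | zero => intro h; exact absurd h (by omega)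
  | succ j ihj =>
    intro _ A hA hcard
    by_cases hsmall : A.card ≤ 2 * t + 1
    · exact ⟨fun _ => A, fun _ => hA, fun _ => hsmall, fun x hx => ⟨0, hx⟩⟩
    · push_neg at hsmall
      obtain ⟨r, hr⟩ := hA.1
      obtain ⟨S, A', hunion, hS, hA', hrA', hScard, hA'card⟩ :=
        limb t ht A hA r hr (by omega)
      have hj1 : 1 ≤ j := by
        by_contra h
        have h0 : j = 0 := by omega
        subst h0
        simp only [zero_add, one_mul] at hcard
        omega
      have hA'le : A'.card ≤ j * (t + 1) + t := by
        have he : (j + 1) * (t + 1) = j * (t + 1) + (t + 1) := by ring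
        omega
      obtain ⟨F', hF'conn, hF'card, hF'cov⟩ := ihj hj1 A' hA' hA'le
      refine ⟨Fin.cons S F', ?_, ?_, ?_⟩
      · intro i
        refine Fin.cases ?_ ?_ i
        · exact hS
        · exact fun i' => by simpa using hF'conn i'
      · intro i
        refine Fin.cases ?_ ?_ i
        · exact hScard
        · exact fun i' => by simpa using hF'card i'
      · intro x hx
        rw [← hunion] at hx
        rcases mem_union.1 hx with h | h
        · exact ⟨0, by simpa using h⟩
        · obtain ⟨i, hi⟩ := hF'cov x h
          exact ⟨i.succ, by simpa using hi⟩

lemma rel_to_reachable {A : Finset V} :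
    ∀ {x y : V}, Rel G A x y → ∀ (hx : x ∈ A) (hy : y ∈ A),
      (G.induce (A : Set V)).Reachable ⟨x, hx⟩ ⟨y, hy⟩ := by
  intro x y h
  induction h with
  | refl => intro hx hy; exact SimpleGraph.Reachable.refl _
  | @tail b c hxb hbc ih =>
    intro hx hy
    have hb : b ∈ A := hbc.1
    have hadj : (G.induce (A : Set V)).Adj ⟨b, hb⟩ ⟨c, hy⟩ := hbc.2.2
    exact (ih hx hb).trans hadj.reachable

lemma conn_to_connected {A : Finset V} (h : Conn G A) : (G.induce (A : Set V)).Connected := by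
  rw [SimpleGraph.connected_iff]
  constructor
  · rintro ⟨x, hx⟩ ⟨y, hy⟩
    exact rel_to_reachable (h.2 (Finset.mem_coe.1 hx) (Finset.mem_coe.1 hy)) _ _
  · obtain ⟨x, hx⟩ := h.1
    exact ⟨⟨x, hx⟩⟩

lemma walk_rel {x y : V} (w : G.Walk x y) : Rel G (Finset.univ : Finset V) x y := by
  induction w with
  | nil => exact Relation.ReflTransGen.refl
  | cons h _ ih => exact Relation.ReflTransGen.head ⟨mem_univ _, mem_univ _, h⟩ ih

lemma conn_univ (hG : G.Connected) : Conn G (Finset.univ : Finset V) := by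
  haveI : Nonempty V := hG.nonempty
  refine ⟨Finset.univ_nonempty, ?_⟩
  intro x hx y hy
  obtain ⟨w⟩ := hG.preconnected x y
  exact walk_rel w

end CoverAux

/-- Every connected graph on `n` vertices can be covered by at most `k`
connected subgraphs, each with at most `2·⌊n/(k+1)⌋ + 1` vertices. -/
theorem connected_cover_by_small_connected_subgraphs
    {V : Type*} [Fintype V] [DecidableEq V]
    (G : SimpleGraph V) (hG : G.Connected)
    (n : ℕ) (hn : Fintype.card V = n)
    (k : ℕ) (hk : 0 < k) :
    ∃ (j : ℕ) (S : Fin j → Finset V), j ≤ k ∧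
      (⋃ i, (↑(S i) : Set V)) = Set.univ ∧
      (∀ i, (G.induce (↑(S i) : Set V)).Connected) ∧
      (∀ i, (S i).card ≤ 2 * (n / (k + 1)) + 1) := by
  subst hn
  haveI : Nonempty V := hG.nonempty
  by_cases hnk : Fintype.card V ≤ k
  · refine ⟨Fintype.card V, fun i => {(Fintype.equivFin V).symm i}, hnk, ?_, ?_, ?_⟩
    · apply Set.eq_univ_iff_forall.2
      intro v
      exact Set.mem_iUnion.2 ⟨Fintype.equivFin V v, by simp⟩
    · intro i
      exact CoverAux.conn_to_connected (CoverAux.conn_singleton _)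
    · intro i
      rw [Finset.card_singleton]
      omega
  · push_neg at hnk
    set t := Fintype.card V / (k + 1) with htdef
    have ht : 1 ≤ t := (Nat.one_le_div_iff (by omega)).2 (by omega)
    have hcard : (Finset.univ : Finset V).card ≤ k * (t + 1) + t := by
      rw [Finset.card_univ]
      have h1 : (k + 1) * t + Fintype.card V % (k + 1) = Fintype.card V := by
        rw [htdef]; exact Nat.div_add_mod _ _
      have hmlt : Fintype.card V % (k + 1) < k + 1 := Nat.mod_lt _ (by omega)
      have e1 : k * (t + 1) = k * t + k := by ring
      have e2 : (k + 1) * t = k * t + t := by ring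
      omega
    obtain ⟨F, hconn, hcard2, hcov⟩ := CoverAux.cover t ht k hk Finset.univ
      (CoverAux.conn_univ hG) hcard
    refine ⟨k, F, le_refl k, ?_, fun i => CoverAux.conn_to_connected (hconn i), hcard2⟩
    apply Set.eq_univ_iff_forall.2
    intro v
    obtain ⟨i, hi⟩ := hcov v (Finset.mem_univ v)
    exact Set.mem_iUnion.2 ⟨i, hi⟩
end

section
/- Let G be a connected simple graph on a finite vertex set V with |V| = n and graph distance dist, and let k be a positive integer. Then there exist initial cop positions c_1, …, c_k ∈ V and response functions f_1, …, f_k : V → V with dist(c_j, f_j(v)) ≤ ⌊n/(k+1)⌋ for all j and all v ∈ V, such that for every probability distribution p on V and every i.i.d. sequence (X_t)_{t≥0} with law p, the capture time T = min{ t ≥ 1 : there exists j with t ≥ dist(c_j, f_j(X_0)) and X_t = f_j(X_0) } satisfies E[T] ≤ 3n/(k+1) + 1. -/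
set_option linter.unusedSectionVars false
set_option linter.unnecessarySimpa false
set_option maxHeartbeats 1000000

open MeasureTheory ProbabilityTheory Finset
open scoped ENNReal



section Tree

variable {V : Type*} [Fintype V] [DecidableEq V] {G : SimpleGraph V}
variable (hG : G.Connected) (z : V) (par : V → V)
variable (hadj : ∀ v, v ≠ z → G.Adj (par v) v)
variable (hdec : ∀ v, v ≠ z → G.dist z (par v) < G.dist z v)
variable (hz : par z = z)

include hz hdec in
lemma par_dist_mono (v : V) : G.dist z (par v) ≤ G.dist z v := by
  by_cases h : v = z
  · subst h; rw [hz]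
  · exact (hdec v h).le

include hz hdec in
lemma par_iter_dist_mono (i : ℕ) (v : V) : G.dist z (par^[i] v) ≤ G.dist z v := by
  induction i with
  | zero => simp
  | succ i ih =>
      rw [Function.iterate_succ_apply']
      exact le_trans (par_dist_mono z par hdec hz _) ih

include hz hdec in
lemma par_iter_fixed (v : V) (i : ℕ) (h : par^[i] v = v) : i = 0 ∨ v = z := by
  rcases Nat.eq_zero_or_pos i with h0 | h0
  · exact Or.inl h0
  · right
    by_contra hvz
    have h1 : G.dist z (par^[i] v) ≤ G.dist z (par v) := by
      obtain ⟨j, rfl⟩ := Nat.exists_eq_add_of_lt h0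
      rw [Nat.zero_add, Function.iterate_add_apply, Function.iterate_one]
      exact par_iter_dist_mono z par hdec hz j (par v)
    rw [h] at h1
    exact absurd (lt_of_le_of_lt h1 (hdec v hvz)) (lt_irrefl _)

include hz hdec in
lemma par_iter_stable_z (i : ℕ) : par^[i] z = z := by
  induction i with
  | zero => rfl
  | succ i ih => rw [Function.iterate_succ_apply, hz, ih]

include hz hdec in
lemma par_reaches_z (v : V) : ∃ i, par^[i] v = z := by
  obtain ⟨d, hd⟩ : ∃ d, G.dist z v = d := ⟨_, rfl⟩
  induction d using Nat.strong_induction_on generalizing v with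
  | _ d ih =>
    by_cases hvz : v = z
    · exact ⟨0, hvz⟩
    · have hlt : G.dist z (par v) < d := hd ▸ hdec v hvz
      obtain ⟨i, hi⟩ := ih _ hlt (par v) rfl
      exact ⟨i + 1, by rwa [Function.iterate_succ_apply]⟩

include hG hadj hz in
lemma dist_par_iter (i : ℕ) (v : V) : G.dist (par^[i] v) v ≤ i := by
  induction i with
  | zero => simpa using le_refl 0
  | succ i ih =>
      rw [Function.iterate_succ_apply']
      have h1 : G.dist (par (par^[i] v)) (par^[i] v) ≤ 1 := by
        by_cases h : par^[i] v = z
        · rw [h, hz, SimpleGraph.dist_self]; exact Nat.zero_le 1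
        · exact SimpleGraph.dist_le (SimpleGraph.Walk.cons (hadj _ h) SimpleGraph.Walk.nil)
      calc G.dist (par (par^[i] v)) v ≤ G.dist (par (par^[i] v)) (par^[i] v) + G.dist (par^[i] v) v :=
            hG.dist_triangle
        _ ≤ 1 + i := Nat.add_le_add h1 ih
        _ = i + 1 := Nat.add_comm _ _


/-- ancestor-closed -/
def AC (par : V → V) (W : Finset V) : Prop := ∀ w ∈ W, par w ∈ W

open scoped Classical in
noncomputable def descW (par : V → V) (W : Finset V) (u : V) : Finset V :=
  W.filter (fun w => ∃ i, par^[i] w = u)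

lemma mem_descW {W : Finset V} {u w : V} :
    w ∈ descW par W u ↔ w ∈ W ∧ ∃ i, par^[i] w = u := by
  classical
  simp [descW]

lemma descW_subset {W : Finset V} {u : V} : descW par W u ⊆ W :=
  fun w hw => ((mem_descW par).1 hw).1

lemma self_mem_descW {W : Finset V} {w : V} (h : w ∈ W) : w ∈ descW par W w :=
  (mem_descW par).2 ⟨h, 0, rfl⟩

lemma chain_mem {W : Finset V} (hAC : AC par W) {w : V} (h : w ∈ W) (i : ℕ) :
    par^[i] w ∈ W := by
  induction i with
  | zero => exact h
  | succ i ih => rw [Function.iterate_succ_apply']; exact hAC _ ih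

include hdec hz in
lemma chain_no_repeat {w : V} {a b : ℕ} (hab : a < b) (heq : par^[a] w = par^[b] w) :
    par^[a] w = z := by
  have hb : par^[b - a] (par^[a] w) = par^[a] w := by
    rw [← Function.iterate_add_apply, Nat.sub_add_cancel hab.le, ← heq]
  rcases par_iter_fixed z par hdec hz _ _ hb with h | h
  · omega
  · exact h

include hdec hz in
lemma chain_eq_z_of_repeat {w : V} {a b : ℕ} (hne : a ≠ b)
    (heq : par^[a] w = par^[b] w) : par^[a] w = z := by
  rcases lt_or_gt_of_ne hne with h | h
  · exact chain_no_repeat z par hdec hz h heq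
  · rw [heq]; exact chain_no_repeat z par hdec hz h heq.symm

include hdec hz in
lemma chain_injOn {w u : V} {i : ℕ} (hi : par^[i] w = u) (hmin : ∀ j < i, par^[j] w ≠ u)
    {a b : ℕ} (ha : a ≤ i) (hb : b ≤ i) (heq : par^[a] w = par^[b] w) : a = b := by
  by_contra hne
  wlog hab : a < b generalizing a b
  · exact this hb ha heq.symm (Ne.symm hne) (by omega)
  have hza : par^[a] w = z := chain_no_repeat z par hdec hz hab heq
  have hstab : ∀ j, a ≤ j → par^[j] w = z := by
    intro j hj
    rw [← Nat.sub_add_cancel hj, Function.iterate_add_apply, hza,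
      par_iter_stable_z z par hdec hz]
  have hu : u = z := by rw [← hi, hstab i (by omega)]
  exact hmin a (by omega) (by rw [hza, hu])

include hG hadj hdec hz in
lemma dist_le_card_descW {W : Finset V} (hAC : AC par W) {u w : V}
    (hw : w ∈ descW par W u) : G.dist u w + 1 ≤ (descW par W u).card := by
  classical
  obtain ⟨hwW, hex⟩ := (mem_descW par).1 hw
  have hi : par^[Nat.find hex] w = u := Nat.find_spec hex
  have hmin : ∀ j < Nat.find hex, par^[j] w ≠ u := fun j hj => Nat.find_min hex hj
  set i := Nat.find hex with hidef
  have hsub : (Finset.range (i + 1)).image (fun m => par^[m] w) ⊆ descW par W u := by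
    intro x hx
    simp only [Finset.mem_image, Finset.mem_range] at hx
    obtain ⟨m, hm, rfl⟩ := hx
    refine (mem_descW par).2 ⟨chain_mem par hAC hwW m, i - m, ?_⟩
    rw [← Function.iterate_add_apply, Nat.sub_add_cancel (by omega), hi]
  have hcard : i + 1 ≤ (descW par W u).card := by
    have h2 := Finset.card_le_card hsub
    rwa [Finset.card_image_of_injOn (fun a ha b hb heq =>
      chain_injOn z par hdec hz hi hmin
        (by simp only [Finset.mem_coe, Finset.mem_range] at ha; omega)
        (by simp only [Finset.mem_coe, Finset.mem_range] at hb; omega) heq),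
      Finset.card_range] at h2
  have hd : G.dist u w ≤ i := by
    have h3 := dist_par_iter hG z par hadj hz i w
    rwa [hi] at h3
  omega

include hdec hz in
lemma exists_child {W : Finset V} (hAC : AC par W) {u w : V} (hw : w ∈ descW par W u)
    (hne : w ≠ u) :
    ∃ c, c ∈ W ∧ par c = u ∧ c ≠ u ∧ w ∈ descW par W c ∧ G.dist z u < G.dist z c := by
  classical
  obtain ⟨hwW, hex⟩ := (mem_descW par).1 hw
  have hi : par^[Nat.find hex] w = u := Nat.find_spec hex
  have hmin : ∀ j' < Nat.find hex, par^[j'] w ≠ u := fun j hj => Nat.find_min hex hj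
  have hipos : 0 < Nat.find hex := by
    rcases Nat.eq_zero_or_pos (Nat.find hex) with h | h
    · exact absurd (by rw [← hi, h]; rfl) hne
    · exact h
  obtain ⟨j, hij⟩ : ∃ j, Nat.find hex = j + 1 := ⟨Nat.find hex - 1, by omega⟩
  rw [hij] at hi
  have hpc : par (par^[j] w) = u := by rw [← Function.iterate_succ_apply' par j w]; exact hi
  have hcu : par^[j] w ≠ u := hmin j (by omega)
  have hcz : par^[j] w ≠ z := by
    intro hcon
    apply hcu
    rw [hcon]
    rw [hcon, hz] at hpc
    exact hpc
  refine ⟨par^[j] w, chain_mem par hAC hwW j, hpc, hcu, (mem_descW par).2 ⟨hwW, j, rfl⟩, ?_⟩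
  rw [← hpc]
  exact hdec _ hcz

include hdec hz in
lemma child_ne_z {u c : V} (hpc : par c = u) (hcu : c ≠ u) : c ≠ z := by
  intro h; rw [h, hz] at hpc; exact hcu (by rw [h, hpc])

include hdec hz in
lemma dist_lt_of_child {u c : V} (hpc : par c = u) (hcu : c ≠ u) :
    G.dist z u < G.dist z c := by
  rw [← hpc]; exact hdec c (child_ne_z z par hdec hz hpc hcu)

include hdec hz in
lemma descW_child_subset {W : Finset V} {u c : V} (hpc : par c = u) :
    descW par W c ⊆ descW par W u := by
  intro w hw
  obtain ⟨hwW, i, hi⟩ := (mem_descW par).1 hw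
  refine (mem_descW par).2 ⟨hwW, i + 1, ?_⟩
  rw [Function.iterate_succ_apply', hi, hpc]

include hdec hz in
lemma not_mem_descW_child {W : Finset V} {u c : V} (hpc : par c = u) (hcu : c ≠ u) :
    u ∉ descW par W c := by
  intro h
  obtain ⟨-, i, hi⟩ := (mem_descW par).1 h
  have hiz : i ≠ 0 := by rintro rfl; simp only [Function.iterate_zero_apply] at hi; exact hcu hi.symm
  have h1 : G.dist z c ≤ G.dist z u := by
    calc G.dist z c = G.dist z (par^[i] u) := by rw [hi]
    _ ≤ G.dist z u := par_iter_dist_mono z par hdec hz i u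
  exact absurd (lt_of_lt_of_le (dist_lt_of_child z par hdec hz hpc hcu) h1) (lt_irrefl _)

include hdec hz in
lemma descW_children_disjoint {W : Finset V} {u c c' : V} (hpc : par c = u) (hcu : c ≠ u)
    (hpc' : par c' = u) (hcu' : c' ≠ u) (hcc : c ≠ c') :
    Disjoint (descW par W c) (descW par W c') := by
  have key : ∀ e e' : V, par e = u → par e' = u → e' ≠ u → ∀ x : V, ∀ a b : ℕ, a < b →
      par^[a] x = e → par^[b] x = e' → False := by
    intro e e' hpe hpe' heu' x a b hab ha hb
    obtain ⟨m, hm⟩ : ∃ m, b - a = m + 1 := ⟨b - a - 1, by omega⟩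
    have h1 : par^[b - a] e = e' := by
      rw [← ha, ← Function.iterate_add_apply, Nat.sub_add_cancel hab.le, hb]
    have h3 : par^[m] u = e' := by
      rw [← hpe, ← Function.iterate_succ_apply, Nat.succ_eq_add_one, ← hm, h1]
    have h4 : G.dist z e' ≤ G.dist z u := by
      rw [← h3]; exact par_iter_dist_mono z par hdec hz _ _
    exact absurd (lt_of_lt_of_le (dist_lt_of_child z par hdec hz hpe' heu') h4)
      (lt_irrefl _)
  rw [Finset.disjoint_left]
  intro x hx hx'
  obtain ⟨-, a, ha⟩ := (mem_descW par).1 hx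
  obtain ⟨-, b, hb⟩ := (mem_descW par).1 hx'
  have hne : a ≠ b := by rintro rfl; rw [ha] at hb; exact hcc hb
  rcases lt_or_gt_of_ne hne with h | h
  · exact key c c' hpc hpc' hcu' x a b h ha hb
  · exact key c' c hpc' hpc hcu x b a h hb ha

include hdec hz in
lemma descW_z_eq {W : Finset V} : descW par W z = W := by
  apply Finset.Subset.antisymm (descW_subset par)
  intro w hw
  obtain ⟨i, hi⟩ := par_reaches_z z par hdec hz w
  exact (mem_descW par).2 ⟨hw, i, hi⟩

lemma AC_sdiff {W S : Finset V} (hAC : AC par W) (hS : ∀ w ∈ W, par w ∈ S → w ∈ S) :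
    AC par (W \ S) := by
  intro w hw
  rw [Finset.mem_sdiff] at hw ⊢
  refine ⟨hAC _ hw.1, fun h => hw.2 (hS _ hw.1 h)⟩

include hdec hz in
lemma z_mem_of_AC {W : Finset V} (hAC : AC par W) (hne : W.Nonempty) : z ∈ W := by
  obtain ⟨w, hw⟩ := hne
  obtain ⟨i, hi⟩ := par_reaches_z z par hdec hz w
  rw [← hi]; exact chain_mem par hAC hw i


lemma greedy {α : Type*} [DecidableEq α] (r : ℕ) :
    ∀ N (s : Finset α) (F : α → Finset V), s.card ≤ N → (∀ a ∈ s, (F a).card ≤ r) →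
    r + 1 ≤ (s.biUnion F).card →
    ∃ s' ⊆ s, r + 1 ≤ (s'.biUnion F).card ∧ (s'.biUnion F).card ≤ 2 * r := by
  intro N
  induction N with
  | zero =>
      intro s F hsN hb hc
      have hs0 : s = ∅ := Finset.card_eq_zero.mp (Nat.le_zero.mp hsN)
      subst hs0
      exfalso
      simp only [Finset.biUnion_empty, Finset.card_empty] at hc
      omega
  | succ N ih =>
      intro s F hsN hb hc
      have hsne : s.Nonempty := by
        rcases Finset.eq_empty_or_nonempty s with rfl | h
        · exfalso; simp only [Finset.biUnion_empty, Finset.card_empty] at hc; omega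
        · exact h
      obtain ⟨a, ha⟩ := hsne
      by_cases H : r + 1 ≤ ((s.erase a).biUnion F).card
      · obtain ⟨s', hs1, hs2, hs3⟩ := ih (s.erase a) F
          (by have := Finset.card_erase_of_mem ha; omega)
          (fun b hb' => hb b (Finset.mem_of_mem_erase hb')) H
        exact ⟨s', hs1.trans (Finset.erase_subset a s), hs2, hs3⟩
      · refine ⟨s, Finset.Subset.refl s, hc, ?_⟩
        have hins : s = insert a (s.erase a) := (Finset.insert_erase ha).symm
        have hsub : s.biUnion F = F a ∪ (s.erase a).biUnion F := by
          conv_lhs => rw [hins]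
          rw [Finset.biUnion_insert]
        calc (s.biUnion F).card = (F a ∪ (s.erase a).biUnion F).card := by rw [hsub]
          _ ≤ (F a).card + ((s.erase a).biUnion F).card := Finset.card_union_le _ _
          _ ≤ 2 * r := by have := hb a ha; omega

include hG hadj hdec hz in
lemma dist_le_in_heavy {W : Finset V} {r : ℕ} (hAC : AC par W) {u : V}
    (hmax : ∀ c ∈ W, G.dist z u < G.dist z c → (descW par W c).card ≤ r) :
    ∀ w ∈ descW par W u, G.dist u w ≤ r := by
  intro w hw
  by_cases hwu : w = u
  · subst hwu; rw [SimpleGraph.dist_self]; omega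
  · obtain ⟨c, hcW, hpc, hcu, hwc, hdc⟩ := exists_child z par hdec hz hAC hw hwu
    have hcard : (descW par W c).card ≤ r := hmax c hcW hdc
    have hdcw : G.dist c w + 1 ≤ r := le_trans
      (dist_le_card_descW hG z par hadj hdec hz hAC hwc) hcard
    have huc : G.dist u c ≤ 1 := by
      rw [← hpc]
      exact SimpleGraph.dist_le
        (SimpleGraph.Walk.cons (hadj c (child_ne_z z par hdec hz hpc hcu)) SimpleGraph.Walk.nil)
    have := hG.dist_triangle (u := u) (v := c) (w := w)
    omega

include hG hadj hdec hz in
lemma center {W : Finset V} {r : ℕ} (hAC : AC par W) (hne : W.Nonempty)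
    (hcard : W.card ≤ 2 * r + 1) : ∃ u, ∀ w ∈ W, G.dist u w ≤ r := by
  classical
  have hzW : z ∈ W := z_mem_of_AC z par hdec hz hAC hne
  set A := W.filter (fun u => r + 1 ≤ (descW par W u).card) with hA
  by_cases H : A.Nonempty
  · obtain ⟨u, huA, hmax⟩ := Finset.exists_max_image A (fun u => G.dist z u) H
    rw [hA, Finset.mem_filter] at huA
    obtain ⟨huW, huD⟩ := huA
    have hmax' : ∀ c ∈ W, G.dist z u < G.dist z c → (descW par W c).card ≤ r := by
      intro c hcW hdc
      by_contra hcon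
      have hcA : c ∈ A := by rw [hA, Finset.mem_filter]; exact ⟨hcW, by omega⟩
      exact absurd (lt_of_lt_of_le hdc (hmax c hcA)) (lt_irrefl _)
    refine ⟨u, ?_⟩
    intro w hwW
    by_cases hwd : w ∈ descW par W u
    · exact dist_le_in_heavy hG z par hadj hdec hz hAC hmax' w hwd
    · -- two-chain argument
      have huz : u ≠ z := by
        intro h
        rw [h, descW_z_eq z par hdec hz] at hwd
        exact hwd hwW
      have hexw : ∃ i, ∃ j, par^[j] u = par^[i] w := by
        obtain ⟨i, hi⟩ := par_reaches_z z par hdec hz w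
        obtain ⟨j, hj⟩ := par_reaches_z z par hdec hz u
        exact ⟨i, j, by rw [hi, hj]⟩
      set i := Nat.find hexw with hidef
      have hexj : ∃ j, par^[j] u = par^[i] w := Nat.find_spec hexw
      have himin : ∀ i' < i, ¬∃ j, par^[j] u = par^[i'] w := fun i' h => Nat.find_min hexw h
      set j := Nat.find hexj with hjdef
      have hj : par^[j] u = par^[i] w := Nat.find_spec hexj
      have hjmin : ∀ j' < j, par^[j'] u ≠ par^[i] w := fun j' h => Nat.find_min hexj h
      set X : Finset V := (Finset.range i).image (fun m => par^[m] w) with hX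
      set Y : Finset V := (Finset.range j).image (fun m => par^[m+1] u) with hY
      have hcX : X.card = i := by
        rw [hX, Finset.card_image_of_injOn, Finset.card_range]
        intro a ha b hb heq
        simp only [Finset.mem_coe, Finset.mem_range] at ha hb
        by_contra hne'
        have heq' : par^[a] w = par^[b] w := heq
        have hza : par^[a] w = z := chain_eq_z_of_repeat z par hdec hz hne' heq'
        obtain ⟨jz, hjz⟩ := par_reaches_z z par hdec hz u
        exact himin a ha ⟨jz, by rw [hjz, hza]⟩
      have hcY : Y.card = j := by
        rw [hY, Finset.card_image_of_injOn, Finset.card_range]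
        intro a ha b hb heq
        simp only [Finset.mem_coe, Finset.mem_range] at ha hb
        by_contra hne'
        have heq' : par^[a+1] u = par^[b+1] u := heq
        have key : ∀ a b : ℕ, a < b → b < j → par^[a+1] u = par^[b+1] u → False := by
          intro a b hab hbj heq2
          have hza : par^[a+1] u = z := chain_no_repeat z par hdec hz (by omega) heq2
          have hstab : par^[j] u = z := by
            rw [← Nat.sub_add_cancel (show a + 1 ≤ j by omega), Function.iterate_add_apply,
              hza, par_iter_stable_z z par hdec hz]
          exact hjmin (a+1) (by omega) (by rw [hza, ← hj, hstab])
        rcases lt_or_gt_of_ne hne' with h | h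
        · exact key a b h hb heq'
        · exact key b a h ha heq'.symm
      have hdisj : Disjoint X Y := by
        rw [Finset.disjoint_left]
        intro x hx hy
        rw [hX, Finset.mem_image] at hx
        obtain ⟨m, hm, rfl⟩ := hx
        rw [hY, Finset.mem_image] at hy
        obtain ⟨m', hm', heq⟩ := hy
        rw [Finset.mem_range] at hm
        exact himin m hm ⟨m' + 1, heq⟩
      have hXsub : X ⊆ W \ descW par W u := by
        intro x hx
        rw [hX, Finset.mem_image] at hx
        obtain ⟨m, hm, rfl⟩ := hx
        rw [Finset.mem_sdiff]
        refine ⟨chain_mem par hAC hwW m, fun hcon => hwd ?_⟩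
        obtain ⟨-, l, hl⟩ := (mem_descW par).1 hcon
        exact (mem_descW par).2 ⟨hwW, l + m, by rw [Function.iterate_add_apply, hl]⟩
      have hYsub : Y ⊆ W \ descW par W u := by
        intro y hy
        rw [hY, Finset.mem_image] at hy
        obtain ⟨m, hm, rfl⟩ := hy
        rw [Finset.mem_sdiff]
        refine ⟨chain_mem par hAC huW (m+1), fun hcon => ?_⟩
        obtain ⟨-, l, hl⟩ := (mem_descW par).1 hcon
        have hfix : par^[l + (m+1)] u = u := by rw [Function.iterate_add_apply, hl]
        rcases par_iter_fixed z par hdec hz _ _ hfix with h0 | h0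
        · omega
        · exact huz h0
      have hcards : i + j ≤ W.card - (descW par W u).card := by
        have h1 : X ∪ Y ⊆ W \ descW par W u := Finset.union_subset hXsub hYsub
        have h2 := Finset.card_le_card h1
        rw [Finset.card_union_of_disjoint hdisj, hcX, hcY,
          Finset.card_sdiff_of_subset (descW_subset par)] at h2
        exact h2
      have hDW : (descW par W u).card ≤ W.card := Finset.card_le_card (descW_subset par)
      have hij : i + j ≤ r := by omega
      have t1 : G.dist (par^[j] u) u ≤ j := dist_par_iter hG z par hadj hz j u
      have t2 : G.dist (par^[i] w) w ≤ i := dist_par_iter hG z par hadj hz i w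
      have t3 := hG.dist_triangle (u := u) (v := par^[j] u) (w := w)
      rw [SimpleGraph.dist_comm] at t1
      have t4 : G.dist (par^[j] u) w = G.dist (par^[i] w) w := by rw [hj]
      omega
  · refine ⟨z, ?_⟩
    intro w hwW
    have hwz : w ∈ descW par W z := by rw [descW_z_eq z par hdec hz]; exact hwW
    have h1 := dist_le_card_descW hG z par hadj hdec hz hAC hwz
    have h2 : (descW par W z).card ≤ r := by
      by_contra hcon
      exact H ⟨z, by rw [hA, Finset.mem_filter]; exact ⟨hzW, by omega⟩⟩
    omega


include hG hadj hdec hz in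
lemma extract {W : Finset V} {r : ℕ} (hAC : AC par W) (hr : 1 ≤ r)
    (hcard : 2 * r + 2 ≤ W.card) :
    ∃ (P : Finset V) (u : V), P ⊆ W ∧ r + 1 ≤ P.card ∧ P.card ≤ 2 * r + 1 ∧
      (∀ w ∈ P, G.dist u w ≤ r) ∧ AC par (W \ P) ∧ (W \ P).Nonempty := by
  classical
  have hne : W.Nonempty := Finset.card_pos.mp (by omega)
  have hzW : z ∈ W := z_mem_of_AC z par hdec hz hAC hne
  set A := W.filter (fun u => r + 1 ≤ (descW par W u).card) with hA
  have hAne : A.Nonempty := by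
    refine ⟨z, ?_⟩
    rw [hA, Finset.mem_filter, descW_z_eq z par hdec hz]
    exact ⟨hzW, by omega⟩
  obtain ⟨u, huA, hmax⟩ := Finset.exists_max_image A (fun u => G.dist z u) hAne
  rw [hA, Finset.mem_filter] at huA
  obtain ⟨huW, huD⟩ := huA
  have hmax' : ∀ c ∈ W, G.dist z u < G.dist z c → (descW par W c).card ≤ r := by
    intro c hcW hdc
    by_contra hcon
    have hcA : c ∈ A := by rw [hA, Finset.mem_filter]; exact ⟨hcW, by omega⟩
    exact absurd (lt_of_lt_of_le hdc (hmax c hcA)) (lt_irrefl _)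
  set D := descW par W u with hD
  by_cases hDle : D.card ≤ 2 * r + 1
  · refine ⟨D, u, descW_subset par, huD, hDle,
      dist_le_in_heavy hG z par hadj hdec hz hAC hmax', ?_, ?_⟩
    · refine AC_sdiff par hAC ?_
      intro w hwW hpw
      obtain ⟨-, l, hl⟩ := (mem_descW par).1 hpw
      exact (mem_descW par).2 ⟨hwW, l + 1, by
        rw [Function.iterate_add_apply, Function.iterate_one, hl]⟩
    · have h1 : D.card ≤ W.card := Finset.card_le_card (descW_subset par)
      have h2 : (W \ D).card = W.card - D.card := Finset.card_sdiff_of_subset (descW_subset par)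
      rw [← Finset.card_pos, h2]
      omega
  · -- big subtree: greedy over children
    push_neg at hDle
    set children := W.filter (fun c => par c = u ∧ c ≠ u) with hch
    have hbiU : children.biUnion (descW par W) = D.erase u := by
      apply Finset.Subset.antisymm
      · intro w hw
        rw [Finset.mem_biUnion] at hw
        obtain ⟨c, hc, hwc⟩ := hw
        rw [hch, Finset.mem_filter] at hc
        obtain ⟨hcW, hpc, hcu⟩ := hc
        rw [Finset.mem_erase]
        refine ⟨?_, descW_child_subset z par hdec hz hpc hwc⟩
        intro hcon
        exact not_mem_descW_child z par hdec hz hpc hcu (hcon ▸ hwc)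
      · intro w hw
        rw [Finset.mem_erase] at hw
        obtain ⟨hwu, hwD⟩ := hw
        obtain ⟨c, hcW, hpc, hcu, hwc, -⟩ := exists_child z par hdec hz hAC hwD hwu
        rw [Finset.mem_biUnion]
        exact ⟨c, by rw [hch, Finset.mem_filter]; exact ⟨hcW, hpc, hcu⟩, hwc⟩
    have huD' : u ∈ D := self_mem_descW par huW
    have hbiUcard : r + 1 ≤ (children.biUnion (descW par W)).card := by
      rw [hbiU, Finset.card_erase_of_mem huD']
      omega
    have hbound : ∀ c ∈ children, (descW par W c).card ≤ r := by
      intro c hc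
      rw [hch, Finset.mem_filter] at hc
      exact hmax' c hc.1 (dist_lt_of_child z par hdec hz hc.2.1 hc.2.2)
    obtain ⟨s', hs'sub, hsl, hsu⟩ := greedy r children.card children (descW par W)
      (le_refl _) hbound hbiUcard
    set P := s'.biUnion (descW par W) with hP
    have hchsub : ∀ c ∈ s', c ∈ W ∧ par c = u ∧ c ≠ u := by
      intro c hc
      have := hs'sub hc
      rwa [hch, Finset.mem_filter] at this
    refine ⟨P, u, ?_, hsl, by omega, ?_, ?_, ?_⟩
    · intro w hw
      rw [hP, Finset.mem_biUnion] at hw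
      obtain ⟨c, hc, hwc⟩ := hw
      exact descW_subset par hwc
    · intro w hw
      rw [hP, Finset.mem_biUnion] at hw
      obtain ⟨c, hc, hwc⟩ := hw
      obtain ⟨hcW, hpc, hcu⟩ := hchsub c hc
      have h1 : G.dist c w + 1 ≤ r :=
        le_trans (dist_le_card_descW hG z par hadj hdec hz hAC hwc) (hbound c (hs'sub hc))
      have h2 : G.dist u c ≤ 1 := by
        rw [← hpc]
        exact SimpleGraph.dist_le
          (SimpleGraph.Walk.cons (hadj c (child_ne_z z par hdec hz hpc hcu)) SimpleGraph.Walk.nil)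
      have h3 := hG.dist_triangle (u := u) (v := c) (w := w)
      omega
    · refine AC_sdiff par hAC ?_
      intro w hwW hpw
      rw [hP, Finset.mem_biUnion] at hpw ⊢
      obtain ⟨c, hc, hwc⟩ := hpw
      obtain ⟨-, l, hl⟩ := (mem_descW par).1 hwc
      exact ⟨c, hc, (mem_descW par).2 ⟨hwW, l + 1, by
        rw [Function.iterate_add_apply, Function.iterate_one, hl]⟩⟩
    · refine ⟨u, ?_⟩
      rw [Finset.mem_sdiff]
      refine ⟨huW, ?_⟩
      rw [hP, Finset.mem_biUnion]
      rintro ⟨c, hc, hcon⟩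
      obtain ⟨-, hpc, hcu⟩ := hchsub c hc
      exact not_mem_descW_child z par hdec hz hpc hcu hcon

include hG hadj hdec hz in
lemma partition {r : ℕ} (hr : 1 ≤ r) :
    ∀ k : ℕ, 1 ≤ k → ∀ W : Finset V, AC par W →
    W.card ≤ (k + 1) * r + k →
    ∃ (c : Fin k → V) (R : V → Fin k),
      (∀ w ∈ W, G.dist (c (R w)) w ≤ r) ∧
      ∀ j, (W.filter (fun v => R v = j)).card ≤ 2 * r + 1 := by
  intro k
  induction k with
  | zero => omega
  | succ k ih =>
    intro hk1 W hAC hWcard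
    rcases Finset.eq_empty_or_nonempty W with rfl | hWne
    · exact ⟨fun _ => z, fun _ => 0, by simp, by simp⟩
    by_cases hsmall : W.card ≤ 2 * r + 1
    · obtain ⟨u, hu⟩ := center hG z par hadj hdec hz hAC hWne hsmall
      refine ⟨fun _ => u, fun _ => 0, fun w hw => hu w hw, fun j => ?_⟩
      exact le_trans (Finset.card_le_card (Finset.filter_subset _ _)) hsmall
    · have hk : 1 ≤ k := by
        by_contra hcon
        have hk0 : k = 0 := by omega
        subst hk0
        omega
      obtain ⟨P, u, hPW, hPl, hPu, hPdist, hPAC, hPne⟩ :=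
        extract hG z par hadj hdec hz hAC hr (by omega)
      have hcardP : (W \ P).card = W.card - P.card := Finset.card_sdiff_of_subset hPW
      obtain ⟨c', R', hdist', hsize'⟩ := ih hk (W \ P) hPAC (by
        rw [hcardP]
        have : (k + 1 + 1) * r + (k + 1) = (k + 1) * r + k + (r + 1) := by ring
        omega)
      classical
      refine ⟨Fin.cons u c', fun v => if v ∈ P then 0 else Fin.succ (R' v), ?_, ?_⟩
      · intro w hw
        by_cases hwP : w ∈ P
        · simp only [if_pos hwP, Fin.cons_zero]
          exact hPdist w hwP
        · simp only [if_neg hwP, Fin.cons_succ]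
          exact hdist' w (Finset.mem_sdiff.mpr ⟨hw, hwP⟩)
      · intro j
        refine Fin.cases ?_ ?_ j
        · refine le_trans (Finset.card_le_card ?_) hPu
          intro v hv
          rw [Finset.mem_filter] at hv
          obtain ⟨hvW, hvR⟩ := hv
          by_contra hvP
          simp only [if_neg hvP] at hvR
          exact Fin.succ_ne_zero _ hvR
        · intro j'
          refine le_trans (Finset.card_le_card ?_) (hsize' j')
          intro v hv
          rw [Finset.mem_filter] at hv
          obtain ⟨hvW, hvR⟩ := hv
          by_cases hvP : v ∈ P
          · simp only [if_pos hvP] at hvR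
            exact absurd hvR.symm (Fin.succ_ne_zero _)
          · simp only [if_neg hvP] at hvR
            rw [Finset.mem_filter, Finset.mem_sdiff]
            exact ⟨⟨hvW, hvP⟩, Fin.succ_injective _ hvR⟩

end Tree

section Strategy
variable {V : Type*} [Fintype V] [DecidableEq V]

lemma strategy_exists (G : SimpleGraph V) (hG : G.Connected) (n k r : ℕ)
    (hn : Fintype.card V = n) (hk : 1 ≤ k) (hrdef : r = n / (k + 1)) (hr1 : 1 ≤ r) :
    ∃ (c : Fin k → V) (f : Fin k → V → V) (idx : V → ℕ),
      (∀ j v, G.dist (c j) (f j v) ≤ r) ∧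
      (∀ v, idx v < 2 * r + 1) ∧
      (∀ v w, idx w = idx v → ∃ j, f j v = w) := by
  classical
  obtain ⟨z⟩ := hG.nonempty
  have hpar : ∀ v : V, v ≠ z → ∃ w, G.Adj w v ∧ G.dist z w < G.dist z v := by
    intro v hv
    obtain ⟨p, hp⟩ := hG.exists_walk_length_eq_dist v z
    have hpos : 0 < G.dist z v := hG.pos_dist_of_ne (Ne.symm hv)
    cases p with
    | nil => exact absurd rfl hv
    | cons h q =>
        rename_i w
        refine ⟨w, h.symm, ?_⟩
        rw [SimpleGraph.Walk.length_cons] at hp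
        have h1 : G.dist w z ≤ q.length := SimpleGraph.dist_le q
        rw [SimpleGraph.dist_comm] at h1
        have h2 : G.dist v z = G.dist z v := SimpleGraph.dist_comm ..
        omega
  set par : V → V := fun v => if h : v = z then z else (hpar v h).choose with hpardef
  have hadj : ∀ v, v ≠ z → G.Adj (par v) v := by
    intro v hv
    rw [hpardef]
    simp only [dif_neg hv]
    exact (hpar v hv).choose_spec.1
  have hdec : ∀ v, v ≠ z → G.dist z (par v) < G.dist z v := by
    intro v hv
    rw [hpardef]
    simp only [dif_neg hv]
    exact (hpar v hv).choose_spec.2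
  have hz : par z = z := by rw [hpardef]; simp
  have hAC : AC par (Finset.univ : Finset V) := fun w _ => Finset.mem_univ _
  have hcard : (Finset.univ : Finset V).card ≤ (k + 1) * r + k := by
    rw [Finset.card_univ, hn]
    have h1 := Nat.div_add_mod n (k + 1)
    rw [← hrdef] at h1
    have h2 : n % (k + 1) < k + 1 := Nat.mod_lt _ (by omega)
    omega
  obtain ⟨c, R, hdist, hsize⟩ := partition hG z par hadj hdec hz hr1 k hk Finset.univ hAC hcard
  set e : V ≃ Fin (Fintype.card V) := Fintype.equivFin V with he
  set idx : V → ℕ := fun v =>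
    ((Finset.univ.filter (fun u => R u = R v)).filter (fun u => e u < e v)).card with hidx
  have hidxlt : ∀ v, idx v < 2 * r + 1 := by
    intro v
    have hsub : (Finset.univ.filter (fun u => R u = R v)).filter (fun u => e u < e v) ⊆
        (Finset.univ.filter (fun u => R u = R v)).erase v := by
      intro u hu
      rw [Finset.mem_filter] at hu
      rw [Finset.mem_erase]
      refine ⟨?_, hu.1⟩
      intro hcon
      subst hcon
      exact absurd hu.2 (lt_irrefl _)
    have hvmem : v ∈ Finset.univ.filter (fun u => R u = R v) := by
      rw [Finset.mem_filter]; exact ⟨Finset.mem_univ _, rfl⟩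
    have h1 := Finset.card_le_card hsub
    rw [Finset.card_erase_of_mem hvmem] at h1
    have h2 := hsize (R v)
    have h3 : 1 ≤ (Finset.univ.filter (fun u => R u = R v)).card :=
      Finset.card_pos.mpr ⟨v, hvmem⟩
    simp only [hidx]
    omega
  have hidxinj : ∀ u v, R u = R v → idx u = idx v → u = v := by
    have key : ∀ u v, R u = R v → e u < e v → idx u < idx v := by
      intro u v hR hlt
      simp only [hidx]
      have hsub : insert u ((Finset.univ.filter (fun x => R x = R u)).filter (fun x => e x < e u)) ⊆
          (Finset.univ.filter (fun x => R x = R v)).filter (fun x => e x < e v) := by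
        intro x hx
        rw [Finset.mem_insert] at hx
        rcases hx with rfl | hx
        · rw [Finset.mem_filter, Finset.mem_filter]
          exact ⟨⟨Finset.mem_univ _, hR⟩, hlt⟩
        · rw [Finset.mem_filter, Finset.mem_filter] at hx ⊢
          exact ⟨⟨Finset.mem_univ _, hx.1.2.trans hR⟩, hx.2.trans hlt⟩
      have hnmem : u ∉ (Finset.univ.filter (fun x => R x = R u)).filter (fun x => e x < e u) := by
        rw [Finset.mem_filter]
        rintro ⟨-, hcon⟩
        exact absurd hcon (lt_irrefl _)
      have := Finset.card_le_card hsub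
      rw [Finset.card_insert_of_notMem hnmem] at this
      omega
    intro u v hR hidxeq
    by_contra hne
    have hene : e u ≠ e v := fun hcon => hne (e.injective hcon)
    rcases lt_or_gt_of_ne hene with h | h
    · exact absurd hidxeq (Nat.ne_of_lt (key u v hR h))
    · exact absurd hidxeq.symm (Nat.ne_of_lt (key v u hR.symm h))
  set f : Fin k → V → V := fun j v =>
    if h : ∃ u, R u = j ∧ idx u = idx v then h.choose else c j with hf
  refine ⟨c, f, idx, ?_, hidxlt, ?_⟩
  · intro j v
    rw [hf]
    by_cases h : ∃ u, R u = j ∧ idx u = idx v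
    · simp only [dif_pos h]
      have hspec := h.choose_spec
      have h2 := hdist h.choose (Finset.mem_univ _)
      rwa [hspec.1] at h2
    · simp only [dif_neg h, SimpleGraph.dist_self]
      omega
  · intro v w hw
    refine ⟨R w, ?_⟩
    rw [hf]
    have h : ∃ u, R u = R w ∧ idx u = idx v := ⟨w, rfl, hw⟩
    simp only [dif_pos h]
    have hspec := h.choose_spec
    exact hidxinj h.choose w hspec.1 (by rw [hspec.2, hw])

end Strategy



lemma ennreal_helper (a : ℝ≥0∞) : a * ((1 - a) * a⁻¹) ≤ 1 := by
  rcases eq_or_ne a 0 with rfl | h0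
  · simp
  rcases eq_or_ne a ⊤ with rfl | ht
  · simp
  rw [mul_comm (1 - a) a⁻¹, ← mul_assoc, ENNReal.mul_inv_cancel h0 ht, one_mul]
  exact tsub_le_self

lemma expected_bound {V : Type*} [Fintype V] [DecidableEq V] [MeasurableSpace V]
    [MeasurableSingletonClass V]
    (idx : V → ℕ) (M m : ℕ) (hm : 1 ≤ m) (hidx : ∀ v, idx v < M)
    (p : PMF V) (Ω : Type) (mΩ : MeasurableSpace Ω) (μ : Measure Ω)
    (hμ : IsProbabilityMeasure μ)
    (X : ℕ → Ω → V) (hX : ∀ t, Measurable (X t))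
    (hind : iIndepFun X μ)
    (hlaw : ∀ t, μ.map (X t) = p.toMeasure)
    (T : Ω → ℝ≥0∞)
    (hTle : ∀ ω (t : ℕ), m ≤ t → idx (X t ω) = idx (X 0 ω) → T ω ≤ t) :
    ∫⁻ ω, T ω ∂μ ≤ m + M := by
  classical
  set Q : ℕ → ℝ≥0∞ := fun i => p.toMeasure {w | idx w = i} with hQ
  set Sv : V → Set V := fun v => {w | idx w = idx v} with hSv
  have hSm : ∀ v, MeasurableSet (Sv v) := fun v => (Set.toFinite _).measurableSet
  set E : V → ℕ → Set Ω := fun v s =>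
    (X 0 ⁻¹' {v}) ∩ ⋂ t ∈ Finset.Icc m (m + s), X t ⁻¹' (Sv v)ᶜ with hE
  have hEm : ∀ v s, MeasurableSet (E v s) := fun v s =>
    ((measurableSet_singleton v).preimage (hX 0)).inter
      (MeasurableSet.biInter (Set.to_countable _)
        (fun t _ => ((hSm v).compl.preimage (hX t))))
  set D : ℕ → Set Ω := fun s => ⋃ v : V, E v s with hD
  have hDm : ∀ s, MeasurableSet (D s) := fun s => MeasurableSet.iUnion (fun v => hEm v s)
  -- pointwise bound
  have step1 : ∀ ω, T ω ≤ (m : ℝ≥0∞) + ∑' s : ℕ, (D s).indicator (fun _ => (1:ℝ≥0∞)) ω := by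
    intro ω
    by_cases hall : ∀ s : ℕ, ω ∈ D s
    · have htop : (∑' s : ℕ, (D s).indicator (fun _ => (1:ℝ≥0∞)) ω) = ⊤ := by
        rw [tsum_congr (fun s => Set.indicator_of_mem (hall s) (fun _ => (1:ℝ≥0∞)))]
        exact ENNReal.tsum_const_eq_top_of_ne_zero one_ne_zero
      rw [htop]
      exact le_top.trans_eq (by simp)
    · push_neg at hall
      set s₀ := Nat.find hall with hs₀
      have hnot : ω ∉ D s₀ := Nat.find_spec hall
      have h1 : ω ∉ E (X 0 ω) s₀ := fun hmem => hnot (Set.mem_iUnion.2 ⟨X 0 ω, hmem⟩)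
      have h2 : ¬ ω ∈ ⋂ t ∈ Finset.Icc m (m + s₀), X t ⁻¹' (Sv (X 0 ω))ᶜ := by
        intro h
        exact h1 ⟨rfl, h⟩
      simp only [Set.mem_iInter, Set.mem_preimage, Set.mem_compl_iff, not_forall] at h2
      obtain ⟨t, ht, hts⟩ := h2
      rw [not_not] at hts
      rw [Finset.mem_Icc] at ht
      have hidxeq : idx (X t ω) = idx (X 0 ω) := hts
      have hTt : T ω ≤ (t : ℝ≥0∞) := hTle ω t ht.1 hidxeq
      have hsum : (s₀ : ℝ≥0∞) ≤ ∑' s : ℕ, (D s).indicator (fun _ => (1:ℝ≥0∞)) ω := by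
        calc (s₀ : ℝ≥0∞) = ∑ s ∈ Finset.range s₀, 1 := by simp
          _ = ∑ s ∈ Finset.range s₀, (D s).indicator (fun _ => (1:ℝ≥0∞)) ω := by
              refine Finset.sum_congr rfl (fun s hs => ?_)
              rw [Finset.mem_range] at hs
              exact (Set.indicator_of_mem (of_not_not (Nat.find_min hall hs)) (fun _ => (1:ℝ≥0∞))).symm
          _ ≤ _ := ENNReal.sum_le_tsum _
      calc T ω ≤ (t : ℝ≥0∞) := hTt
        _ ≤ (m : ℝ≥0∞) + (s₀ : ℝ≥0∞) := by
            have : (t : ℝ≥0∞) ≤ ((m + s₀ : ℕ) : ℝ≥0∞) := Nat.cast_le.2 ht.2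
            rwa [Nat.cast_add] at this
        _ ≤ _ := add_le_add_right hsum _
  -- integrate
  have step2 : ∫⁻ ω, T ω ∂μ ≤ (m : ℝ≥0∞) + ∑' s : ℕ, μ (D s) := by
    calc ∫⁻ ω, T ω ∂μ
        ≤ ∫⁻ ω, ((m : ℝ≥0∞) + ∑' s : ℕ, (D s).indicator (fun _ => (1:ℝ≥0∞)) ω) ∂μ :=
          lintegral_mono step1
      _ = (m : ℝ≥0∞) + ∫⁻ ω, ∑' s : ℕ, (D s).indicator (fun _ => (1:ℝ≥0∞)) ω ∂μ := by
          rw [lintegral_add_left measurable_const]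
          simp [lintegral_const]
      _ = (m : ℝ≥0∞) + ∑' s : ℕ, μ (D s) := by
          congr 1
          rw [lintegral_tsum (fun s => ((measurable_const (a := (1:ℝ≥0∞))).indicator
            (hDm s)).aemeasurable)]
          exact tsum_congr (fun s => lintegral_indicator_one (hDm s))
  -- per-step measure
  have hXt : ∀ (t : ℕ) (B : Set V), MeasurableSet B → μ (X t ⁻¹' B) = p.toMeasure B := by
    intro t B hB
    rw [← hlaw t, Measure.map_apply (hX t) hB]
  have stepD : ∀ v s, μ (E v s) = p v * (1 - Q (idx v)) ^ (s + 1) := by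
    intro v s
    have h0 : (0 : ℕ) ∉ Finset.Icc m (m + s) := by
      rw [Finset.mem_Icc]; omega
    set A : ℕ → Set V := fun t => if t = 0 then {v} else (Sv v)ᶜ with hA
    have hAmeas : ∀ t, MeasurableSet (A t) := by
      intro t
      by_cases ht : t = 0
      · simp only [hA, if_pos ht]; exact measurableSet_singleton v
      · simp only [hA, if_neg ht]; exact (hSm v).compl
    have hEJ : E v s = ⋂ t ∈ insert 0 (Finset.Icc m (m + s)), X t ⁻¹' A t := by
      rw [Finset.set_biInter_insert]
      have h00 : A 0 = {v} := if_pos rfl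
      have hIc : (⋂ t ∈ Finset.Icc m (m + s), X t ⁻¹' A t)
          = ⋂ t ∈ Finset.Icc m (m + s), X t ⁻¹' (Sv v)ᶜ := by
        refine Set.iInter₂_congr (fun t ht => ?_)
        have ht0 : t ≠ 0 := by rw [Finset.mem_Icc] at ht; omega
        rw [hA]
        simp only [if_neg ht0]
      rw [h00, hIc]
    have hprod := hind.meas_biInter (S := insert 0 (Finset.Icc m (m + s)))
      (s := fun t => X t ⁻¹' A t) (fun t _ => ⟨A t, hAmeas t, rfl⟩)
    rw [hEJ, hprod, Finset.prod_insert h0]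
    have hfirst : μ (X 0 ⁻¹' A 0) = p v := by
      have h00 : A 0 = {v} := if_pos rfl
      rw [h00, hXt 0 {v} (measurableSet_singleton v)]
      exact p.toMeasure_apply_singleton v (measurableSet_singleton v)
    have hrest : ∀ t ∈ Finset.Icc m (m + s), μ (X t ⁻¹' A t) = 1 - Q (idx v) := by
      intro t ht
      have ht0 : t ≠ 0 := by rw [Finset.mem_Icc] at ht; omega
      have hAt : A t = (Sv v)ᶜ := if_neg ht0
      rw [hAt, hXt t (Sv v)ᶜ (hSm v).compl, prob_compl_eq_one_sub (hSm v)]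
    rw [hfirst, Finset.prod_congr rfl hrest, Finset.prod_const, Nat.card_Icc]
    have hcc : m + s + 1 - m = s + 1 := by omega
    rw [hcc]
  have stepC : ∀ s, μ (D s) = ∑ v : V, p v * (1 - Q (idx v)) ^ (s + 1) := by
    intro s
    have hdisj : Pairwise (Function.onFun Disjoint (fun v => E v s)) := by
      intro v v' hvv'
      refine Set.disjoint_left.2 (fun ω h1 h2 => ?_)
      have e1 : X 0 ω = v := h1.1
      have e2 : X 0 ω = v' := h2.1
      exact hvv' (e1 ▸ e2)
    rw [hD]
    rw [measure_iUnion hdisj (fun v => hEm v s), tsum_fintype]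
    exact Finset.sum_congr rfl (fun v _ => stepD v s)
  -- sum the geometric series
  have stepE : ∑' s : ℕ, μ (D s) ≤ (M : ℝ≥0∞) := by
    have h1 : ∑' s : ℕ, μ (D s)
        = ∑ v : V, p v * ((1 - Q (idx v)) * (1 - (1 - Q (idx v)))⁻¹) := by
      rw [tsum_congr stepC, Summable.tsum_finsetSum (fun v _ => ENNReal.summable)]
      refine Finset.sum_congr rfl (fun v _ => ?_)
      rw [ENNReal.tsum_mul_left, ENNReal.tsum_geometric_add_one]
    have h2 : ∀ v : V, (1 - (1 - Q (idx v)))⁻¹ = (Q (idx v))⁻¹ := by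
      intro v
      congr 1
      refine ENNReal.sub_sub_cancel ENNReal.one_ne_top ?_
      exact prob_le_one
    rw [h1]
    have h3 : ∀ v ∈ Finset.univ (α := V), idx v ∈ Finset.range M :=
      fun v _ => Finset.mem_range.2 (hidx v)
    rw [Finset.sum_congr rfl (fun v _ => by rw [h2 v]),
      ← Finset.sum_fiberwise_of_maps_to h3]
    calc ∑ i ∈ Finset.range M, ∑ v ∈ Finset.univ.filter (fun v => idx v = i),
          p v * ((1 - Q (idx v)) * (Q (idx v))⁻¹)
        ≤ ∑ i ∈ Finset.range M, 1 := by
          refine Finset.sum_le_sum (fun i _ => ?_)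
          have hfib : ∀ v ∈ Finset.univ.filter (fun v => idx v = i),
              p v * ((1 - Q (idx v)) * (Q (idx v))⁻¹)
                = p v * ((1 - Q i) * (Q i)⁻¹) := by
            intro v hv
            rw [Finset.mem_filter] at hv
            rw [hv.2]
          rw [Finset.sum_congr rfl hfib, ← Finset.sum_mul]
          have hQi : ∑ v ∈ Finset.univ.filter (fun v => idx v = i), p v = Q i := by
            simp only [hQ]
            have hset : {w | idx w = i} = ↑(Finset.univ.filter (fun v => idx v = i)) := by
              ext w; simp
            rw [hset, p.toMeasure_apply_finset]
          rw [hQi]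
          exact ennreal_helper (Q i)
      _ = (M : ℝ≥0∞) := by simp
  calc ∫⁻ ω, T ω ∂μ ≤ (m : ℝ≥0∞) + ∑' s : ℕ, μ (D s) := step2
    _ ≤ (m : ℝ≥0∞) + M := add_le_add_right stepE _


open MeasureTheory ProbabilityTheory
open scoped ENNReal

/-- A distributed Watch-Move-Wait strategy for `k` cops against the
1-observed gambler on a connected `n`-vertex graph achieves expected capture time
at most `3n/(k+1) + 1`. -/
theorem distributed_wmw1_expected_capture_time_le
    {V : Type*} [Fintype V] [DecidableEq V]
    [MeasurableSpace V] [MeasurableSingletonClass V]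
    (G : SimpleGraph V) (hG : G.Connected)
    (n : ℕ) (hn : Fintype.card V = n)
    (k : ℕ) (hk : 0 < k) :
    ∃ (c : Fin k → V) (f : Fin k → V → V),
      (∀ j v, G.dist (c j) (f j v) ≤ n / (k + 1)) ∧
      ∀ (p : PMF V) (Ω : Type) (_ : MeasurableSpace Ω) (μ : Measure Ω)
        (_ : IsProbabilityMeasure μ) (X : ℕ → Ω → V),
        (∀ t, Measurable (X t)) →
        iIndepFun X μ →
        (∀ t, μ.map (X t) = p.toMeasure) →
        ∀ T : Ω → ℝ≥0∞,
        (∀ ω, T ω = sInf {τ : ℝ≥0∞ | ∃ t : ℕ, τ = t ∧ 1 ≤ t ∧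
          ∃ j : Fin k, G.dist (c j) (f j (X 0 ω)) ≤ t ∧ X t ω = f j (X 0 ω)}) →
        ∫⁻ ω, T ω ∂μ ≤ 3 * (n : ℝ≥0∞) / ((k : ℝ≥0∞) + 1) + 1 := by
  by_cases hr0 : n / (k + 1) = 0
  · -- at least as many cops as vertices: park a cop on every vertex
    have hn1 : 1 ≤ n := by
      have : Nonempty V := hG.nonempty
      rw [← hn]
      exact Fintype.card_pos
    set e : V ≃ Fin n := (Fintype.equivFin V).trans (finCongr hn) with he
    have hnk : n < k + 1 := by
      by_contra h
      push_neg at h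
      have := (Nat.one_le_div_iff (show 0 < k + 1 by omega)).2 h
      omega
    set c : Fin k → V := fun j => e.symm ⟨j.val % n, Nat.mod_lt _ (by omega)⟩ with hc
    have hsurj : ∀ v : V, ∃ j : Fin k, c j = v := by
      intro v
      refine ⟨⟨(e v).val, lt_of_lt_of_le (e v).isLt (by omega)⟩, ?_⟩
      rw [hc]
      have hmod : (e v).val % n = (e v).val := Nat.mod_eq_of_lt (e v).isLt
      have hfin : (⟨(e v).val % n, Nat.mod_lt _ (by omega)⟩ : Fin n) = e v := Fin.ext hmod
      simp only
      rw [hfin, Equiv.symm_apply_apply]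
    refine ⟨c, fun j _ => c j, ?_, ?_⟩
    · intro j v
      rw [SimpleGraph.dist_self]
      exact Nat.zero_le _
    · intro p Ω mΩ μ hμ X hX hind hlaw T hT
      have hT1 : ∀ ω, T ω ≤ 1 := by
        intro ω
        rw [hT ω]
        obtain ⟨j, hj⟩ := hsurj (X 1 ω)
        refine sInf_le ⟨1, by norm_num, le_refl 1, j, ?_, hj.symm⟩
        rw [SimpleGraph.dist_self]
        omega
      calc ∫⁻ ω, T ω ∂μ ≤ ∫⁻ _, 1 ∂μ := lintegral_mono hT1
        _ = 1 := by simp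
        _ ≤ _ := le_add_self
  · set r := n / (k + 1) with hrdef
    have hr1 : 1 ≤ r := Nat.one_le_iff_ne_zero.2 (by rw [hrdef]; exact hr0)
    obtain ⟨c, f, idx, hdist, hidxlt, hhit⟩ :=
      strategy_exists G hG n k r hn hk hrdef hr1
    refine ⟨c, f, fun j v => hdist j v, ?_⟩
    intro p Ω mΩ μ hμ X hX hind hlaw T hT
    have hTle : ∀ ω (t : ℕ), r ≤ t → idx (X t ω) = idx (X 0 ω) → T ω ≤ t := by
      intro ω t hrt hidxeq
      rw [hT ω]
      obtain ⟨j, hj⟩ := hhit (X 0 ω) (X t ω) hidxeq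
      exact sInf_le ⟨t, rfl, by omega, j, le_trans (hdist j (X 0 ω)) hrt, hj.symm⟩
    have hmain := expected_bound idx (2 * r + 1) r hr1 hidxlt p Ω mΩ μ hμ X hX hind hlaw T hTle
    refine le_trans hmain ?_
    have hcast : ((r : ℝ≥0∞) + ((2 * r + 1 : ℕ) : ℝ≥0∞)) = 3 * (r : ℝ≥0∞) + 1 := by
      push_cast
      ring
    rw [hcast]
    have hne0 : ((k : ℝ≥0∞) + 1) ≠ 0 := by
      intro hcon
      have : (1 : ℝ≥0∞) ≤ (k : ℝ≥0∞) + 1 := le_add_self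
      rw [hcon] at this
      exact (by norm_num : ¬ (1:ℝ≥0∞) ≤ 0) this
    have hnetop : ((k : ℝ≥0∞) + 1) ≠ ⊤ :=
      ENNReal.add_ne_top.2 ⟨ENNReal.natCast_ne_top k, ENNReal.one_ne_top⟩
    have h3r : 3 * (r : ℝ≥0∞) ≤ 3 * (n : ℝ≥0∞) / ((k : ℝ≥0∞) + 1) := by
      rw [ENNReal.le_div_iff_mul_le (Or.inl hne0) (Or.inl hnetop)]
      have hnat : 3 * r * (k + 1) ≤ 3 * n := by
        have h1 : r * (k + 1) ≤ n := by
          rw [hrdef]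
          exact Nat.div_mul_le_self n (k + 1)
        calc 3 * r * (k + 1) = 3 * (r * (k + 1)) := by ring
          _ ≤ 3 * n := Nat.mul_le_mul_left 3 h1
      calc (3 * (r : ℝ≥0∞)) * ((k : ℝ≥0∞) + 1) = ((3 * r * (k + 1) : ℕ) : ℝ≥0∞) := by
            push_cast
            ring
        _ ≤ ((3 * n : ℕ) : ℝ≥0∞) := Nat.cast_le.2 hnat
        _ = 3 * (n : ℝ≥0∞) := by push_cast; ring
    exact add_le_add h3r (le_refl 1)
end

section
/- Let n ≥ 2, let G be the star on n vertices with center u (u adjacent to each of the other n − 1 vertices, no other edges), let dist denote graph distance, and let k be a positive integer with k ≤ n − 1. Then there exist response functions f_1, …, f_k : V → V such that for every probability distribution p on V and every i.i.d. sequence (X_t)_{t≥0} with law p, the capture time T = min{ t ≥ 1 : there exists j with t ≥ dist(u, f_j(X_0)) and X_t = f_j(X_0) } satisfies E[T] ≤ (n−1)/k + 3. -/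
open MeasureTheory ProbabilityTheory
open scoped ENNReal

private lemma tsum_ite_lt_enat (a : ℝ≥0∞) (ha : (∃ m : ℕ, a = m) ∨ a = ⊤) :
    ∑' t : ℕ, (if (t : ℝ≥0∞) < a then (1 : ℝ≥0∞) else 0) = a := by
  rcases ha with ⟨m, rfl⟩ | rfl
  · rw [tsum_eq_sum (s := Finset.range m)
      (by
        intro t ht
        rw [if_neg]
        exact not_lt.2 (Nat.cast_le.2 (by simpa using ht)))]
    rw [Finset.sum_congr rfl (fun t ht => if_pos (Nat.cast_lt.2 (Finset.mem_range.1 ht)))]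
    simp
  · have : ∀ t : ℕ, (if (t : ℝ≥0∞) < ⊤ then (1 : ℝ≥0∞) else 0) = 1 := by
      intro t; rw [if_pos (ENNReal.natCast_lt_top t)]
    rw [tsum_congr this]
    exact ENNReal.tsum_const_eq_top_of_ne_zero one_ne_zero

private lemma exists_star_strategy (n k : ℕ) (hk : 0 < k) {V : Type*} (e : V ≃ Fin n) :
    ∃ f : Fin k → V → V, ∀ v w : V,
      (∃ j : Fin k, f j v = w) ↔ (e w : ℕ) / k = (e v : ℕ) / k := by
  refine ⟨fun j v => if h : ((e v : ℕ) / k) * k + (j : ℕ) < n then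
    e.symm ⟨((e v : ℕ) / k) * k + (j : ℕ), h⟩ else v, fun v w => ?_⟩
  constructor
  · rintro ⟨j, rfl⟩
    dsimp only
    split_ifs with h
    · rw [Equiv.apply_symm_apply]
      show (((e v : ℕ) / k) * k + (j : ℕ)) / k = (e v : ℕ) / k
      rw [mul_comm, Nat.mul_add_div hk, Nat.div_eq_of_lt j.isLt, add_zero]
    · rfl
  · intro hw
    have hkey : ((e v : ℕ) / k) * k + (e w : ℕ) % k = (e w : ℕ) := by
      have h1 := Nat.div_add_mod' ((e w : ℕ)) k
      rw [hw] at h1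
      omega
    refine ⟨⟨(e w : ℕ) % k, Nat.mod_lt _ hk⟩, ?_⟩
    dsimp only
    have hlt : ((e v : ℕ) / k) * k + ((⟨(e w : ℕ) % k, Nat.mod_lt _ hk⟩ : Fin k) : ℕ) < n := by
      rw [Fin.val_mk, hkey]; exact (e w).isLt
    rw [dif_pos hlt]
    have : (⟨((e v : ℕ) / k) * k + ((⟨(e w : ℕ) % k, Nat.mod_lt _ hk⟩ : Fin k) : ℕ), hlt⟩ : Fin n)
        = e w := by
      apply Fin.ext; rw [Fin.val_mk, Fin.val_mk, hkey]
    rw [this, Equiv.symm_apply_apply]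

/-- A distributed Watch-Move-Wait strategy for `k` cops against the
1-observed gambler on the `n`-vertex star (all cops starting at the center `u`)
achieves expected capture time at most `(n−1)/k + 3`. -/
theorem distributed_wmw1_star_expected_capture_time_le
    {V : Type*} [Fintype V] [DecidableEq V]
    [MeasurableSpace V] [MeasurableSingletonClass V]
    (n : ℕ) (hn2 : 2 ≤ n)
    (G : SimpleGraph V) (hn : Fintype.card V = n)
    (u : V) (hstar : ∀ a b : V, G.Adj a b ↔ ((a = u ∧ b ≠ u) ∨ (b = u ∧ a ≠ u)))
    (k : ℕ) (hk : 0 < k) (hkn : k ≤ n - 1) :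
    ∃ f : Fin k → V → V,
      ∀ (p : PMF V) (Ω : Type) (_ : MeasurableSpace Ω) (μ : Measure Ω)
        (_ : IsProbabilityMeasure μ) (X : ℕ → Ω → V),
        (∀ t, Measurable (X t)) →
        iIndepFun X μ →
        (∀ t, μ.map (X t) = p.toMeasure) →
        ∀ T : Ω → ℝ≥0∞,
        (∀ ω, T ω = sInf {τ : ℝ≥0∞ | ∃ t : ℕ, τ = t ∧ 1 ≤ t ∧
          ∃ j : Fin k, G.dist u (f j (X 0 ω)) ≤ t ∧ X t ω = f j (X 0 ω)}) →
        ∫⁻ ω, T ω ∂μ ≤ ((n : ℝ≥0∞) - 1) / (k : ℝ≥0∞) + 3 := by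
  classical
  have e : V ≃ Fin n := Fintype.equivFinOfCardEq hn
  obtain ⟨f, hf⟩ := exists_star_strategy n k hk e
  refine ⟨f, ?_⟩
  intro p Ω mΩ μ hμ X hX hind hmap T hT
  set ν := p.toMeasure with hν
  have hνprob : IsProbabilityMeasure ν := PMF.toMeasure.isProbabilityMeasure p
  have hmV : ∀ s : Set V, MeasurableSet s := fun s => s.toFinite.measurableSet
  set blk : V → ℕ := fun v => (e v : ℕ) / k with hblk
  have hf' : ∀ v w : V, (∃ j : Fin k, f j v = w) ↔ blk w = blk v := fun v w => hf v w
  have hdist : ∀ w : V, G.dist u w ≤ 1 := by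
    intro w
    by_cases hw : w = u
    · simp [hw, SimpleGraph.dist_self]
    · exact le_of_eq (SimpleGraph.dist_eq_one_iff_adj.2 ((hstar u w).2 (Or.inl ⟨rfl, hw⟩)))
  have hTset : ∀ ω, {τ : ℝ≥0∞ | ∃ t : ℕ, τ = t ∧ 1 ≤ t ∧
      ∃ j : Fin k, G.dist u (f j (X 0 ω)) ≤ t ∧ X t ω = f j (X 0 ω)}
      = {τ : ℝ≥0∞ | ∃ t : ℕ, τ = t ∧ 1 ≤ t ∧ blk (X t ω) = blk (X 0 ω)} := by
    intro ω; ext τ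
    simp only [Set.mem_setOf_eq]
    constructor
    · rintro ⟨t, rfl, ht, j, -, hj⟩
      exact ⟨t, rfl, ht, (hf' _ _).1 ⟨j, hj.symm⟩⟩
    · rintro ⟨t, rfl, ht, hb⟩
      obtain ⟨j, hj⟩ := (hf' _ _).2 hb
      exact ⟨t, rfl, ht, j, le_trans (hdist _) ht, hj.symm⟩
  have hTlt : ∀ (ω) (t : ℕ), ((t : ℝ≥0∞) < T ω ↔
      ∀ s : ℕ, 1 ≤ s → s ≤ t → blk (X s ω) ≠ blk (X 0 ω)) := by
    intro ω t
    rw [hT, hTset]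
    constructor
    · intro h s h1 hst hcap
      have hmem : ((s : ℕ) : ℝ≥0∞) ∈ {τ : ℝ≥0∞ | ∃ t : ℕ, τ = t ∧ 1 ≤ t ∧
          blk (X t ω) = blk (X 0 ω)} := ⟨s, rfl, h1, hcap⟩
      exact absurd (lt_of_lt_of_le h (sInf_le hmem)) (not_lt.2 (Nat.cast_le.2 hst))
    · intro h
      refine lt_of_lt_of_le (ENNReal.lt_add_right (ENNReal.natCast_ne_top t) one_ne_zero)
        (le_sInf ?_)
      rintro b ⟨s, rfl, h1, hcap⟩
      have hts : t + 1 ≤ s := by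
        by_contra hc
        exact h s h1 (by omega) hcap
      exact_mod_cast Nat.cast_le.2 hts
  have hTval : ∀ ω, (∃ m : ℕ, T ω = m) ∨ T ω = ⊤ := by
    intro ω
    by_cases h : ∃ s : ℕ, 1 ≤ s ∧ blk (X s ω) = blk (X 0 ω)
    · left
      refine ⟨Nat.find h, le_antisymm ?_ ?_⟩
      · rw [hT, hTset]
        exact sInf_le ⟨Nat.find h, rfl, (Nat.find_spec h).1, (Nat.find_spec h).2⟩
      · rw [hT, hTset]
        refine le_sInf ?_
        rintro b ⟨s, rfl, h1, hcap⟩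
        exact Nat.cast_le.2 (Nat.find_min' h ⟨h1, hcap⟩)
    · right
      rw [hT, hTset]
      have : {τ : ℝ≥0∞ | ∃ t : ℕ, τ = t ∧ 1 ≤ t ∧ blk (X t ω) = blk (X 0 ω)} = ∅ := by
        rw [Set.eq_empty_iff_forall_notMem]
        rintro τ ⟨s, rfl, h1, hcap⟩
        exact h ⟨s, h1, hcap⟩
      rw [this, sInf_empty]
  set D : ℕ → Set Ω := fun t => ⋃ v : V,
    ((X 0 ⁻¹' {v}) ∩ ⋂ s ∈ Finset.Icc 1 t, X s ⁻¹' {w | blk w ≠ blk v}) with hD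
  have hDmeas : ∀ t, MeasurableSet (D t) := by
    intro t
    refine MeasurableSet.iUnion fun v => ((hX 0) (hmV _)).inter ?_
    exact MeasurableSet.biInter (Finset.Icc 1 t).countable_toSet fun s _ => (hX s) (hmV _)
  have hDeq : ∀ t : ℕ, {ω | (t : ℝ≥0∞) < T ω} = D t := by
    intro t; ext ω
    simp only [Set.mem_setOf_eq, hTlt, hD, Set.mem_iUnion, Set.mem_inter_iff,
      Set.mem_preimage, Set.mem_singleton_iff, Set.mem_iInter, Finset.mem_Icc]
    constructor
    · intro h
      exact ⟨X 0 ω, rfl, fun s hs => h s hs.1 hs.2⟩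
    · rintro ⟨v, hv, h⟩ s h1 hst
      rw [hv]
      exact h s ⟨h1, hst⟩
  have hint : ∫⁻ ω, T ω ∂μ = ∑' t : ℕ, μ (D t) := by
    calc ∫⁻ ω, T ω ∂μ
        = ∫⁻ ω, ∑' t : ℕ, Set.indicator {ω' | (t : ℝ≥0∞) < T ω'} (fun _ => 1) ω ∂μ := by
          refine lintegral_congr fun ω => ?_
          rw [← tsum_ite_lt_enat (T ω) (hTval ω)]
          refine tsum_congr fun t => ?_
          by_cases h : (t : ℝ≥0∞) < T ω
          · rw [if_pos h]
            simp only [Set.indicator_apply, Set.mem_setOf_eq]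
            rw [if_pos h]
          · rw [if_neg h]
            simp only [Set.indicator_apply, Set.mem_setOf_eq]
            rw [if_neg h]
      _ = ∑' t : ℕ, ∫⁻ ω, Set.indicator {ω' | (t : ℝ≥0∞) < T ω'} (fun _ => 1) ω ∂μ := by
          refine lintegral_tsum fun t => ?_
          exact (measurable_const.indicator ((hDeq t) ▸ hDmeas t)).aemeasurable
      _ = ∑' t : ℕ, μ (D t) := by
          refine tsum_congr fun t => ?_
          rw [lintegral_indicator ((hDeq t) ▸ hDmeas t), setLIntegral_one, hDeq t]
  have hpre : ∀ (s : ℕ) (B : Set V), μ (X s ⁻¹' B) = ν B := by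
    intro s B
    rw [← hmap s, Measure.map_apply (hX s) (hmV B)]
  have hμD : ∀ t, μ (D t) = ∑' v : V, p v * (ν {w | blk w ≠ blk v}) ^ t := by
    intro t
    rw [hD]
    rw [measure_iUnion ?_ ?_]
    · refine tsum_congr fun v => ?_
      have hset : (X 0 ⁻¹' {v}) ∩ ⋂ s ∈ Finset.Icc 1 t, X s ⁻¹' {w | blk w ≠ blk v}
          = ⋂ s ∈ Finset.Icc 0 t,
              X s ⁻¹' (if s = 0 then {v} else {w | blk w ≠ blk v}) := by
        ext ω
        constructor
        · rintro ⟨h0, hrest⟩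
          simp only [Set.mem_iInter, Set.mem_preimage] at hrest ⊢
          intro s hs
          rcases Nat.eq_zero_or_pos s with hs0 | hs1
          · subst hs0
            rw [if_pos rfl]
            exact h0
          · rw [if_neg (by omega)]
            exact hrest s (Finset.mem_Icc.2 ⟨hs1, (Finset.mem_Icc.1 hs).2⟩)
        · intro hmem
          simp only [Set.mem_iInter, Set.mem_preimage] at hmem
          refine ⟨?_, ?_⟩
          · have := hmem 0 (Finset.mem_Icc.2 ⟨le_refl 0, Nat.zero_le t⟩)
            rwa [if_pos rfl] at this
          · simp only [Set.mem_iInter, Set.mem_preimage]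
            intro s hs
            have h1 := Finset.mem_Icc.1 hs
            have := hmem s (Finset.mem_Icc.2 ⟨Nat.zero_le s, h1.2⟩)
            rwa [if_neg (by omega)] at this
      rw [hset]
      rw [hind.meas_biInter (fun s _ =>
        ⟨(if s = 0 then {v} else {w | blk w ≠ blk v}), hmV _, rfl⟩)]
      have hIcc : Finset.Icc 0 t = insert 0 (Finset.Icc 1 t) := by
        ext s; simp only [Finset.mem_Icc, Finset.mem_insert]; omega
      rw [hIcc, Finset.prod_insert (by simp)]
      have h0 : μ (X 0 ⁻¹' (if (0 : ℕ) = 0 then {v} else {w | blk w ≠ blk v})) = p v := by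
        rw [if_pos rfl, hpre]
        exact p.toMeasure_apply_singleton v (hmV _)
      have hs' : ∀ s ∈ Finset.Icc 1 t,
          μ (X s ⁻¹' (if s = 0 then {v} else {w | blk w ≠ blk v}))
          = ν {w | blk w ≠ blk v} := by
        intro s hs
        simp only [Finset.mem_Icc] at hs
        rw [if_neg (by omega)]
        exact hpre s _
      rw [h0, Finset.prod_congr rfl hs', Finset.prod_const, Nat.card_Icc]
      norm_num
    · intro v v' hvv'
      refine Set.disjoint_left.2 ?_
      rintro ω ⟨h1, -⟩ ⟨h2, -⟩
      simp only [Set.mem_preimage, Set.mem_singleton_iff] at h1 h2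
      exact hvv' (h1 ▸ h2 ▸ rfl)
    · intro v
      refine ((hX 0) (hmV _)).inter ?_
      exact MeasurableSet.biInter (Finset.Icc 1 t).countable_toSet fun s _ => (hX s) (hmV _)
  have key : ∫⁻ ω, T ω ∂μ = ∑' v : V, p v * (ν {w | blk w = blk v})⁻¹ := by
    rw [hint]
    calc ∑' t : ℕ, μ (D t)
        = ∑' t : ℕ, ∑' v : V, p v * (ν {w | blk w ≠ blk v}) ^ t := tsum_congr hμD
      _ = ∑' v : V, ∑' t : ℕ, p v * (ν {w | blk w ≠ blk v}) ^ t := ENNReal.tsum_comm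
      _ = ∑' v : V, p v * (ν {w | blk w = blk v})⁻¹ := by
          refine tsum_congr fun v => ?_
          rw [ENNReal.tsum_mul_left, ENNReal.tsum_geometric]
          congr 2
          have hcomp : {w | blk w ≠ blk v} = {w | blk w = blk v}ᶜ := rfl
          rw [hcomp, measure_compl (hmV _) (measure_ne_top _ _), measure_univ,
            ENNReal.sub_sub_cancel ENNReal.one_ne_top prob_le_one]
  rw [key, tsum_fintype]
  set m : ℕ := (n - 1) / k + 1 with hm
  have hmaps : ∀ v ∈ Finset.univ, blk v ∈ Finset.range m := by
    intro v _
    have h1 : (e v : ℕ) ≤ n - 1 := by have := (e v).isLt; omega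
    have h2 : (e v : ℕ) / k ≤ (n - 1) / k := Nat.div_le_div_right h1
    simp only [hblk, hm, Finset.mem_range]
    omega
  rw [← Finset.sum_fiberwise_of_maps_to hmaps (fun v => p v * (ν {w | blk w = blk v})⁻¹)]
  have hinner : ∀ b ∈ Finset.range m,
      ∑ v ∈ Finset.univ.filter (fun v => blk v = b),
        p v * (ν {w | blk w = blk v})⁻¹ ≤ 1 := by
    intro b _
    have hsum : ∀ v ∈ Finset.univ.filter (fun v => blk v = b),
        p v * (ν {w | blk w = blk v})⁻¹ = p v * (ν {w | blk w = b})⁻¹ := by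
      intro v hv
      simp only [Finset.mem_filter] at hv
      rw [hv.2]
    rw [Finset.sum_congr rfl hsum, ← Finset.sum_mul]
    have hνb : ν {w | blk w = b} = ∑ v ∈ Finset.univ.filter (fun v => blk v = b), p v := by
      have hset : {w | blk w = b} = ↑(Finset.univ.filter (fun v => blk v = b)) := by
        ext w; simp
      rw [hset]
      exact p.toMeasure_apply_finset _
    rw [← hνb]
    by_cases h0 : ν {w | blk w = b} = 0
    · simp [h0]
    · rw [ENNReal.mul_inv_cancel h0 (measure_ne_top _ _)]
  calc ∑ b ∈ Finset.range m, ∑ v ∈ Finset.univ.filter (fun v => blk v = b),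
        p v * (ν {w | blk w = blk v})⁻¹
      ≤ ∑ _b ∈ Finset.range m, (1 : ℝ≥0∞) := Finset.sum_le_sum hinner
    _ = (m : ℝ≥0∞) := by simp
    _ ≤ ((n : ℝ≥0∞) - 1) / (k : ℝ≥0∞) + 3 := by
        have hsub : ((n : ℝ≥0∞) - 1) = ((n - 1 : ℕ) : ℝ≥0∞) := by
          rw [ENNReal.natCast_sub, Nat.cast_one]
        have hdiv : (((n - 1) / k : ℕ) : ℝ≥0∞) ≤ ((n - 1 : ℕ) : ℝ≥0∞) / (k : ℝ≥0∞) := by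
          rw [ENNReal.le_div_iff_mul_le (Or.inl (by exact_mod_cast hk.ne'))
            (Or.inl (ENNReal.natCast_ne_top k)), ← Nat.cast_mul]
          exact Nat.cast_le.2 (Nat.div_mul_le_self _ _)
        rw [hsub, hm, Nat.cast_add, Nat.cast_one]
        exact add_le_add hdiv (by norm_num)
end

section
/- Let V be a finite set with |V| = n ≥ 1, let k be a positive integer, and let A : ℕ → (finite subsets of V) be any sequence of subsets with |A_t| ≤ k for every t. Let (X_t)_{t≥1} be i.i.d. random variables uniformly distributed on V, and let T = min{ t ≥ 1 : X_t ∈ A_t } (with T = ∞ if no such t exists). Then E[T] ≥ n/k, and consequently k + E[T] ≥ 2√n. -/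
open MeasureTheory ProbabilityTheory
open scoped ENNReal

lemma tsum_if_lt_nat_le (m : ℕ) :
    ∑' t : ℕ, (if t < m then (1:ℝ≥0∞) else 0) ≤ (m : ℝ≥0∞) := by
  rw [tsum_eq_sum (s := Finset.range m) (fun t ht => if_neg (by simpa using ht))]
  calc ∑ t ∈ Finset.range m, (if t < m then (1:ℝ≥0∞) else 0)
      ≤ ∑ t ∈ Finset.range m, (1:ℝ≥0∞) := Finset.sum_le_sum (fun t _ => by split <;> simp)
    _ = m := by simp

/-- Against a uniform gambler on an `n`-element vertex set, any sequence
of cop positions occupying at most `k` vertices per turn has expected capture time at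
least `n/k`; consequently `k + E[T] ≥ 2√n`. -/
theorem uniform_gambler_throttling_lower_bound
    {V : Type*} [Fintype V] [DecidableEq V] [Nonempty V]
    [MeasurableSpace V] [MeasurableSingletonClass V]
    (n : ℕ) (hn : Fintype.card V = n) (hn1 : 1 ≤ n)
    (k : ℕ) (hk : 0 < k)
    (A : ℕ → Finset V) (hA : ∀ t, (A t).card ≤ k)
    {Ω : Type*} [MeasurableSpace Ω] (μ : Measure Ω) [IsProbabilityMeasure μ]
    (X : ℕ → Ω → V)
    (hmeas : ∀ t, Measurable (X t))
    (hindep : iIndepFun X μ)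
    (hlaw : ∀ t, μ.map (X t) = (PMF.uniformOfFintype V).toMeasure)
    (T : Ω → ℝ≥0∞)
    (hT : ∀ ω, T ω = sInf {τ : ℝ≥0∞ | ∃ t : ℕ, τ = t ∧ 1 ≤ t ∧ X t ω ∈ A t}) :
    (n : ℝ≥0∞) / (k : ℝ≥0∞) ≤ ∫⁻ ω, T ω ∂μ ∧
      ENNReal.ofReal (2 * Real.sqrt n) ≤ (k : ℝ≥0∞) + ∫⁻ ω, T ω ∂μ := by
  have hn0 : (n : ℝ≥0∞) ≠ 0 := Nat.cast_ne_zero.mpr (by omega)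
  have hk0 : (k : ℝ≥0∞) ≠ 0 := by exact_mod_cast hk.ne'
  set r : ℝ≥0∞ := (k : ℝ≥0∞) / (n : ℝ≥0∞) with hr
  set S : ℕ → Set Ω := fun t => ⋂ s ∈ Finset.Icc 1 t, X s ⁻¹' ((A s : Set V))ᶜ with hS
  -- membership characterization
  have hTS : ∀ t ω, ω ∈ S t ↔ (t : ℝ≥0∞) < T ω := by
    intro t ω
    simp only [hS, Set.mem_iInter, Set.mem_preimage, Set.mem_compl_iff, Finset.mem_Icc,
      Finset.mem_coe, and_imp]
    constructor
    · intro h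
      rw [hT]
      refine lt_of_lt_of_le (ENNReal.lt_add_right (ENNReal.natCast_ne_top t) one_ne_zero)
        (le_sInf ?_)
      rintro τ ⟨s, rfl, hs1, hmem⟩
      have hst : ¬ s ≤ t := fun hle => h s hs1 hle hmem
      have : t + 1 ≤ s := Nat.succ_le_of_lt (Nat.lt_of_not_le hst)
      exact_mod_cast Nat.cast_le.mpr this
    · intro h s hs1 hst hmem
      have h1 : T ω ≤ (s : ℝ≥0∞) := (hT ω) ▸ sInf_le ⟨s, rfl, hs1, hmem⟩
      have h2 : (t : ℝ≥0∞) < (s : ℝ≥0∞) := lt_of_lt_of_le h h1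
      exact absurd (Nat.cast_le.mpr hst) (not_le.mpr h2)
  have hSmeas : ∀ t, MeasurableSet (S t) := by
    intro t
    exact Finset.measurableSet_biInter _ fun s _ =>
      (hmeas s) ((A s).finite_toSet.measurableSet.compl)
  -- single-factor bound
  have hfactor : ∀ s : ℕ, 1 - r ≤ μ (X s ⁻¹' ((A s : Set V))ᶜ) := by
    intro s
    have hAs : MeasurableSet ((A s : Set V)) := (A s).finite_toSet.measurableSet
    have h1 : μ (X s ⁻¹' (A s : Set V)) = ((A s).card : ℝ≥0∞) * ((n : ℝ≥0∞))⁻¹ := by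
      rw [← Measure.map_apply (hmeas s) hAs, hlaw s, PMF.toMeasure_apply_finset]
      simp [PMF.uniformOfFintype_apply, hn, Finset.sum_const]
    have h2 : μ (X s ⁻¹' ((A s : Set V))ᶜ) = 1 - μ (X s ⁻¹' (A s : Set V)) := by
      rw [Set.preimage_compl, measure_compl ((hmeas s) hAs) (measure_ne_top μ _),
        measure_univ]
    rw [h2, h1, hr, div_eq_mul_inv]
    exact tsub_le_tsub_left (mul_le_mul_left (by exact_mod_cast hA s) _) 1
  -- measure of survival event
  have hSbound : ∀ t, (1 - r) ^ t ≤ μ (S t) := by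
    intro t
    have hprod : μ (S t) = ∏ s ∈ Finset.Icc 1 t, μ (X s ⁻¹' ((A s : Set V))ᶜ) := by
      exact hindep.measure_inter_preimage_eq_mul (Finset.Icc 1 t)
        (fun s _ => ((A s).finite_toSet.measurableSet.compl))
    rw [hprod]
    have hcard : (Finset.Icc 1 t).card = t := by simp [Nat.card_Icc]
    calc (1 - r) ^ t = (1 - r) ^ (Finset.Icc 1 t).card := by rw [hcard]
      _ ≤ ∏ s ∈ Finset.Icc 1 t, μ (X s ⁻¹' ((A s : Set V))ᶜ) :=
          Finset.pow_card_le_prod _ _ _ (fun s _ => hfactor s)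
  -- pointwise bound: sum of indicators ≤ T
  have hpt : ∀ ω, ∑' t : ℕ, (S t).indicator (fun _ => (1:ℝ≥0∞)) ω ≤ T ω := by
    intro ω
    by_cases h : ∃ s : ℕ, 1 ≤ s ∧ X s ω ∈ A s
    · set M : Set ℕ := {s | 1 ≤ s ∧ X s ω ∈ A s} with hM
      have hMne : M.Nonempty := h
      set m : ℕ := sInf M with hm
      have hmem : m ∈ M := Nat.sInf_mem hMne
      have hTm : T ω = (m : ℝ≥0∞) := by
        rw [hT]
        apply le_antisymm
        · exact sInf_le ⟨m, rfl, hmem.1, hmem.2⟩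
        · refine le_sInf ?_
          rintro τ ⟨s, rfl, hs1, hmem'⟩
          exact Nat.cast_le.mpr (Nat.sInf_le (show s ∈ M from ⟨hs1, hmem'⟩))
      have : ∀ t : ℕ, (S t).indicator (fun _ => (1:ℝ≥0∞)) ω = if t < m then 1 else 0 := by
        intro t
        by_cases hω : ω ∈ S t
        · rw [Set.indicator_of_mem hω, if_pos]
          have := (hTS t ω).mp hω
          rw [hTm] at this
          exact_mod_cast this
        · rw [Set.indicator_of_notMem hω, if_neg]
          intro hlt
          exact hω ((hTS t ω).mpr (by rw [hTm]; exact_mod_cast hlt))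
      rw [tsum_congr this, hTm]
      exact tsum_if_lt_nat_le m
    · have : T ω = ⊤ := by
        rw [hT]
        refine (congrArg sInf (?_ : _ = (∅ : Set ℝ≥0∞))).trans sInf_empty
        ext τ
        simp only [Set.mem_setOf_eq, Set.mem_empty_iff_false, iff_false]
        rintro ⟨s, rfl, hs1, hmem⟩
        exact h ⟨s, hs1, hmem⟩
      rw [this]; exact le_top
  -- main lower bound on expectation
  have hmain : (n : ℝ≥0∞) / (k : ℝ≥0∞) ≤ ∫⁻ ω, T ω ∂μ := by
    have h1 : ∑' t : ℕ, μ (S t) ≤ ∫⁻ ω, T ω ∂μ := by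
      calc ∑' t : ℕ, μ (S t)
          = ∑' t : ℕ, ∫⁻ ω, (S t).indicator (fun _ => (1:ℝ≥0∞)) ω ∂μ := by
            refine tsum_congr fun t => ?_
            exact (lintegral_indicator_one (hSmeas t)).symm
        _ = ∫⁻ ω, ∑' t : ℕ, (S t).indicator (fun _ => (1:ℝ≥0∞)) ω ∂μ :=
            (lintegral_tsum (fun t => (measurable_const.indicator (hSmeas t)).aemeasurable)).symm
        _ ≤ ∫⁻ ω, T ω ∂μ := lintegral_mono hpt
    have h2 : ∑' t : ℕ, (1 - r) ^ t ≤ ∑' t : ℕ, μ (S t) := ENNReal.tsum_le_tsum hSbound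
    have h3 : ∑' t : ℕ, (1 - r) ^ t = (1 - (1 - r))⁻¹ := ENNReal.tsum_geometric _
    have h4 : (n : ℝ≥0∞) / (k : ℝ≥0∞) ≤ (1 - (1 - r))⁻¹ := by
      have hle : 1 - (1 - r) ≤ r := tsub_tsub_le
      have := ENNReal.inv_le_inv.mpr hle
      refine le_trans ?_ this
      rw [hr, ENNReal.inv_div (Or.inl (ENNReal.natCast_ne_top n)) (Or.inl hn0)]
    exact h4.trans (h3 ▸ h2.trans h1)
  refine ⟨hmain, ?_⟩
  -- AM-GM step
  have hreal : 2 * Real.sqrt n ≤ (k : ℝ) + (n : ℝ) / (k : ℝ) := by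
    have hk' : (0:ℝ) < k := by exact_mod_cast hk
    have hs : Real.sqrt n ^ 2 = n := Real.sq_sqrt (by positivity)
    have key : 2 * Real.sqrt n * k ≤ k * k + n := by
      nlinarith [sq_nonneg ((k:ℝ) - Real.sqrt n), hs]
    have hd : (k:ℝ) + n / k = (k * k + n) / k := by field_simp
    rw [hd, le_div_iff₀ hk']
    linarith [key]
  have hcast : ENNReal.ofReal (2 * Real.sqrt n) ≤ (k : ℝ≥0∞) + (n : ℝ≥0∞) / (k : ℝ≥0∞) := by
    have h1 : (n : ℝ≥0∞) / (k : ℝ≥0∞) = ENNReal.ofReal ((n:ℝ) / (k:ℝ)) := by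
      rw [ENNReal.ofReal_div_of_pos (by exact_mod_cast hk)]
      simp [ENNReal.ofReal_natCast]
    have h2 : (k : ℝ≥0∞) = ENNReal.ofReal (k : ℝ) := by simp [ENNReal.ofReal_natCast]
    rw [h1, h2, ← ENNReal.ofReal_add (by positivity) (by positivity)]
    exact ENNReal.ofReal_le_ofReal hreal
  calc ENNReal.ofReal (2 * Real.sqrt n) ≤ (k : ℝ≥0∞) + (n : ℝ≥0∞) / (k : ℝ≥0∞) := hcast
    _ ≤ (k : ℝ≥0∞) + ∫⁻ ω, T ω ∂μ := add_le_add_right hmain _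
end

section
/- For all sufficiently large n the following holds. Let C_n be the cycle graph on n vertices. There exist a positive integer k and cop trajectories γ⁺_1, …, γ⁺_k and γ⁻_1, …, γ⁻_k : ℕ → V(C_n) (each satisfying γ(t+1) = γ(t) or γ(t+1) adjacent to γ(t) for all t, and not depending on the gambler's distribution) such that for every probability distribution p on the vertices and every i.i.d. sequence (X_t)_{t≥1} with law p, the capture times T⁺ = min{ t ≥ 1 : ∃ j, X_t = γ⁺_j(t) } and T⁻ = min{ t ≥ 1 : ∃ j, X_t = γ⁻_j(t) } satisfy k + (E[T⁺] + E[T⁻])/2 < 2.08037·√n. -/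
open MeasureTheory ProbabilityTheory
open scoped ENNReal

private lemma prod_one_sub_le_exp' {S : Finset ℕ} {w : ℕ → ℝ}
    (h1 : ∀ s, w s ≤ 1) :
    ∏ s ∈ S, (1 - w s) ≤ Real.exp (-∑ s ∈ S, w s) := by
  calc ∏ s ∈ S, (1 - w s) ≤ ∏ s ∈ S, Real.exp (-(w s)) := by
        refine Finset.prod_le_prod (fun i _ => by linarith [h1 i]) (fun i _ => ?_)
        linarith [Real.add_one_le_exp (-(w i))]
    _ = Real.exp (-∑ s ∈ S, w s) := by
        rw [← Real.exp_sum]; simp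

private lemma survival_sum_bound' (m : ℕ) (hm : 1 ≤ m) (u v : ℕ → ℝ)
    (hu0 : ∀ s, 0 ≤ u s) (hu1 : ∀ s, u s ≤ 1)
    (hv0 : ∀ s, 0 ≤ v s) (hv1 : ∀ s, v s ≤ 1)
    (Hu : ∀ a : ℕ, 1 ≤ ∑ s ∈ Finset.Ioc a (a + m), u s)
    (Hv : ∀ a : ℕ, 1 ≤ ∑ s ∈ Finset.Ioc a (a + m), v s)
    (Hp : ∀ r, r ≤ m → 1 ≤ (∑ s ∈ Finset.Ioc 0 r, u s) + ∑ s ∈ Finset.Ioc 0 (m - r), v s)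
    (N : ℕ) :
    (∑ t ∈ Finset.range N, ∏ s ∈ Finset.Ioc 0 t, (1 - u s)) +
      (∑ t ∈ Finset.range N, ∏ s ∈ Finset.Ioc 0 t, (1 - v s)) ≤
      ((m : ℝ) + 1) * (1 + Real.exp (-1)) / (1 - Real.exp (-1)) := by
  set e1 : ℝ := Real.exp (-1) with he1def
  have he0 : 0 < e1 := Real.exp_pos _
  have he1 : e1 < 1 := by
    have h := Real.exp_lt_exp.mpr (show (-1:ℝ) < 0 by norm_num)
    rw [Real.exp_zero] at h
    exact h
  set F : (ℕ → ℝ) → ℕ → ℝ := fun w t => ∏ s ∈ Finset.Ioc 0 t, (1 - w s) with hFdef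
  have key : ∀ w : ℕ → ℝ, (∀ s, 0 ≤ w s) → (∀ s, w s ≤ 1) →
      (∀ a : ℕ, 1 ≤ ∑ s ∈ Finset.Ioc a (a + m), w s) →
      ∑ t ∈ Finset.range N, F w t ≤ (∑ r ∈ Finset.range m, F w r) * (1 - e1)⁻¹ := by
    intro w h0 h1 Hw
    have hFnn : ∀ t, 0 ≤ F w t := fun t =>
      Finset.prod_nonneg (fun i _ => by linarith [h1 i])
    have hstep : ∀ t, F w (t + m) ≤ e1 * F w t := by
      intro t
      have hsplit : F w t * ∏ s ∈ Finset.Ioc t (t + m), (1 - w s) = F w (t + m) :=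
        Finset.prod_Ioc_consecutive _ (Nat.zero_le t) (Nat.le_add_right t m)
      have hwin : ∏ s ∈ Finset.Ioc t (t + m), (1 - w s) ≤ e1 := by
        calc ∏ s ∈ Finset.Ioc t (t + m), (1 - w s)
            ≤ Real.exp (-∑ s ∈ Finset.Ioc t (t + m), w s) := prod_one_sub_le_exp' h1
          _ ≤ e1 := by rw [he1def]; exact Real.exp_le_exp.mpr (by linarith [Hw t])
      calc F w (t + m) = F w t * ∏ s ∈ Finset.Ioc t (t + m), (1 - w s) := hsplit.symm
        _ ≤ F w t * e1 := mul_le_mul_of_nonneg_left hwin (hFnn t)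
        _ = e1 * F w t := mul_comm _ _
    have hgeom : ∀ a r, F w (a * m + r) ≤ e1 ^ a * F w r := by
      intro a
      induction a with
      | zero => intro r; simp
      | succ a ih =>
        intro r
        have h1' : (a+1) * m + r = (a * m + r) + m := by ring
        calc F w ((a+1) * m + r) = F w ((a * m + r) + m) := by rw [h1']
          _ ≤ e1 * F w (a * m + r) := hstep _
          _ ≤ e1 * (e1 ^ a * F w r) := mul_le_mul_of_nonneg_left (ih r) he0.le
          _ = e1 ^ (a+1) * F w r := by ring
    have hA : ∀ a : ℕ, ∑ t ∈ Finset.range (a * m), F w t ≤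
        (∑ r ∈ Finset.range m, F w r) * ∑ b ∈ Finset.range a, e1 ^ b := by
      intro a
      induction a with
      | zero => simp
      | succ a ih =>
        have hsplit : ∑ t ∈ Finset.range ((a+1) * m), F w t =
            ∑ t ∈ Finset.range (a * m), F w t +
              ∑ t ∈ Finset.Ico (a * m) (a * m + m), F w t := by
          have hmm : (a+1) * m = a * m + m := by ring
          rw [Finset.range_eq_Ico, Finset.range_eq_Ico, hmm]
          exact (Finset.sum_Ico_consecutive (F w) (Nat.zero_le _) (Nat.le_add_right _ _)).symm
        have hblock : ∑ t ∈ Finset.Ico (a * m) (a * m + m), F w t ≤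
            e1 ^ a * ∑ r ∈ Finset.range m, F w r := by
          rw [Finset.sum_Ico_eq_sum_range]
          simp only [Nat.add_sub_cancel_left]
          rw [Finset.mul_sum]
          exact Finset.sum_le_sum (fun i _ => hgeom a i)
        calc ∑ t ∈ Finset.range ((a+1) * m), F w t
            ≤ (∑ r ∈ Finset.range m, F w r) * (∑ b ∈ Finset.range a, e1 ^ b) +
              e1 ^ a * ∑ r ∈ Finset.range m, F w r := by
              rw [hsplit]; exact add_le_add ih hblock
          _ = (∑ r ∈ Finset.range m, F w r) * ∑ b ∈ Finset.range (a+1), e1 ^ b := by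
              rw [Finset.sum_range_succ]; ring
    have hgs : ∑ b ∈ Finset.range N, e1 ^ b ≤ (1 - e1)⁻¹ := by
      have := Summable.sum_le_tsum (Finset.range N) (fun i _ => (pow_nonneg he0.le i))
        (summable_geometric_of_lt_one he0.le he1)
      rwa [tsum_geometric_of_lt_one he0.le he1] at this
    have hsub : ∑ t ∈ Finset.range N, F w t ≤ ∑ t ∈ Finset.range (N * m), F w t := by
      apply Finset.sum_le_sum_of_subset_of_nonneg
      · exact Finset.range_subset_range.mpr (Nat.le_mul_of_pos_right N hm)
      · intro i _ _; exact hFnn i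
    have hRnn : 0 ≤ ∑ r ∈ Finset.range m, F w r := Finset.sum_nonneg (fun i _ => hFnn i)
    calc ∑ t ∈ Finset.range N, F w t ≤ ∑ t ∈ Finset.range (N * m), F w t := hsub
      _ ≤ (∑ r ∈ Finset.range m, F w r) * ∑ b ∈ Finset.range N, e1 ^ b := hA N
      _ ≤ (∑ r ∈ Finset.range m, F w r) * (1 - e1)⁻¹ := by
          exact mul_le_mul_of_nonneg_left hgs hRnn
  have hFnn : ∀ w : ℕ → ℝ, (∀ s, w s ≤ 1) → ∀ t, 0 ≤ F w t := fun w h1 t =>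
    Finset.prod_nonneg (fun i _ => by linarith [h1 i])
  have hFle1 : ∀ w : ℕ → ℝ, (∀ s, 0 ≤ w s) → (∀ s, w s ≤ 1) → ∀ t, F w t ≤ 1 := by
    intro w h0 h1 t
    apply Finset.prod_le_one (fun i _ => by linarith [h1 i]) (fun i _ => by linarith [h0 i])
  have hpair : ∀ r, r ≤ m → F u r + F v (m - r) ≤ 1 + e1 := by
    intro r hr
    have hprod : F u r * F v (m - r) ≤ e1 := by
      calc F u r * F v (m - r)
          ≤ Real.exp (-∑ s ∈ Finset.Ioc 0 r, u s) *
            Real.exp (-∑ s ∈ Finset.Ioc 0 (m - r), v s) := by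
            apply mul_le_mul (prod_one_sub_le_exp' hu1) (prod_one_sub_le_exp' hv1)
              (hFnn v hv1 _) (Real.exp_pos _).le
        _ = Real.exp (-(∑ s ∈ Finset.Ioc 0 r, u s + ∑ s ∈ Finset.Ioc 0 (m - r), v s)) := by
            rw [← Real.exp_add]; ring_nf
        _ ≤ e1 := by rw [he1def]; exact Real.exp_le_exp.mpr (by linarith [Hp r hr])
    nlinarith [hFnn u hu1 r, hFnn v hv1 (m - r), hFle1 u hu0 hu1 r, hFle1 v hv0 hv1 (m - r)]
  have hRu : ∑ r ∈ Finset.range m, F u r ≤ ∑ r ∈ Finset.range (m+1), F u r := by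
    rw [Finset.sum_range_succ]; linarith [hFnn u hu1 m]
  have hRv : ∑ r ∈ Finset.range m, F v r ≤ ∑ r ∈ Finset.range (m+1), F v (m - r) := by
    have h : ∑ r ∈ Finset.range (m+1), F v (m - r) = ∑ r ∈ Finset.range (m+1), F v r := by
      have := Finset.sum_range_reflect (fun r => F v r) (m+1)
      simpa using this
    rw [h, Finset.sum_range_succ]
    linarith [hFnn v hv1 m]
  have hsumpair : ∑ r ∈ Finset.range (m+1), F u r + ∑ r ∈ Finset.range (m+1), F v (m - r)
      ≤ ((m : ℝ) + 1) * (1 + e1) := by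
    rw [← Finset.sum_add_distrib]
    calc ∑ r ∈ Finset.range (m+1), (F u r + F v (m - r))
        ≤ ∑ _r ∈ Finset.range (m+1), (1 + e1) :=
          Finset.sum_le_sum (fun r hr => hpair r (Nat.lt_succ_iff.mp (Finset.mem_range.mp hr)))
      _ = ((m : ℝ) + 1) * (1 + e1) := by
          rw [Finset.sum_const, Finset.card_range]; push_cast; ring
  have hinv : (0:ℝ) ≤ (1 - e1)⁻¹ := inv_nonneg.mpr (by linarith)
  calc (∑ t ∈ Finset.range N, F u t) + (∑ t ∈ Finset.range N, F v t)
      ≤ (∑ r ∈ Finset.range m, F u r) * (1 - e1)⁻¹ +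
        (∑ r ∈ Finset.range m, F v r) * (1 - e1)⁻¹ :=
        add_le_add (key u hu0 hu1 Hu) (key v hv0 hv1 Hv)
    _ = ((∑ r ∈ Finset.range m, F u r) + ∑ r ∈ Finset.range m, F v r) * (1 - e1)⁻¹ := by ring
    _ ≤ ((∑ r ∈ Finset.range (m+1), F u r) + ∑ r ∈ Finset.range (m+1), F v (m - r)) * (1 - e1)⁻¹ := by
        apply mul_le_mul_of_nonneg_right _ hinv; linarith
    _ ≤ (((m : ℝ) + 1) * (1 + e1)) * (1 - e1)⁻¹ :=
        mul_le_mul_of_nonneg_right hsumpair hinv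
    _ = ((m : ℝ) + 1) * (1 + e1) / (1 - e1) := by ring

private lemma capture_time_bound' {n : ℕ} [NeZero n] (p : PMF (Fin n)) {Ω : Type}
    [mΩ : MeasurableSpace Ω] (μ : Measure Ω) (X : ℕ → Ω → Fin n)
    (hXmeas : ∀ t, Measurable (X t))
    (hXind : iIndepFun X μ)
    (hXmap : ∀ t, μ.map (X t) = p.toMeasure)
    (C : ℕ → Set (Fin n)) (T : Ω → ℝ≥0∞)
    (hT : ∀ ω, T ω = sInf {τ : ℝ≥0∞ | ∃ t : ℕ, τ = t ∧ 1 ≤ t ∧ X t ω ∈ C t}) :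
    ∫⁻ ω, T ω ∂μ ≤
      ∑' t : ℕ, ENNReal.ofReal (∏ s ∈ Finset.Ioc 0 t, (1 - (p.toMeasure (C s)).toReal)) := by
  classical
  set St : ℕ → Set Ω := fun t => ⋂ s ∈ Finset.Ioc 0 t, (X s)⁻¹' (C s)ᶜ with hSt
  have hCmeas : ∀ s, MeasurableSet (C s) := fun s => by measurability
  have hStmeas : ∀ t, MeasurableSet (St t) := fun t =>
    Finset.measurableSet_biInter _ (fun s _ => (hXmeas s) (hCmeas s).compl)
  have hptwise : ∀ ω, T ω ≤ ∑' t : ℕ, (St t).indicator (fun _ => (1:ℝ≥0∞)) ω := by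
    intro ω
    by_cases hcap : {t : ℕ | 1 ≤ t ∧ X t ω ∈ C t}.Nonempty
    · set t₀ := sInf {t : ℕ | 1 ≤ t ∧ X t ω ∈ C t} with ht₀def
      have ht₀ := Nat.sInf_mem hcap
      have h1 : T ω ≤ (t₀ : ℝ≥0∞) := by
        rw [hT]; exact sInf_le ⟨t₀, rfl, ht₀.1, ht₀.2⟩
      refine h1.trans ?_
      have hmem : ∀ t < t₀, ω ∈ St t := by
        intro t ht
        simp only [hSt, Set.mem_iInter]
        intro s hs
        simp only [Finset.mem_Ioc] at hs
        intro hmem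
        have : t₀ ≤ s := Nat.sInf_le ⟨hs.1, hmem⟩
        omega
      calc (t₀ : ℝ≥0∞) = ∑ _t ∈ Finset.range t₀, (1:ℝ≥0∞) := by simp
        _ = ∑ t ∈ Finset.range t₀, (St t).indicator (fun _ => (1:ℝ≥0∞)) ω :=
            Finset.sum_congr rfl (fun t ht => by
              rw [Set.indicator_of_mem (hmem t (Finset.mem_range.mp ht))])
        _ ≤ ∑' t : ℕ, (St t).indicator (fun _ => (1:ℝ≥0∞)) ω := ENNReal.sum_le_tsum _
    · have hall : ∀ t, ω ∈ St t := by
        intro t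
        simp only [hSt, Set.mem_iInter]
        intro s hs hmem
        simp only [Finset.mem_Ioc] at hs
        exact hcap ⟨s, hs.1, hmem⟩
      have h : ∑' t : ℕ, (St t).indicator (fun _ => (1:ℝ≥0∞)) ω = ⊤ := by
        rw [tsum_congr (fun t => Set.indicator_of_mem (hall t) _)]
        exact ENNReal.tsum_const_eq_top_of_ne_zero one_ne_zero
      rw [h]; exact le_top
  have hprob : ∀ t, μ (St t) =
      ENNReal.ofReal (∏ s ∈ Finset.Ioc 0 t, (1 - (p.toMeasure (C s)).toReal)) := by
    intro t
    have hind := hXind.meas_biInter (S := Finset.Ioc 0 t)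
      (s := fun s => (X s)⁻¹' (C s)ᶜ) (fun s _ => ⟨(C s)ᶜ, (hCmeas s).compl, rfl⟩)
    rw [hSt, hind]
    rw [ENNReal.ofReal_prod_of_nonneg (fun s _ => by
      have hle : p.toMeasure (C s) ≤ 1 := prob_le_one
      have : (p.toMeasure (C s)).toReal ≤ 1 := by
        simpa using ENNReal.toReal_mono (by norm_num) hle
      linarith)]
    refine Finset.prod_congr rfl (fun s _ => ?_)
    have h1 : μ ((X s)⁻¹' (C s)ᶜ) = p.toMeasure ((C s)ᶜ) := by
      rw [← Measure.map_apply (hXmeas s) (hCmeas s).compl, hXmap s]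
    rw [h1, prob_compl_eq_one_sub (hCmeas s)]
    have hle : p.toMeasure (C s) ≤ 1 := prob_le_one
    have hne : p.toMeasure (C s) ≠ ∞ := (lt_of_le_of_lt hle (by norm_num)).ne
    rw [ENNReal.ofReal_sub _ ENNReal.toReal_nonneg, ENNReal.ofReal_toReal hne]
    norm_num
  calc ∫⁻ ω, T ω ∂μ ≤ ∫⁻ ω, ∑' t : ℕ, (St t).indicator (fun _ => (1:ℝ≥0∞)) ω ∂μ :=
        lintegral_mono hptwise
    _ = ∑' t : ℕ, ∫⁻ ω, (St t).indicator (fun _ => (1:ℝ≥0∞)) ω ∂μ :=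
        lintegral_tsum (fun t => ((measurable_const.indicator (hStmeas t)).aemeasurable))
    _ = ∑' t : ℕ, μ (St t) := tsum_congr (fun t => lintegral_indicator_one (hStmeas t))
    _ = _ := tsum_congr hprob

open Fin.NatCast Fin.CommRing

set_option maxHeartbeats 1000000 in
/-- For all sufficiently large `n`, the unknown gambler throttling
number of the cycle `C_n` is less than `2.08037·√n`: there are `k` cops with two
distribution-independent trajectory systems (clockwise and counterclockwise, chosen by
a fair coin) such that `k + (E[T⁺] + E[T⁻])/2 < 2.08037·√n` for every gambler
distribution `p`. -/
theorem unknown_gambler_throttling_cycle :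
    ∃ N : ℕ, ∀ n : ℕ, N ≤ n →
      ∃ (k : ℕ) (_ : 0 < k) (γp γm : Fin k → ℕ → Fin n),
        (∀ j t, γp j (t + 1) = γp j t ∨
          (SimpleGraph.cycleGraph n).Adj (γp j t) (γp j (t + 1))) ∧
        (∀ j t, γm j (t + 1) = γm j t ∨
          (SimpleGraph.cycleGraph n).Adj (γm j t) (γm j (t + 1))) ∧
        ∀ (p : PMF (Fin n)) (Ω : Type) (_ : MeasurableSpace Ω) (μ : Measure Ω)
          (_ : IsProbabilityMeasure μ) (X : ℕ → Ω → Fin n),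
          (∀ t, Measurable (X t)) →
          iIndepFun X μ →
          (∀ t, μ.map (X t) = p.toMeasure) →
          ∀ Tp Tm : Ω → ℝ≥0∞,
          (∀ ω, Tp ω = sInf {τ : ℝ≥0∞ | ∃ t : ℕ, τ = t ∧ 1 ≤ t ∧
            ∃ j : Fin k, X t ω = γp j t}) →
          (∀ ω, Tm ω = sInf {τ : ℝ≥0∞ | ∃ t : ℕ, τ = t ∧ 1 ≤ t ∧
            ∃ j : Fin k, X t ω = γm j t}) →
          (k : ℝ≥0∞) + (∫⁻ ω, Tp ω ∂μ + ∫⁻ ω, Tm ω ∂μ) / 2 <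
            ENNReal.ofReal (2.08037 * Real.sqrt n) := by
  refine ⟨10^14, fun n hn => ?_⟩
  have hn0 : 0 < n := by omega
  haveI : NeZero n := ⟨hn0.ne'⟩
  have hn2 : 2 ≤ n := by omega
  set s0 := Nat.sqrt n with hs0def
  set m := 25 * s0 / 26 + 1 with hmdef
  have hm0 : 0 < m := Nat.succ_pos _
  set k := n / m + 1 with hkdef
  have hk0 : 0 < k := Nat.succ_pos _
  set γp : Fin k → ℕ → Fin n := fun j t => ((j.val * m + t : ℕ) : Fin n) with hγp
  set γm : Fin k → ℕ → Fin n :=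
    fun j t => ((j.val * m + 1 : ℕ) : Fin n) - ((t : ℕ) : Fin n) with hγm
  refine ⟨k, hk0, γp, γm, ?_, ?_, ?_⟩
  · -- forward adjacency
    intro j t
    right
    have hsucc : γp j (t+1) = γp j t + 1 := by
      simp only [hγp]; push_cast; ring
    rw [hsucc, SimpleGraph.cycleGraph_adj']
    right
    have h : γp j t + 1 - γp j t = (1 : Fin n) := by ring
    rw [h]
    simp [Fin.val_one', Nat.mod_eq_of_lt hn2]
  · -- backward adjacency
    intro j t
    right
    have hsucc : γm j (t+1) = γm j t - 1 := by
      simp only [hγm]; push_cast; ring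
    rw [hsucc, SimpleGraph.cycleGraph_adj']
    left
    have h : γm j t - (γm j t - 1) = (1 : Fin n) := by ring
    rw [h]
    simp [Fin.val_one', Nat.mod_eq_of_lt hn2]
  intro p Ω mΩ μ hμ X hXmeas hXind hXmap Tp Tm hTp hTm
  classical
  set Cp : ℕ → Set (Fin n) := fun t => {x | ∃ j : Fin k, x = γp j t} with hCp
  set Cm : ℕ → Set (Fin n) := fun t => {x | ∃ j : Fin k, x = γm j t} with hCm
  -- the basic covering lemma
  have cover : ∀ y : Fin n, ∃ (j : Fin k) (d : ℕ), d < m ∧ ((j.val * m + d : ℕ) : Fin n) = y := by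
    intro y
    have hj : y.val / m < k := by
      have h1 : y.val / m ≤ n / m := Nat.div_le_div_right (le_of_lt y.isLt)
      omega
    refine ⟨⟨y.val / m, hj⟩, y.val % m, Nat.mod_lt _ hm0, ?_⟩
    have h2 : y.val / m * m + y.val % m = y.val := Nat.div_add_mod' _ _
    simp only [h2, Fin.cast_val_eq_self]
  have covA : ∀ a : ℕ, Set.univ ⊆ ⋃ s ∈ Finset.Ioc a (a+m), Cp s := by
    intro a x _
    obtain ⟨j, d, hd, hjd⟩ := cover (x - ((a+1 : ℕ) : Fin n))
    refine Set.mem_biUnion (show a+1+d ∈ Finset.Ioc a (a+m) by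
      simp only [Finset.mem_Ioc]; omega) ⟨j, ?_⟩
    show x = ((j.val * m + (a+1+d) : ℕ) : Fin n)
    push_cast at hjd ⊢
    linear_combination -hjd
  have covB : ∀ a : ℕ, Set.univ ⊆ ⋃ s ∈ Finset.Ioc a (a+m), Cm s := by
    intro a x _
    obtain ⟨j, d, hd, hjd⟩ := cover (x + ((a+m : ℕ) : Fin n) - 1)
    refine Set.mem_biUnion (show a+m-d ∈ Finset.Ioc a (a+m) by
      simp only [Finset.mem_Ioc]; omega) ⟨j, ?_⟩
    show x = ((j.val * m + 1 : ℕ) : Fin n) - ((a+m-d : ℕ) : Fin n)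
    push_cast [Nat.cast_sub (show d ≤ a+m by omega)] at hjd ⊢
    linear_combination -hjd
  have covC : ∀ r : ℕ, r ≤ m → Set.univ ⊆
      (⋃ s ∈ Finset.Ioc 0 r, Cp s) ∪ ⋃ s ∈ Finset.Ioc 0 (m-r), Cm s := by
    intro r hr x _
    obtain ⟨j, d, hd, hjd⟩ := cover (x + ((m-r : ℕ) : Fin n) - 1)
    by_cases hcase : m - r ≤ d
    · left
      refine Set.mem_biUnion (show d - (m-r) + 1 ∈ Finset.Ioc 0 r by
        simp only [Finset.mem_Ioc]; omega) ⟨j, ?_⟩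
      show x = ((j.val * m + (d - (m-r) + 1) : ℕ) : Fin n)
      push_cast [Nat.cast_sub hr] at hjd
      push_cast [Nat.cast_sub hr, Nat.cast_sub hcase]
      linear_combination -hjd
    · right
      refine Set.mem_biUnion (show m - r - d ∈ Finset.Ioc 0 (m-r) by
        simp only [Finset.mem_Ioc]; omega) ⟨j, ?_⟩
      show x = ((j.val * m + 1 : ℕ) : Fin n) - ((m-r-d : ℕ) : Fin n)
      push_cast [Nat.cast_sub hr] at hjd
      push_cast [Nat.cast_sub hr, Nat.cast_sub (show d ≤ m - r by omega)]
      linear_combination -hjd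
  -- probabilities
  set u : ℕ → ℝ := fun s => (p.toMeasure (Cp s)).toReal with hu
  set v : ℕ → ℝ := fun s => (p.toMeasure (Cm s)).toReal with hv
  have hprob_le : ∀ (C : Set (Fin n)), (p.toMeasure C).toReal ≤ 1 := by
    intro C
    have hle : p.toMeasure C ≤ 1 := prob_le_one
    simpa using ENNReal.toReal_mono (by norm_num) hle
  have sum_ge : ∀ (S : Finset ℕ) (C : ℕ → Set (Fin n)), Set.univ ⊆ (⋃ s ∈ S, C s) →
      1 ≤ ∑ s ∈ S, (p.toMeasure (C s)).toReal := by
    intro S C hsub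
    have h1 : (1:ℝ≥0∞) ≤ ∑ s ∈ S, p.toMeasure (C s) := by
      calc (1:ℝ≥0∞) = p.toMeasure Set.univ := measure_univ.symm
        _ ≤ p.toMeasure (⋃ s ∈ S, C s) := measure_mono hsub
        _ ≤ ∑ s ∈ S, p.toMeasure (C s) := measure_biUnion_finset_le _ _
    have hne : ∀ s ∈ S, p.toMeasure (C s) ≠ ∞ := fun s _ => (measure_lt_top _ _).ne
    have hsum_ne : (∑ s ∈ S, p.toMeasure (C s)) ≠ ∞ := by
      rw [← lt_top_iff_ne_top, ENNReal.sum_lt_top]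
      intro s hs
      exact (measure_lt_top _ _)
    have h2 := ENNReal.toReal_mono hsum_ne h1
    rwa [ENNReal.toReal_one, ENNReal.toReal_sum hne] at h2
  have sum_ge2 : ∀ r : ℕ, r ≤ m →
      1 ≤ (∑ s ∈ Finset.Ioc 0 r, u s) + ∑ s ∈ Finset.Ioc 0 (m-r), v s := by
    intro r hr
    have h1 : (1:ℝ≥0∞) ≤ (∑ s ∈ Finset.Ioc 0 r, p.toMeasure (Cp s)) +
        ∑ s ∈ Finset.Ioc 0 (m-r), p.toMeasure (Cm s) := by
      calc (1:ℝ≥0∞) = p.toMeasure Set.univ := measure_univ.symm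
        _ ≤ p.toMeasure ((⋃ s ∈ Finset.Ioc 0 r, Cp s) ∪ ⋃ s ∈ Finset.Ioc 0 (m-r), Cm s) :=
            measure_mono (covC r hr)
        _ ≤ p.toMeasure (⋃ s ∈ Finset.Ioc 0 r, Cp s) +
            p.toMeasure (⋃ s ∈ Finset.Ioc 0 (m-r), Cm s) := measure_union_le _ _
        _ ≤ _ := add_le_add (measure_biUnion_finset_le _ _) (measure_biUnion_finset_le _ _)
    have hne1 : (∑ s ∈ Finset.Ioc 0 r, p.toMeasure (Cp s)) ≠ ∞ := by
      rw [← lt_top_iff_ne_top, ENNReal.sum_lt_top]; intro s hs; exact measure_lt_top _ _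
    have hne2 : (∑ s ∈ Finset.Ioc 0 (m-r), p.toMeasure (Cm s)) ≠ ∞ := by
      rw [← lt_top_iff_ne_top, ENNReal.sum_lt_top]; intro s hs; exact measure_lt_top _ _
    have h2 := ENNReal.toReal_mono (by
      rw [← lt_top_iff_ne_top]
      exact ENNReal.add_lt_top.mpr ⟨lt_top_iff_ne_top.mpr hne1, lt_top_iff_ne_top.mpr hne2⟩) h1
    rwa [ENNReal.toReal_one, ENNReal.toReal_add hne1 hne2, ENNReal.toReal_sum (fun s _ => (measure_lt_top _ _).ne),
      ENNReal.toReal_sum (fun s _ => (measure_lt_top _ _).ne)] at h2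
  have hu0 : ∀ s, 0 ≤ u s := fun s => ENNReal.toReal_nonneg
  have hv0 : ∀ s, 0 ≤ v s := fun s => ENNReal.toReal_nonneg
  have hu1 : ∀ s, u s ≤ 1 := fun s => hprob_le _
  have hv1 : ∀ s, v s ≤ 1 := fun s => hprob_le _
  set B : ℝ := ((m : ℝ) + 1) * (1 + Real.exp (-1)) / (1 - Real.exp (-1)) with hBdef
  have hbound := survival_sum_bound' m hm0 u v hu0 hu1 hv0 hv1
    (fun a => sum_ge _ Cp (covA a)) (fun a => sum_ge _ Cm (covB a)) sum_ge2
  -- tsum bound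
  have hFFu_nn : ∀ t, (0:ℝ) ≤ ∏ s ∈ Finset.Ioc 0 t, (1 - u s) := fun t =>
    Finset.prod_nonneg (fun s _ => by linarith [hu1 s])
  have hFFv_nn : ∀ t, (0:ℝ) ≤ ∏ s ∈ Finset.Ioc 0 t, (1 - v s) := fun t =>
    Finset.prod_nonneg (fun s _ => by linarith [hv1 s])
  have htsum : (∑' t : ℕ, ENNReal.ofReal (∏ s ∈ Finset.Ioc 0 t, (1 - u s))) +
      (∑' t : ℕ, ENNReal.ofReal (∏ s ∈ Finset.Ioc 0 t, (1 - v s))) ≤ ENNReal.ofReal B := by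
    rw [← ENNReal.tsum_add, ENNReal.tsum_eq_iSup_sum]
    refine iSup_le (fun S => ?_)
    obtain ⟨N, hN⟩ := Finset.exists_nat_subset_range S
    calc ∑ t ∈ S, (ENNReal.ofReal (∏ s ∈ Finset.Ioc 0 t, (1 - u s)) +
            ENNReal.ofReal (∏ s ∈ Finset.Ioc 0 t, (1 - v s)))
        ≤ ∑ t ∈ Finset.range N, (ENNReal.ofReal (∏ s ∈ Finset.Ioc 0 t, (1 - u s)) +
            ENNReal.ofReal (∏ s ∈ Finset.Ioc 0 t, (1 - v s))) :=
          Finset.sum_le_sum_of_subset hN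
      _ = ENNReal.ofReal ((∑ t ∈ Finset.range N, ∏ s ∈ Finset.Ioc 0 t, (1 - u s)) +
            ∑ t ∈ Finset.range N, ∏ s ∈ Finset.Ioc 0 t, (1 - v s)) := by
          rw [Finset.sum_add_distrib,
            ← ENNReal.ofReal_sum_of_nonneg (fun t _ => hFFu_nn t),
            ← ENNReal.ofReal_sum_of_nonneg (fun t _ => hFFv_nn t),
            ← ENNReal.ofReal_add (Finset.sum_nonneg (fun t _ => hFFu_nn t))
              (Finset.sum_nonneg (fun t _ => hFFv_nn t))]
      _ ≤ ENNReal.ofReal B := ENNReal.ofReal_le_ofReal (hbound N)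
  -- capture time bounds
  have hTp' : ∀ ω, Tp ω = sInf {τ : ℝ≥0∞ | ∃ t : ℕ, τ = t ∧ 1 ≤ t ∧ X t ω ∈ Cp t} := hTp
  have hTm' : ∀ ω, Tm ω = sInf {τ : ℝ≥0∞ | ∃ t : ℕ, τ = t ∧ 1 ≤ t ∧ X t ω ∈ Cm t} := hTm
  have hIp := capture_time_bound' p μ X hXmeas hXind hXmap Cp Tp hTp'
  have hIm := capture_time_bound' p μ X hXmeas hXind hXmap Cm Tm hTm'
  have hsum_le : ∫⁻ ω, Tp ω ∂μ + ∫⁻ ω, Tm ω ∂μ ≤ ENNReal.ofReal B :=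
    le_trans (add_le_add hIp hIm) htsum
  -- final numeric inequality
  set x := Real.sqrt n with hxdef
  have hs0le : (s0 : ℝ) ≤ x := by
    rw [hxdef]
    have h1 : ((s0:ℝ))^2 ≤ (n : ℝ) := by exact_mod_cast Nat.sqrt_le' n
    have h2 := Real.sqrt_le_sqrt h1
    rwa [Real.sqrt_sq (by positivity)] at h2
  have hs0ub : x < (s0 : ℝ) + 1 := by
    rw [hxdef, Real.sqrt_lt' (by positivity)]
    exact_mod_cast Nat.lt_succ_sqrt' n
  have hx7 : (10^7 : ℝ) ≤ x := by
    rw [hxdef, Real.le_sqrt' (by norm_num)]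
    have := Nat.cast_le (α := ℝ).mpr hn
    push_cast at this ⊢
    nlinarith
  have hnx : (n : ℝ) = x^2 := (Real.sq_sqrt (by positivity)).symm
  have hm_ub : (m : ℝ) ≤ 25 * x / 26 + 1 := by
    have h1 : ((25*s0/26 : ℕ) : ℝ) ≤ (25*(s0:ℝ))/26 := by
      calc ((25*s0/26 : ℕ) : ℝ) ≤ ((25*s0 : ℕ) : ℝ)/((26:ℕ):ℝ) := Nat.cast_div_le
        _ = (25*(s0:ℝ))/26 := by push_cast; ring
    have h2 : (m : ℝ) = ((25*s0/26 : ℕ) : ℝ) + 1 := by rw [hmdef]; push_cast; ring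
    rw [h2]
    have : (25*(s0:ℝ))/26 ≤ 25 * x / 26 := by linarith
    linarith
  have hm_lb : 25 * (x - 1) < 26 * (m : ℝ) := by
    have hdm := Nat.div_add_mod (25*s0) 26
    have hmod : (25*s0) % 26 < 26 := Nat.mod_lt _ (by norm_num)
    have h1 : 25*s0 + 1 ≤ 26*m := by omega
    have h2 : (25*(s0:ℝ) + 1) ≤ 26*(m:ℝ) := by exact_mod_cast Nat.cast_le.mpr h1
    nlinarith
  have hm_pos : (0:ℝ) < (m:ℝ) := by exact_mod_cast hm0
  have hkm : (k:ℝ) * (m:ℝ) ≤ (n:ℝ) + (m:ℝ) := by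
    have h1 : k * m ≤ n + m := by
      have h2 := Nat.div_mul_le_self n m
      calc k * m = (n/m)*m + m := by rw [hkdef]; ring
        _ ≤ n + m := by omega
    exact_mod_cast Nat.cast_le.mpr h1
  -- bounds on e1
  set e1 : ℝ := Real.exp (-1) with he1def
  have he1pos : 0 < e1 := Real.exp_pos _
  have hee : Real.exp 1 * e1 = 1 := by
    rw [he1def, ← Real.exp_add]; norm_num
  have he1ub : e1 < 0.36787944122 := by
    nlinarith [Real.exp_one_gt_d9, hee, he1pos]
  have h1me : (0:ℝ) < 1 - e1 := by nlinarith
  have hc : (1 + e1) / (1 - e1) < 2.1639536 := by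
    rw [div_lt_iff₀ h1me]; nlinarith
  have hcpos : (0:ℝ) < (1 + e1) / (1 - e1) := by positivity
  have hB2 : B / 2 ≤ ((m:ℝ) + 1) * 1.0819768 := by
    rw [hBdef]
    rw [mul_div_assoc]
    have h1 : ((m:ℝ)+1) * ((1 + e1) / (1 - e1)) / 2 ≤ ((m:ℝ)+1) * (2.1639536/2) := by
      rw [mul_div_assoc]
      apply mul_le_mul_of_nonneg_left _ (by positivity)
      linarith
    calc ((m:ℝ)+1) * ((1 + e1) / (1 - e1)) / 2 ≤ ((m:ℝ)+1) * (2.1639536/2) := h1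
      _ = ((m:ℝ) + 1) * 1.0819768 := by norm_num
  have hk2 : (k:ℝ) ≤ x^2/(m:ℝ) + 1 := by
    have h : (k:ℝ) * m / m ≤ (x^2 + m)/m :=
      (div_le_div_iff_of_pos_right hm_pos).mpr (by nlinarith [hkm, hnx])
    rwa [mul_div_cancel_right₀ _ (ne_of_gt hm_pos), add_div,
      div_self (ne_of_gt hm_pos)] at h
  have h25 : (0:ℝ) < 25*(x-1) := by nlinarith
  have hdiv : x^2/(m:ℝ) ≤ 26*x^2/(25*(x-1)) := by
    have hb : (0:ℝ) < 25*(x-1)/26 := by linarith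
    have h1 : 25*(x-1)/26 ≤ (m:ℝ) := by linarith
    calc x^2/(m:ℝ) ≤ x^2/(25*(x-1)/26) := by
          apply div_le_div_of_nonneg_left (by positivity) hb h1
      _ = 26*x^2/(25*(x-1)) := by
          rw [div_div_eq_mul_div]; ring
  have hkey : 26*x^2/(25*(x-1)) < 2.08037*x - 1 - (25*x/26 + 2) * 1.0819768 := by
    rw [div_lt_iff₀ h25]
    have hsq : x^2 ≥ 2*10^7*x - 10^14 := by nlinarith [sq_nonneg (x - 10^7)]
    nlinarith [hsq, hx7]
  have hfinal : (k:ℝ) + B/2 < 2.08037 * x := by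
    have hm1 : (m:ℝ) + 1 ≤ 25*x/26 + 2 := by linarith
    have h2 : ((m:ℝ)+1) * 1.0819768 ≤ (25*x/26 + 2) * 1.0819768 := by nlinarith
    linarith [hk2, hdiv, hB2, hkey]
  -- assemble in ℝ≥0∞
  have hB0 : (0:ℝ) ≤ B := by
    rw [hBdef]
    apply div_nonneg (mul_nonneg (by positivity) (by linarith [he1pos])) (by linarith [h1me])
  have hx0 : (0:ℝ) < 2.08037 * x := by nlinarith
  calc (k : ℝ≥0∞) + (∫⁻ ω, Tp ω ∂μ + ∫⁻ ω, Tm ω ∂μ) / 2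
      ≤ (k : ℝ≥0∞) + ENNReal.ofReal B / 2 := add_le_add_right (ENNReal.div_le_div_right hsum_le 2) _
    _ = ENNReal.ofReal ((k:ℝ) + B/2) := by
        rw [ENNReal.ofReal_add (by positivity) (by positivity), ENNReal.ofReal_natCast]
        congr 1
        rw [eq_comm, ENNReal.ofReal_div_of_pos (show (0:ℝ) < 2 by norm_num),
          ENNReal.ofReal_ofNat]
    _ < ENNReal.ofReal (2.08037 * Real.sqrt n) := by
        rw [ENNReal.ofReal_lt_ofReal_iff hx0]
        exact hfinal
end
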